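/- arXiv:2603.08010 — 4 statements merged into one kernel-verified Lean document; each statement's English description precedes it below -/
import Mathlib

section
/- Every computable injection structure with at least one infinite orbit has a punctual presentation. Precisely: for every injective computable function f : ℕ → ℕ such that the orbit O_f(a) is infinite for some a : ℕ, there exist an injective primitive recursive function g : ℕ → ℕ and a bijection φ : ℕ → ℕ with φ ∘ f = g ∘ φ. -/
/-- The orbit of `a` under `f`. -/
def Orbit (f : ℕ → ℕ) (a : ℕ) : Set ℕ := {b : ℕ | ∃ m n : ℕ, f^[m] a = f^[n] b}

namespace PunctualPf

open Nat.Partrec (Code)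
open Nat.Partrec.Code

/-! ### count / nth toolkit -/

lemma primrec_count {p : ℕ → Prop} [DecidablePred p] (hp : PrimrecPred p) :
    Primrec fun n => Nat.count p n := by
  have h : (fun n => Nat.count p n) =
      fun n => Nat.rec (motive := fun _ => ℕ) 0
        (fun m acc => acc + if p m then 1 else 0) n := by
    funext n
    induction n with
    | zero => simp [Nat.count_zero]
    | succ n ih =>
      have hred : (Nat.rec (motive := fun _ => ℕ) 0
          (fun m acc => acc + if p m then 1 else 0) (n + 1) : ℕ)
          = (Nat.rec (motive := fun _ => ℕ) 0
          (fun m acc => acc + if p m then 1 else 0) n : ℕ) + (if p n then 1 else 0) := rfl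
      rw [Nat.count_succ, ih, hred]
  rw [h]
  apply Primrec.nat_rec₁ 0
  have : Primrec fun q : ℕ × ℕ => q.2 + if p q.1 then 1 else 0 :=
    Primrec.nat_add.comp Primrec.snd
      (Primrec.ite (hp.comp Primrec.fst) (Primrec.const 1) (Primrec.const 0))
  exact this.to₂

lemma nth_le_of_seq {p : ℕ → Prop} (w : ℕ → ℕ) (hm : StrictMono w)
    (hw : ∀ u, p (w u)) : ∀ u, Nat.nth p u ≤ w u := by
  classical
  have hcount : ∀ u, u + 1 ≤ Nat.count p (w u + 1) := by
    intro u
    induction u with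
    | zero =>
      rw [Nat.count_succ]
      simp [hw 0]
    | succ u ih =>
      have h1 : w u + 1 ≤ w (u + 1) := hm (Nat.lt_succ_self u)
      have h2 : Nat.count p (w u + 1) ≤ Nat.count p (w (u + 1)) :=
        Nat.count_monotone p h1
      rw [Nat.count_succ]
      simp only [hw (u + 1), if_true]
      omega
  intro u
  have := Nat.nth_lt_of_lt_count (p := p) (n := w u + 1) (k := u) (by
    have := hcount u; omega)
  omega

lemma nth_unique {p : ℕ → Prop} [DecidablePred p] {N u : ℕ}
    (h1 : p N) (h2 : Nat.count p N = u) : N = Nat.nth p u := by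
  have := Nat.nth_count h1
  rw [h2] at this
  exact this.symm

lemma primrec_nth {p : ℕ → Prop} [DecidablePred p] (hp : PrimrecPred p)
    (hinf : (setOf p).Infinite) {W : ℕ → ℕ} (hW : Primrec W)
    (hb : ∀ u, Nat.nth p u ≤ W u) : Primrec (Nat.nth p) := by
  classical
  have key : ∀ u N, (Nat.rec (motive := fun _ => ℕ) 0
      (fun m acc => acc + if p m ∧ Nat.count p m = u then m else 0) N)
      = if Nat.nth p u < N then Nat.nth p u else 0 := by
    intro u N
    induction N with
    | zero => simp
    | succ N ih =>
      have hred : (Nat.rec (motive := fun _ => ℕ) 0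
          (fun m acc => acc + if p m ∧ Nat.count p m = u then m else 0) (N + 1) : ℕ)
          = (Nat.rec (motive := fun _ => ℕ) 0
          (fun m acc => acc + if p m ∧ Nat.count p m = u then m else 0) N : ℕ)
          + (if p N ∧ Nat.count p N = u then N else 0) := rfl
      rw [hred, ih]
      by_cases hN : N = Nat.nth p u
      · subst hN
        have h1 : p (Nat.nth p u) := Nat.nth_mem_of_infinite hinf u
        have h2 : Nat.count p (Nat.nth p u) = u := Nat.count_nth_of_infinite hinf u
        simp [h1, h2, Nat.lt_irrefl, Nat.lt_succ_self]
      · have hcond : ¬(p N ∧ Nat.count p N = u) := by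
          rintro ⟨h1, h2⟩
          exact hN (nth_unique h1 h2)
        simp only [hcond, if_false, Nat.add_zero]
        have : (Nat.nth p u < N + 1) ↔ (Nat.nth p u < N) := by
          constructor
          · intro h
            rcases Nat.lt_succ_iff_lt_or_eq.1 h with h | h
            · exact h
            · exact absurd h.symm hN
          · omega
        rw [if_congr this rfl rfl]
  have heq : Nat.nth p = fun u => Nat.rec (motive := fun _ => ℕ) 0
      (fun m acc => acc + if p m ∧ Nat.count p m = u then m else 0) (W u + 1) := by
    funext u
    rw [key u (W u + 1)]
    have := hb u
    simp [Nat.lt_succ_of_le this]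
  rw [heq]
  have hstep : Primrec fun x : ℕ × (ℕ × ℕ) =>
      x.2.2 + if p x.2.1 ∧ Nat.count p x.2.1 = x.1 then x.2.1 else 0 := by
    have hc : PrimrecPred fun x : ℕ × (ℕ × ℕ) => p x.2.1 ∧ Nat.count p x.2.1 = x.1 := by
      apply PrimrecPred.and
      · exact hp.comp (Primrec.fst.comp Primrec.snd)
      · exact Primrec.eq.comp ((primrec_count hp).comp (Primrec.fst.comp Primrec.snd))
          Primrec.fst
    exact Primrec.nat_add.comp (Primrec.snd.comp Primrec.snd)
      (Primrec.ite hc (Primrec.fst.comp Primrec.snd) (Primrec.const 0))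
  have := Primrec.nat_rec' (f := fun u => W u + 1) (g := fun _ => (0 : ℕ))
    (h := fun (u : ℕ) (q : ℕ × ℕ) =>
      q.2 + if p q.1 ∧ Nat.count p q.1 = u then q.1 else 0)
    (Primrec.succ.comp hW) (Primrec.const 0) hstep.to₂
  exact this.of_eq (fun u => rfl)


/-! ### bounded forall primrec -/

lemma primrec_ball {α : Type*} [Primcodable α] {k : α → ℕ} {q : α → ℕ → Prop}
    [∀ a j, Decidable (q a j)] (hk : Primrec k) (hq : PrimrecRel q) :
    PrimrecPred fun a => ∀ j < k a, q a j := by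
  classical
  have hrec : ∀ (a : α) (N : ℕ),
      ((Nat.rec true (fun j b => b && decide (q a j)) N : Bool) = true) ↔ ∀ j < N, q a j := by
    intro a N
    induction N with
    | zero => simp
    | succ N ih =>
      have hred : (Nat.rec true (fun j b => b && decide (q a j)) (N + 1) : Bool)
          = ((Nat.rec true (fun j b => b && decide (q a j)) N : Bool) && decide (q a N)) := rfl
      rw [hred]
      simp only [Bool.and_eq_true, ih, decide_eq_true_eq]
      constructor
      · rintro ⟨h1, h2⟩ j hj
        rcases Nat.lt_succ_iff_lt_or_eq.1 hj with h | h
        · exact h1 j h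
        · subst h; exact h2
      · intro h
        exact ⟨fun j hj => h j (Nat.lt_succ_of_lt hj), h N (Nat.lt_succ_self N)⟩
  have hprim : Primrec fun a => (Nat.rec true (fun j b => b && decide (q a j)) (k a) : Bool) := by
    have := Primrec.nat_rec' (f := k) (g := fun _ => true)
      (h := fun (a : α) (p : ℕ × Bool) => p.2 && decide (q a p.1))
      hk (Primrec.const true)
      (Primrec.and.comp (Primrec.snd.comp Primrec.snd)
        (hq.decide.comp Primrec.fst (Primrec.fst.comp Primrec.snd))).to₂
    exact this.of_eq (fun a => rfl)
  refine Primrec.primrecPred (hprim.of_eq (fun a => ?_))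
  by_cases hq' : ∀ j < k a, q a j
  · rw [(hrec a (k a)).2 hq']
    simpa using hq'
  · have h2 : (Nat.rec true (fun j b => b && decide (q a j)) (k a) : Bool) ≠ true :=
      fun h => hq' ((hrec a (k a)).1 h)
    rw [Bool.eq_false_iff.2 h2]
    simp [hq']

/-! ### computation approximation -/

section Approx

variable (c : Code)

/-- Iterate the `evaln`-approximation of `f` for `j` steps starting at `x`. -/
def FIt (s x j : ℕ) : Option ℕ :=
  Nat.rec (motive := fun _ => Option ℕ) (some x)
    (fun _ ih => ih.bind fun y => evaln s c y) j

@[simp] lemma FIt_zero (s x : ℕ) : FIt c s x 0 = some x := rfl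

lemma FIt_succ (s x j : ℕ) :
    FIt c s x (j + 1) = (FIt c s x j).bind fun y => evaln s c y := rfl

lemma primrec_FIt : Primrec fun q : (ℕ × ℕ) × ℕ => FIt c q.1.1 q.1.2 q.2 := by
  have hg : Primrec₂ fun (a : ℕ × ℕ) (p : ℕ × Option ℕ) =>
      p.2.bind fun y => evaln a.1 c y := by
    apply Primrec.option_bind (Primrec.snd.comp Primrec.snd)
    have : Primrec fun q : ((ℕ × ℕ) × (ℕ × Option ℕ)) × ℕ =>
        evaln q.1.1.1 c q.2 := by
      have h1 : Primrec fun q : ((ℕ × ℕ) × (ℕ × Option ℕ)) × ℕ =>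
          ((q.1.1.1, (c : Code)), q.2) :=
        ((Primrec.fst.comp (Primrec.fst.comp Primrec.fst)).pair (Primrec.const c)).pair
          Primrec.snd
      exact (primrec_evaln.comp h1)
    exact this.to₂
  have := Primrec.nat_rec (f := fun a : ℕ × ℕ => (some a.2 : Option ℕ))
    (g := fun (a : ℕ × ℕ) (p : ℕ × Option ℕ) => p.2.bind fun y => evaln a.1 c y)
    (Primrec.option_some.comp Primrec.snd) hg
  exact (this.comp Primrec.fst Primrec.snd).of_eq (fun q => rfl)

variable {f : ℕ → ℕ}
variable (hS : ∀ {s n y : ℕ}, evaln s c n = some y → y = f n)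

include hS in
lemma FIt_sound : ∀ {s x j y : ℕ}, FIt c s x j = some y → y = f^[j] x := by
  intro s x j
  induction j with
  | zero =>
    intro y h
    rw [Function.iterate_zero_apply]
    exact (Option.some.inj h).symm
  | succ j ih =>
    intro y h
    rw [FIt_succ] at h
    rcases Option.bind_eq_some_iff.1 h with ⟨z, hz, hy⟩
    have hz' := ih hz
    subst hz'
    rw [Function.iterate_succ_apply']
    exact hS hy

lemma FIt_mono {s s' : ℕ} (hss : s ≤ s') : ∀ {x j y : ℕ},
    FIt c s x j = some y → FIt c s' x j = some y := by
  intro x j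
  induction j with
  | zero => intro y h; simpa using h
  | succ j ih =>
    intro y h
    rw [FIt_succ] at h ⊢
    rcases Option.bind_eq_some_iff.1 h with ⟨z, hz, hy⟩
    rw [ih hz]
    exact evaln_mono hss hy

variable (hC : ∀ n : ℕ, ∃ s, evaln s c n = some (f n))

include hC in
lemma FIt_complete (x : ℕ) : ∀ j, ∃ s, FIt c s x j = some (f^[j] x) := by
  intro j
  induction j with
  | zero => exact ⟨0, rfl⟩
  | succ j ih =>
    rcases ih with ⟨s1, hs1⟩
    rcases hC (f^[j] x) with ⟨s2, hs2⟩
    refine ⟨max s1 s2, ?_⟩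
    rw [FIt_succ, FIt_mono c (le_max_left s1 s2) hs1]
    simp only [Option.bind_some]
    rw [Function.iterate_succ_apply']
    exact evaln_mono (le_max_right s1 s2) hs2

lemma FIt_isSome_step {s x k : ℕ} (h : (FIt c s x (k + 1)).isSome) :
    (FIt c s x k).isSome := by
  rw [FIt_succ] at h
  cases hk : FIt c s x k with
  | none => rw [hk] at h; simp at h
  | some z => simp

lemma FIt_isSome_of_le {s x : ℕ} : ∀ {k : ℕ}, (FIt c s x k).isSome →
    ∀ j ≤ k, (FIt c s x j).isSome := by
  intro k
  induction k with
  | zero =>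
    intro h j hj
    rw [Nat.le_zero.1 hj]
    exact h
  | succ k ih =>
    intro h j hj
    rcases Nat.le_succ_iff_eq_or_le.1 hj with h' | h'
    · rw [h']; exact h
    · exact ih (FIt_isSome_step c h) j h'

end Approx



/-! ### cycle detection -/

/-- Canonical representative of a cycle: `x` is the least element, `k` the exact period. -/
def IsCycleRep (f : ℕ → ℕ) (x k : ℕ) : Prop :=
  0 < k ∧ f^[k] x = x ∧ (∀ j, 0 < j → j < k → f^[j] x ≠ x) ∧ ∀ j < k, x ≤ f^[j] x

section Chk

variable (c : Code)

def ChkP (s x k : ℕ) : Prop :=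
  0 < k ∧ FIt c s x k = some x ∧
    ∀ j < k, ((j = 0 ∨ FIt c s x j ≠ some x) ∧ x ≤ (FIt c s x j).getD 0)

instance (s x k : ℕ) : Decidable (ChkP c s x k) := by
  unfold ChkP; infer_instance

lemma primrec_ChkP : PrimrecPred fun q : (ℕ × ℕ) × ℕ => ChkP c q.1.1 q.1.2 q.2 := by
  have h1 : PrimrecPred fun q : (ℕ × ℕ) × ℕ => 0 < q.2 :=
    Primrec.nat_lt.comp (Primrec.const 0) Primrec.snd
  have h2 : PrimrecPred fun q : (ℕ × ℕ) × ℕ => FIt c q.1.1 q.1.2 q.2 = some q.1.2 :=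
    Primrec.eq.comp (primrec_FIt c) (Primrec.option_some.comp (Primrec.snd.comp Primrec.fst))
  have hF : Primrec fun p : ((ℕ × ℕ) × ℕ) × ℕ => FIt c p.1.1.1 p.1.1.2 p.2 :=
    (primrec_FIt c).comp (((Primrec.fst.comp (Primrec.fst.comp Primrec.fst)).pair
      (Primrec.snd.comp (Primrec.fst.comp Primrec.fst))).pair Primrec.snd)
  have h3 : PrimrecPred fun q : (ℕ × ℕ) × ℕ =>
      ∀ j < q.2, ((j = 0 ∨ FIt c q.1.1 q.1.2 j ≠ some q.1.2) ∧
        q.1.2 ≤ (FIt c q.1.1 q.1.2 j).getD 0) := by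
    apply primrec_ball Primrec.snd
    have hA : PrimrecPred fun p : ((ℕ × ℕ) × ℕ) × ℕ =>
        (p.2 = 0 ∨ FIt c p.1.1.1 p.1.1.2 p.2 ≠ some p.1.1.2) ∧
          p.1.1.2 ≤ (FIt c p.1.1.1 p.1.1.2 p.2).getD 0 := by
      apply PrimrecPred.and
      · apply PrimrecPred.or
        · exact Primrec.eq.comp Primrec.snd (Primrec.const 0)
        · apply PrimrecPred.not
          exact Primrec.eq.comp hF
            (Primrec.option_some.comp (Primrec.snd.comp (Primrec.fst.comp Primrec.fst)))
      · exact Primrec.nat_le.comp (Primrec.snd.comp (Primrec.fst.comp Primrec.fst))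
          (Primrec.option_getD.comp hF (Primrec.const 0))
    exact hA
  have := (h1.and (h2.and h3))
  refine Primrec.primrecPred (Primrec.of_eq this.decide (fun q => ?_))
  apply decide_eq_decide.2
  constructor
  · rintro ⟨a, b, d⟩; exact ⟨a, b, d⟩
  · rintro ⟨a, b, d⟩; exact ⟨a, b, d⟩

variable {f : ℕ → ℕ}
variable (hS : ∀ {s n y : ℕ}, evaln s c n = some y → y = f n)
variable (hC : ∀ n : ℕ, ∃ s, evaln s c n = some (f n))

include hS in
lemma FIt_eq_of_isSome {s x j : ℕ} (h : (FIt c s x j).isSome) :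
    FIt c s x j = some (f^[j] x) := by
  rcases Option.isSome_iff_exists.1 h with ⟨y, hy⟩
  rw [hy, FIt_sound c hS hy]

include hS in
lemma ChkP_sound {s x k : ℕ} (h : ChkP c s x k) : IsCycleRep f x k := by
  obtain ⟨h1, h2, h3⟩ := h
  have hk : f^[k] x = x := (FIt_sound c hS h2).symm
  have hksome : (FIt c s x k).isSome := by rw [h2]; rfl
  refine ⟨h1, hk, ?_, ?_⟩
  · intro j hj0 hjk heq
    have hsome : (FIt c s x j).isSome := FIt_isSome_of_le c hksome j hjk.le
    have hFj : FIt c s x j = some (f^[j] x) := FIt_eq_of_isSome c hS hsome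
    rcases (h3 j hjk).1 with h | h
    · omega
    · exact h (by rw [hFj, heq])
  · intro j hjk
    have hsome : (FIt c s x j).isSome := FIt_isSome_of_le c hksome j hjk.le
    have hFj : FIt c s x j = some (f^[j] x) := FIt_eq_of_isSome c hS hsome
    have := (h3 j hjk).2
    rwa [hFj, Option.getD_some] at this

include hS hC in
lemma ChkP_complete {x k : ℕ} (h : IsCycleRep f x k) : ∃ s, ChkP c s x k := by
  obtain ⟨hk0, hk, hmin, hminelt⟩ := h
  obtain ⟨s, hs⟩ := FIt_complete c hC x k
  have hksome : (FIt c s x k).isSome := by rw [hs]; rfl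
  refine ⟨s, hk0, by rw [hs, hk], ?_⟩
  intro j hjk
  have hsome : (FIt c s x j).isSome := FIt_isSome_of_le c hksome j hjk.le
  have hFj : FIt c s x j = some (f^[j] x) := FIt_eq_of_isSome c hS hsome
  constructor
  · by_cases hj0 : j = 0
    · left; exact hj0
    · right
      intro hEq
      rw [hFj] at hEq
      exact hmin j (Nat.pos_of_ne_zero hj0) hjk (Option.some.inj hEq)
  · rw [hFj, Option.getD_some]
    exact hminelt j hjk

lemma ChkP_mono {s s' x k : ℕ} (hss : s ≤ s') (h : ChkP c s x k) : ChkP c s' x k := by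
  obtain ⟨h1, h2, h3⟩ := h
  have hksome : (FIt c s x k).isSome := by rw [h2]; rfl
  refine ⟨h1, FIt_mono c hss h2, ?_⟩
  intro j hjk
  have hsome : (FIt c s x j).isSome := FIt_isSome_of_le c hksome j hjk.le
  rcases Option.isSome_iff_exists.1 hsome with ⟨y, hy⟩
  have hy' : FIt c s' x j = some y := FIt_mono c hss hy
  have := h3 j hjk
  rw [hy] at this
  rw [hy']
  exact this

end Chk


/-! ### valid block codes -/

def bcode (x k s i : ℕ) : ℕ := Nat.pair x (Nat.pair k (Nat.pair s i))
def vx (m : ℕ) : ℕ := m.unpair.1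
def vk (m : ℕ) : ℕ := m.unpair.2.unpair.1
def vs (m : ℕ) : ℕ := m.unpair.2.unpair.2.unpair.1
def vi (m : ℕ) : ℕ := m.unpair.2.unpair.2.unpair.2

@[simp] lemma vx_bcode (x k s i : ℕ) : vx (bcode x k s i) = x := by
  simp [vx, bcode, Nat.unpair_pair]
@[simp] lemma vk_bcode (x k s i : ℕ) : vk (bcode x k s i) = k := by
  simp [vk, bcode, Nat.unpair_pair]
@[simp] lemma vs_bcode (x k s i : ℕ) : vs (bcode x k s i) = s := by
  simp [vs, bcode, Nat.unpair_pair]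
@[simp] lemma vi_bcode (x k s i : ℕ) : vi (bcode x k s i) = i := by
  simp [vi, bcode, Nat.unpair_pair]

lemma bcode_ext (m : ℕ) : bcode (vx m) (vk m) (vs m) (vi m) = m := by
  simp [bcode, vx, vk, vs, vi, Nat.pair_unpair]

section Valid

variable (c : Code)

def ValidP (m : ℕ) : Prop :=
  ChkP c (vs m) (vx m) (vk m) ∧ vi m < vk m ∧
    (vs m = 0 ∨ ¬ ChkP c (vs m - 1) (vx m) (vk m))

instance (m : ℕ) : Decidable (ValidP c m) := by unfold ValidP; infer_instance

lemma primrec_vx : Primrec vx := Primrec.fst.comp Primrec.unpair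
lemma primrec_vk : Primrec vk :=
  Primrec.fst.comp (Primrec.unpair.comp (Primrec.snd.comp Primrec.unpair))
lemma primrec_vs : Primrec vs :=
  Primrec.fst.comp (Primrec.unpair.comp (Primrec.snd.comp
    (Primrec.unpair.comp (Primrec.snd.comp Primrec.unpair))))
lemma primrec_vi : Primrec vi :=
  Primrec.snd.comp (Primrec.unpair.comp (Primrec.snd.comp
    (Primrec.unpair.comp (Primrec.snd.comp Primrec.unpair))))

lemma primrec_ChkP' {u v t : ℕ → ℕ} (hu : Primrec u) (hv : Primrec v) (ht : Primrec t) :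
    PrimrecPred fun m => ChkP c (u m) (v m) (t m) :=
  (primrec_ChkP c).comp ((hu.pair hv).pair ht)

lemma primrec_ValidP : PrimrecPred (ValidP c) := by
  unfold ValidP
  apply PrimrecPred.and
  · exact primrec_ChkP' c primrec_vs primrec_vx primrec_vk
  apply PrimrecPred.and
  · exact Primrec.nat_lt.comp primrec_vi primrec_vk
  apply PrimrecPred.or
  · exact Primrec.eq.comp primrec_vs (Primrec.const 0)
  · exact PrimrecPred.not
      (primrec_ChkP' c (Primrec.nat_sub.comp primrec_vs (Primrec.const 1)) primrec_vx primrec_vk)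

variable {f : ℕ → ℕ}
variable (hS : ∀ {s n y : ℕ}, evaln s c n = some y → y = f n)
variable (hC : ∀ n : ℕ, ∃ s, evaln s c n = some (f n))

/-- The first stage at which the cycle `(x, k)` is confirmed. -/
noncomputable def sFor (x k : ℕ) : ℕ := sInf {s | ChkP c s x k}

include hS hC in
lemma valid_bcode {x k i : ℕ} (hrep : IsCycleRep f x k) (hik : i < k) :
    ValidP c (bcode x k (sFor c x k) i) := by
  have hne : {s | ChkP c s x k}.Nonempty := ChkP_complete c hS hC hrep
  have hmem : ChkP c (sFor c x k) x k := Nat.sInf_mem hne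
  refine ⟨by simpa using hmem, by simpa using hik, ?_⟩
  simp only [vs_bcode, vx_bcode, vk_bcode]
  rcases Nat.eq_zero_or_pos (sFor c x k) with h | h
  · left; exact h
  · right
    intro hbad
    have : sFor c x k - 1 ∈ {s | ChkP c s x k} := hbad
    have h2 : sFor c x k ≤ sFor c x k - 1 := Nat.sInf_le this
    omega

include hS in
lemma of_valid {m : ℕ} (h : ValidP c m) :
    IsCycleRep f (vx m) (vk m) ∧ vi m < vk m ∧ vs m = sFor c (vx m) (vk m) := by
  obtain ⟨h1, h2, h3⟩ := h
  refine ⟨ChkP_sound c hS h1, h2, ?_⟩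
  have hne : {s | ChkP c s (vx m) (vk m)}.Nonempty := ⟨vs m, h1⟩
  have hle : sFor c (vx m) (vk m) ≤ vs m := Nat.sInf_le h1
  rcases Nat.lt_or_ge (sFor c (vx m) (vk m)) (vs m) with hlt | hge
  · exfalso
    have hmem : ChkP c (sFor c (vx m) (vk m)) (vx m) (vk m) := Nat.sInf_mem hne
    have : ChkP c (vs m - 1) (vx m) (vk m) := ChkP_mono c (by omega) hmem
    rcases h3 with h3 | h3
    · omega
    · exact h3 this
  · omega

end Valid

/-! ### the punctual structure -/

def zsuccC (i : ℕ) : ℕ := if i = 1 then 0 else if i % 2 = 0 then i + 2 else i - 2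

lemma primrec_zsuccC : Primrec zsuccC := by
  unfold zsuccC
  apply Primrec.ite (Primrec.eq.comp Primrec.id (Primrec.const 1)) (Primrec.const 0)
  apply Primrec.ite (Primrec.eq.comp (Primrec.nat_mod.comp Primrec.id (Primrec.const 2))
    (Primrec.const 0))
  · exact Primrec.nat_add.comp Primrec.id (Primrec.const 2)
  · exact Primrec.nat_sub.comp Primrec.id (Primrec.const 2)

def optLtP (u : ℕ) (w : Option ℕ) : Prop := ∀ n ∈ w, u < n

instance (u : ℕ) (w : Option ℕ) : Decidable (optLtP u w) := by
  unfold optLtP; infer_instance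

@[simp] lemma optLtP_none (u : ℕ) : optLtP u none ↔ True := by simp [optLtP]
@[simp] lemma optLtP_some (u n : ℕ) : optLtP u (some n) ↔ u < n := by simp [optLtP]

lemma primrec_optLtP (w : Option ℕ) : PrimrecPred fun u => optLtP u w := by
  cases w with
  | none =>
    refine Primrec.primrecPred (Primrec.of_eq (Primrec.const true : Primrec fun _ : ℕ => true) (fun u => ?_))
    simp [optLtP]
  | some n =>
    refine Primrec.primrecPred (Primrec.of_eq (Primrec.nat_lt.comp Primrec.id (Primrec.const n)).decide (fun u => ?_))
    apply decide_eq_decide.2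
    simp [optLtP]

section Struct

variable (c : Code) (w z : Option ℕ) (bw : Bool)

def PadP (m : ℕ) : Prop := ¬ ValidP c m

instance (m : ℕ) : Decidable (PadP c m) := by unfold PadP; infer_instance

def LeftCol (j : ℕ) : Prop :=
  (j % 3 = 0 ∧ ¬ optLtP (j / 3) w) ∨ (j % 3 = 1 ∧ ¬ optLtP (j / 3) z) ∨
    (j % 3 = 2 ∧ ¬ (bw = true ∧ j = 2))

instance (j : ℕ) : Decidable (LeftCol w z bw j) := by unfold LeftCol; infer_instance

def LeftP (cc : ℕ) : Prop := LeftCol w z bw cc.unpair.1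

instance (cc : ℕ) : Decidable (LeftP w z bw cc) := by unfold LeftP; infer_instance

lemma primrec_PadP : PrimrecPred (PadP c) := (primrec_ValidP c).not

lemma primrec_LeftP : PrimrecPred (LeftP w z bw) := by
  unfold LeftP LeftCol
  have hj : Primrec fun cc : ℕ => cc.unpair.1 := Primrec.fst.comp Primrec.unpair
  apply PrimrecPred.or
  · apply PrimrecPred.and
    · exact Primrec.eq.comp (Primrec.nat_mod.comp hj (Primrec.const 3)) (Primrec.const 0)
    · exact PrimrecPred.not ((primrec_optLtP w).comp (Primrec.nat_div.comp hj (Primrec.const 3)))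
  apply PrimrecPred.or
  · apply PrimrecPred.and
    · exact Primrec.eq.comp (Primrec.nat_mod.comp hj (Primrec.const 3)) (Primrec.const 1)
    · exact PrimrecPred.not ((primrec_optLtP z).comp (Primrec.nat_div.comp hj (Primrec.const 3)))
  · apply PrimrecPred.and
    · exact Primrec.eq.comp (Primrec.nat_mod.comp hj (Primrec.const 3)) (Primrec.const 2)
    · apply PrimrecPred.not
      apply PrimrecPred.and
      · exact Primrec.eq.comp (Primrec.const bw) (Primrec.const true)
      · exact Primrec.eq.comp hj (Primrec.const 2)

lemma PadP_wit (u : ℕ) : PadP c (bcode 0 0 u 0) := by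
  intro hv
  have := (hv.1).1
  simp at this

lemma PadP_wit_mono : StrictMono fun u => bcode 0 0 u 0 := by
  intro a b hab
  unfold bcode
  exact Nat.pair_lt_pair_right _ (Nat.pair_lt_pair_right _ (Nat.pair_lt_pair_left _ hab))

lemma PadP_infinite : {m | PadP c m}.Infinite := by
  apply Set.infinite_of_injective_forall_mem (f := fun u => bcode 0 0 u 0)
    (PadP_wit_mono).injective
  exact fun u => PadP_wit c u

lemma PadP_nth_le (u : ℕ) : Nat.nth (PadP c) u ≤ bcode 0 0 u 0 :=
  nth_le_of_seq _ (PadP_wit_mono) (PadP_wit c) u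

lemma LeftP_wit (u : ℕ) : LeftP w z bw (Nat.pair 5 u) := by
  unfold LeftP LeftCol
  rw [Nat.unpair_pair]
  right; right
  constructor
  · norm_num
  · rintro ⟨_, h⟩
    exact absurd h (by norm_num)

lemma LeftP_wit_mono : StrictMono fun u => Nat.pair 5 u := fun a b hab =>
  Nat.pair_lt_pair_right _ hab

lemma LeftP_infinite : {cc | LeftP w z bw cc}.Infinite := by
  apply Set.infinite_of_injective_forall_mem (f := fun u => Nat.pair 5 u)
    (LeftP_wit_mono).injective
  exact fun u => LeftP_wit w z bw u

lemma LeftP_nth_le (u : ℕ) : Nat.nth (LeftP w z bw) u ≤ Nat.pair 5 u :=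
  nth_le_of_seq _ (LeftP_wit_mono) (LeftP_wit w z bw) u

/-- The punctual injection. -/
noncomputable def gFun (n : ℕ) : ℕ :=
  if n % 2 = 0 then
    (let m := n / 2
    if ValidP c m then
      2 * bcode (vx m) (vk m) (vs m) (if vi m + 1 < vk m then vi m + 1 else 0)
    else
      2 * Nat.nth (LeftP w z bw) (Nat.count (PadP c) m) + 1)
  else
    (let cc := n / 2
    let j := cc.unpair.1
    let i := cc.unpair.2
    if j % 3 = 0 ∧ optLtP (j / 3) w then 2 * Nat.pair j (i + 1) + 1
    else if j % 3 = 1 ∧ optLtP (j / 3) z then 2 * Nat.pair j (zsuccC i) + 1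
    else if bw = true ∧ j = 2 then
      (if i = 0 then 2 * Nat.nth (PadP c) 0 else 2 * Nat.pair 2 (i - 1) + 1)
    else 2 * Nat.nth (PadP c) (Nat.count (LeftP w z bw) cc + 1))

lemma primrec_gFun : Primrec (gFun c w z bw) := by
  have hhalf : Primrec fun n : ℕ => n / 2 := Primrec.nat_div.comp Primrec.id (Primrec.const 2)
  have hnthL : Primrec (Nat.nth (LeftP w z bw)) :=
    primrec_nth (primrec_LeftP w z bw) (LeftP_infinite w z bw)
      (Primrec₂.natPair.comp (Primrec.const 5) Primrec.id) (LeftP_nth_le w z bw)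
  have hnthP : Primrec (Nat.nth (PadP c)) :=
    primrec_nth (primrec_PadP c) (PadP_infinite c)
      ((Primrec₂.natPair.comp (Primrec.const 0) (Primrec₂.natPair.comp (Primrec.const 0)
        (Primrec₂.natPair.comp Primrec.id (Primrec.const 0)))))
      (fun u => PadP_nth_le c u)
  have hcntP : Primrec fun m => Nat.count (PadP c) m := primrec_count (primrec_PadP c)
  have hcntL : Primrec fun cc => Nat.count (LeftP w z bw) cc :=
    primrec_count (primrec_LeftP w z bw)
  have hj : Primrec fun cc : ℕ => cc.unpair.1 := Primrec.fst.comp Primrec.unpair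
  have hi : Primrec fun cc : ℕ => cc.unpair.2 := Primrec.snd.comp Primrec.unpair
  unfold gFun
  apply Primrec.ite
    (Primrec.eq.comp (Primrec.nat_mod.comp Primrec.id (Primrec.const 2)) (Primrec.const 0))
  · apply Primrec.ite ((primrec_ValidP c).comp hhalf)
    · apply Primrec.nat_mul.comp (Primrec.const 2)
      have hb : Primrec fun m : ℕ =>
          bcode (vx m) (vk m) (vs m) (if vi m + 1 < vk m then vi m + 1 else 0) := by
        unfold bcode
        apply Primrec₂.natPair.comp primrec_vx
        apply Primrec₂.natPair.comp primrec_vk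
        apply Primrec₂.natPair.comp primrec_vs
        apply Primrec.ite
          (Primrec.nat_lt.comp (Primrec.succ.comp primrec_vi) primrec_vk)
          (Primrec.succ.comp primrec_vi) (Primrec.const 0)
      exact hb.comp hhalf
    · exact Primrec.succ.comp (Primrec.nat_mul.comp (Primrec.const 2)
        ((hnthL.comp (hcntP.comp hhalf))))
  · have hcase1 : PrimrecPred fun n : ℕ =>
        (n / 2).unpair.1 % 3 = 0 ∧ optLtP ((n / 2).unpair.1 / 3) w := by
      apply PrimrecPred.and
      · exact Primrec.eq.comp (Primrec.nat_mod.comp (hj.comp hhalf) (Primrec.const 3))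
          (Primrec.const 0)
      · exact (primrec_optLtP w).comp (Primrec.nat_div.comp (hj.comp hhalf) (Primrec.const 3))
    have hcase2 : PrimrecPred fun n : ℕ =>
        (n / 2).unpair.1 % 3 = 1 ∧ optLtP ((n / 2).unpair.1 / 3) z := by
      apply PrimrecPred.and
      · exact Primrec.eq.comp (Primrec.nat_mod.comp (hj.comp hhalf) (Primrec.const 3))
          (Primrec.const 1)
      · exact (primrec_optLtP z).comp (Primrec.nat_div.comp (hj.comp hhalf) (Primrec.const 3))
    have hcase3 : PrimrecPred fun n : ℕ => bw = true ∧ (n / 2).unpair.1 = 2 := by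
      apply PrimrecPred.and
      · exact Primrec.eq.comp (Primrec.const bw) (Primrec.const true)
      · exact Primrec.eq.comp (hj.comp hhalf) (Primrec.const 2)
    apply Primrec.ite hcase1
    · exact Primrec.succ.comp (Primrec.nat_mul.comp (Primrec.const 2)
        (Primrec₂.natPair.comp (hj.comp hhalf) (Primrec.succ.comp (hi.comp hhalf))))
    apply Primrec.ite hcase2
    · exact Primrec.succ.comp (Primrec.nat_mul.comp (Primrec.const 2)
        (Primrec₂.natPair.comp (hj.comp hhalf) (primrec_zsuccC.comp (hi.comp hhalf))))
    apply Primrec.ite hcase3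
    · apply Primrec.ite (Primrec.eq.comp (hi.comp hhalf) (Primrec.const 0))
      · exact Primrec.const (2 * Nat.nth (PadP c) 0)
      · exact Primrec.succ.comp (Primrec.nat_mul.comp (Primrec.const 2)
          (Primrec₂.natPair.comp (Primrec.const 2)
            (Primrec.nat_sub.comp (hi.comp hhalf) (Primrec.const 1))))
    · exact Primrec.nat_mul.comp (Primrec.const 2)
        (hnthP.comp (Primrec.succ.comp (hcntL.comp hhalf)))

end Struct


/-! ### orbit theory -/

section OrbitTheory

variable {f : ℕ → ℕ}

/-- `x` lies on a cycle. -/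
def Cyc (f : ℕ → ℕ) (x : ℕ) : Prop := ∃ k, 0 < k ∧ f^[k] x = x

/-- same orbit relation -/
def sameOrb (f : ℕ → ℕ) (x y : ℕ) : Prop := ∃ m n, f^[m] x = f^[n] y

lemma sameOrb_refl (x : ℕ) : sameOrb f x x := ⟨0, 0, rfl⟩

lemma sameOrb_symm {x y : ℕ} (h : sameOrb f x y) : sameOrb f y x := by
  rcases h with ⟨m, n, h⟩; exact ⟨n, m, h.symm⟩

lemma sameOrb_trans {x y zz : ℕ} (h1 : sameOrb f x y) (h2 : sameOrb f y zz) :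
    sameOrb f x zz := by
  rcases h1 with ⟨m, n, h1⟩
  rcases h2 with ⟨p, q, h2⟩
  refine ⟨p + m, n + q, ?_⟩
  rw [Function.iterate_add_apply, h1, ← Function.iterate_add_apply, Nat.add_comm p n,
    Function.iterate_add_apply, h2, ← Function.iterate_add_apply]

lemma sameOrb_iter (i : ℕ) (x : ℕ) : sameOrb f x (f^[i] x) := ⟨i, 0, rfl⟩

lemma orbit_eq_sameOrb (a : ℕ) : Orbit f a = {b | sameOrb f a b} := rfl

variable (hinj : Function.Injective f)

include hinj in
lemma cyc_iter_iff (i : ℕ) (x : ℕ) : Cyc f (f^[i] x) ↔ Cyc f x := by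
  constructor
  · rintro ⟨k, hk0, hk⟩
    refine ⟨k, hk0, hinj.iterate i ?_⟩
    rw [← Function.iterate_add_apply, Nat.add_comm, Function.iterate_add_apply] at hk
    rw [hk]
  · rintro ⟨k, hk0, hk⟩
    refine ⟨k, hk0, ?_⟩
    rw [← Function.iterate_add_apply, Nat.add_comm, Function.iterate_add_apply, hk]

include hinj in
lemma cyc_sameOrb {x y : ℕ} (h : sameOrb f x y) : Cyc f x ↔ Cyc f y := by
  rcases h with ⟨m, n, h⟩
  rw [← cyc_iter_iff hinj m x, h, cyc_iter_iff hinj n y]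

include hinj in
lemma noncyc_iter_inj {x : ℕ} (hx : ¬ Cyc f x) {i j : ℕ} (h : f^[i] x = f^[j] x) :
    i = j := by
  rcases Nat.lt_trichotomy i j with hij | hij | hij
  · exfalso
    apply hx
    refine ⟨j - i, by omega, ?_⟩
    have : f^[i] (f^[j-i] x) = f^[i] x := by
      rw [← Function.iterate_add_apply]
      have e : i + (j - i) = j := by omega
      rw [e]
      exact h.symm
    exact hinj.iterate i this
  · exact hij
  · exfalso
    apply hx
    refine ⟨i - j, by omega, ?_⟩
    have : f^[j] (f^[i-j] x) = f^[j] x := by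
      rw [← Function.iterate_add_apply]
      have e : j + (i - j) = i := by omega
      rw [e]
      exact h
    exact hinj.iterate j this

include hinj in
lemma orbit_of_cyc {x : ℕ} (hx : Cyc f x) {y : ℕ} (h : sameOrb f x y) :
    ∃ i, f^[i] x = y := by
  rcases hx with ⟨k, hk0, hk⟩
  rcases h with ⟨m, n, hmn⟩
  have hper : ∀ t, f^[t * k] x = x := by
    intro t
    rw [Nat.mul_comm, Function.iterate_mul]
    exact Function.iterate_fixed hk t
  have key : f^[n] (f^[m + n * k - n] x) = f^[n] y := by
    rw [← Function.iterate_add_apply]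
    have he : n + (m + n * k - n) = m + n * k := by
      have : n ≤ n * k := Nat.le_mul_of_pos_right n hk0
      omega
    rw [he, Function.iterate_add_apply, hper, hmn]
  exact ⟨m + n * k - n, hinj.iterate n key⟩

include hinj in
lemma orbit_finite_of_cyc {a : ℕ} (ha : Cyc f a) : (Orbit f a).Finite := by
  rcases ha with ⟨k, hk0, hk⟩
  apply Set.Finite.subset (Set.finite_range (fun i : Fin k => f^[(i : ℕ)] a))
  intro b hb
  rcases orbit_of_cyc hinj ⟨k, hk0, hk⟩ hb with ⟨i, hi⟩
  have hper : f^[i] a = f^[i % k] a := by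
    conv_lhs => rw [← Nat.mod_add_div i k, Function.iterate_add_apply]
    congr 1
    rw [Function.iterate_mul]
    exact (Function.iterate_fixed hk (i / k))
  exact ⟨⟨i % k, Nat.mod_lt _ hk0⟩, by rw [← hi, hper]⟩

include hinj in
lemma noncyc_of_orbit_infinite {a : ℕ} (ha : (Orbit f a).Infinite) : ¬ Cyc f a :=
  fun hc => ha (orbit_finite_of_cyc hinj hc)

/-- least element of the orbit -/
noncomputable def minOrb (f : ℕ → ℕ) (x : ℕ) : ℕ := sInf {y | sameOrb f x y}

lemma minOrb_sameOrb (x : ℕ) : sameOrb f x (minOrb f x) :=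
  Nat.sInf_mem (⟨x, sameOrb_refl x⟩ : {y | sameOrb f x y}.Nonempty)

lemma minOrb_le {x y : ℕ} (h : sameOrb f x y) : minOrb f x ≤ y := Nat.sInf_le h

lemma minOrb_congr {x y : ℕ} (h : sameOrb f x y) : minOrb f x = minOrb f y := by
  unfold minOrb
  congr 1
  ext zz
  exact ⟨fun hz => sameOrb_trans (sameOrb_symm h) hz, fun hz => sameOrb_trans h hz⟩

lemma minOrb_idem (x : ℕ) : minOrb f (minOrb f x) = minOrb f x :=
  (minOrb_congr (minOrb_sameOrb x)).symm

lemma minOrb_apply (x : ℕ) : minOrb f (f x) = minOrb f x :=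
  (minOrb_congr (sameOrb_iter 1 x)).symm

end OrbitTheory


/-! ### cycles: canonical representatives -/

section OrbitTheory2

variable {f : ℕ → ℕ}

lemma iterate_mod {x k : ℕ} (hk0 : 0 < k) (hk : f^[k] x = x) (i : ℕ) :
    f^[i] x = f^[i % k] x := by
  conv_lhs => rw [← Nat.mod_add_div i k, Function.iterate_add_apply]
  congr 1
  rw [Function.iterate_mul]
  exact Function.iterate_fixed hk (i / k)

lemma rep_le_iter {x k : ℕ} (h : IsCycleRep f x k) (i : ℕ) : x ≤ f^[i] x := by
  rw [iterate_mod h.1 h.2.1 i]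
  exact h.2.2.2 _ (Nat.mod_lt _ h.1)

/-- least period -/
noncomputable def pLen (f : ℕ → ℕ) (x : ℕ) : ℕ := sInf {k | 0 < k ∧ f^[k] x = x}

variable (hinj : Function.Injective f)

include hinj in
lemma crep_is_rep {x : ℕ} (hc : Cyc f x) :
    IsCycleRep f (minOrb f x) (pLen f (minOrb f x)) ∧
      ∃ i < pLen f (minOrb f x), f^[i] (minOrb f x) = x := by
  set m := minOrb f x with hm
  have hcm : Cyc f m := (cyc_sameOrb hinj (minOrb_sameOrb x)).1 hc
  have hSne : {k | 0 < k ∧ f^[k] m = m}.Nonempty := hcm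
  have hk : 0 < pLen f m ∧ f^[pLen f m] m = m := Nat.sInf_mem hSne
  have hrep : IsCycleRep f m (pLen f m) := by
    refine ⟨hk.1, hk.2, ?_, ?_⟩
    · intro j hj0 hjk hbad
      have : pLen f m ≤ j := Nat.sInf_le ⟨hj0, hbad⟩
      omega
    · intro j _
      have h1 : minOrb f m ≤ f^[j] m := minOrb_le (sameOrb_iter j m)
      rwa [hm, minOrb_idem] at h1
  refine ⟨hrep, ?_⟩
  rcases orbit_of_cyc hinj hcm (sameOrb_symm (minOrb_sameOrb x)) with ⟨i, hi⟩
  refine ⟨i % pLen f m, Nat.mod_lt _ hk.1, ?_⟩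
  rw [← iterate_mod hk.1 hk.2 i]
  exact hi

include hinj in
lemma rep_min {x k : ℕ} (h : IsCycleRep f x k) : minOrb f x = x := by
  have hcx : Cyc f x := ⟨k, h.1, h.2.1⟩
  have h1 : minOrb f x ≤ x := minOrb_le (sameOrb_refl x)
  rcases orbit_of_cyc hinj hcx (minOrb_sameOrb x) with ⟨i, hi⟩
  have h2 : x ≤ minOrb f x := by
    rw [← hi]
    exact rep_le_iter h i
  omega

include hinj in
lemma rep_unique {x k x' k' : ℕ} (h : IsCycleRep f x k) (h' : IsCycleRep f x' k')
    (hso : sameOrb f x x') : x = x' ∧ k = k' := by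
  have hx : x = x' := by
    have := rep_min hinj h
    have := rep_min hinj h'
    have := minOrb_congr hso
    omega
  subst hx
  constructor
  · rfl
  · by_contra hkk
    rcases Nat.lt_or_ge k k' with hlt | hge
    · exact h'.2.2.1 k h.1 hlt h.2.1
    · exact h.2.2.1 k' h'.1 (by omega) h'.2.1

include hinj in
lemma rep_iterate {x k : ℕ} (h : IsCycleRep f x k) (i : ℕ) :
    ∃ j < k, f^[j] x = f^[i] x := ⟨i % k, Nat.mod_lt _ h.1, (iterate_mod h.1 h.2.1 i).symm⟩

/-! ### chains -/

/-- orbit is a ℤ-chain (no base element) -/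
def Zty (f : ℕ → ℕ) (m : ℕ) : Prop := ∀ y, sameOrb f m y → y ∈ Set.range f

noncomputable def fpred (f : ℕ → ℕ) : ℕ → ℕ := Function.invFun f

include hinj in
lemma fpred_f (x : ℕ) : fpred f (f x) = x := Function.leftInverse_invFun hinj x

lemma f_fpred {y : ℕ} (h : y ∈ Set.range f) : f (fpred f y) = y := Function.invFun_eq h

include hinj in
lemma fpred_iter_f (j x : ℕ) : (fpred f)^[j] (f^[j] x) = x := by
  induction j with
  | zero => rfl
  | succ j ih =>
    rw [Function.iterate_succ_apply' f, Function.iterate_succ_apply (fpred f),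
      fpred_f hinj, ih]

section ZChain

variable {m : ℕ} (hz : Zty f m) (hm : ¬ Cyc f m)

include hz in
lemma zchain_sameOrb : ∀ u, sameOrb f m ((fpred f)^[u] m) := by
  intro u
  induction u with
  | zero => exact sameOrb_refl m
  | succ u ih =>
    have hrange : (fpred f)^[u] m ∈ Set.range f := hz _ ih
    have hf : f ((fpred f)^[u+1] m) = (fpred f)^[u] m := by
      rw [Function.iterate_succ_apply' (fpred f)]
      exact f_fpred hrange
    apply sameOrb_trans ih
    apply sameOrb_symm
    rw [← hf]
    exact sameOrb_iter 1 _

include hz in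
lemma zchain_f (u : ℕ) : f ((fpred f)^[u+1] m) = (fpred f)^[u] m := by
  rw [Function.iterate_succ_apply' (fpred f)]
  exact f_fpred (hz _ (zchain_sameOrb hz u))

include hz in
lemma zchain_f_iter : ∀ u, f^[u] ((fpred f)^[u] m) = m := by
  intro u
  induction u with
  | zero => rfl
  | succ u ih =>
    rw [Function.iterate_succ_apply f, zchain_f hz, ih]

include hinj hz in
lemma zchain_surj {y : ℕ} (h : sameOrb f m y) :
    (∃ i, f^[i] m = y) ∨ (∃ u, (fpred f)^[u+1] m = y) := by
  rcases sameOrb_symm h with ⟨p, q, hpq⟩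
  rcases le_or_gt p q with hle | hlt
  · left
    refine ⟨q - p, ?_⟩
    apply hinj.iterate p
    rw [← Function.iterate_add_apply]
    have e : p + (q - p) = q := by omega
    rw [e]
    exact hpq.symm
  · right
    refine ⟨p - q - 1, ?_⟩
    have e1 : p - q - 1 + 1 = p - q := by omega
    rw [e1]
    have h2 : y = (fpred f)^[p] (f^[p] y) := (fpred_iter_f hinj p y).symm
    rw [hpq] at h2
    have e2 : (fpred f)^[p] (f^[q] m) = (fpred f)^[p-q] ((fpred f)^[q] (f^[q] m)) := by
      rw [← Function.iterate_add_apply]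
      congr 1
      omega
    rw [e2, fpred_iter_f hinj] at h2
    exact h2.symm

include hinj hm hz in
lemma zchain_ne (i u : ℕ) : f^[i] m ≠ (fpred f)^[u+1] m := by
  intro hbad
  apply hm
  refine ⟨u + 1 + i, by omega, ?_⟩
  rw [Function.iterate_add_apply, hbad]
  exact zchain_f_iter hz (u + 1)

include hinj hm hz in
lemma zchain_pred_inj {u v : ℕ} (h : (fpred f)^[u] m = (fpred f)^[v] m) : u = v := by
  rcases Nat.lt_trichotomy u v with huv | huv | huv
  · exfalso
    apply hm
    refine ⟨v - u, by omega, ?_⟩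
    have h1 : f^[v] ((fpred f)^[u] m) = m := by
      rw [h]; exact zchain_f_iter hz v
    have e : v = (v - u) + u := by omega
    rw [e, Function.iterate_add_apply, zchain_f_iter hz u] at h1
    exact h1
  · exact huv
  · exfalso
    apply hm
    refine ⟨u - v, by omega, ?_⟩
    have h1 : f^[u] ((fpred f)^[v] m) = m := by
      rw [← h]; exact zchain_f_iter hz u
    have e : u = (u - v) + v := by omega
    rw [e, Function.iterate_add_apply, zchain_f_iter hz v] at h1
    exact h1

end ZChain

section WChain

variable {m : ℕ} (hw : ¬ Zty f m)

/-- base point of an ω-chain -/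
noncomputable def baseOf (f : ℕ → ℕ) (m : ℕ) : ℕ :=
  sInf {b | sameOrb f m b ∧ b ∉ Set.range f}

include hw in
lemma baseOf_spec : sameOrb f m (baseOf f m) ∧ baseOf f m ∉ Set.range f := by
  have hne : {b | sameOrb f m b ∧ b ∉ Set.range f}.Nonempty := by
    unfold Zty at hw
    push_neg at hw
    rcases hw with ⟨y, hy1, hy2⟩
    exact ⟨y, hy1, hy2⟩
  exact Nat.sInf_mem hne

include hinj in
lemma wchain_surj {b y : ℕ} (hb : b ∉ Set.range f) (h : sameOrb f b y) :
    ∃ i, f^[i] b = y := by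
  rcases sameOrb_symm h with ⟨p, q, hpq⟩
  rcases le_or_gt p q with hle | hlt
  · refine ⟨q - p, ?_⟩
    apply hinj.iterate p
    rw [← Function.iterate_add_apply]
    have e : p + (q - p) = q := by omega
    rw [e]
    exact hpq.symm
  · exfalso
    have h2 : f^[q] (f^[p-q] y) = f^[q] b := by
      rw [← Function.iterate_add_apply]
      have e : q + (p - q) = p := by omega
      rw [e, hpq]
    have h3 : f^[p-q] y = b := hinj.iterate q h2
    apply hb
    have e2 : p - q = (p - q - 1) + 1 := by omega
    rw [e2, Function.iterate_succ_apply' f] at h3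
    exact ⟨_, h3⟩

end WChain

end OrbitTheory2


/-! ### indexing countable sets -/

structure Indexing (S : Set ℕ) (w : Option ℕ) (e : ℕ → ℕ) : Prop where
  mem : ∀ u, optLtP u w → e u ∈ S
  inj : ∀ u v, optLtP u w → optLtP v w → e u = e v → u = v
  surj : ∀ m ∈ S, ∃ u, optLtP u w ∧ e u = m

lemma exists_indexing (S : Set ℕ) : ∃ w e, Indexing S w e := by
  classical
  by_cases hfin : S.Finite
  · set l : List ℕ := hfin.toFinset.sort (· ≤ ·) with hldef
    have hnd : l.Nodup := hfin.toFinset.sort_nodup (· ≤ ·)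
    have hl : ∀ m, m ∈ l ↔ m ∈ S := by
      intro m
      rw [hldef, Finset.mem_sort, Set.Finite.mem_toFinset]
    refine ⟨some l.length, fun u => l.getD u 0, ?_⟩
    constructor
    · intro u hu
      rw [optLtP_some] at hu
      rw [← hl, List.getD_eq_getElem l 0 hu]
      exact List.getElem_mem hu
    · intro u v hu hv h
      rw [optLtP_some] at hu hv
      rw [List.getD_eq_getElem l 0 hu, List.getD_eq_getElem l 0 hv] at h
      exact (hnd.getElem_inj_iff (hi := hu) (hj := hv)).1 h
    · intro m hm
      rcases List.mem_iff_getElem.1 ((hl m).2 hm) with ⟨u, hu, hum⟩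
      refine ⟨u, by rw [optLtP_some]; exact hu, ?_⟩
      rw [List.getD_eq_getElem l 0 hu, hum]
  · refine ⟨none, Nat.nth S, ?_⟩
    constructor
    · intro u _
      exact Nat.nth_mem_of_infinite hfin u
    · intro u v _ _ h
      exact (Nat.nth_injective hfin) h
    · intro m hm
      haveI := Classical.decPred S
      refine ⟨Nat.count S m, by rw [optLtP_none]; trivial, Nat.nth_count hm⟩

lemma sInf_eq_of_unique {s : Set ℕ} {u : ℕ} (hu : u ∈ s) (huniq : ∀ v ∈ s, v = u) :
    sInf s = u := huniq _ (Nat.sInf_mem ⟨u, hu⟩)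

/-- minimal elements of chains -/
def ChainMin (f : ℕ → ℕ) (m : ℕ) : Prop := ¬ Cyc f m ∧ minOrb f m = m

def Sw (f : ℕ → ℕ) (mst : ℕ) : Set ℕ := {m | ChainMin f m ∧ ¬ Zty f m ∧ m ≠ mst}
def Sz (f : ℕ → ℕ) (mst : ℕ) : Set ℕ := {m | ChainMin f m ∧ Zty f m ∧ m ≠ mst}

/-- All classical data needed for the construction. -/
structure Setup (f : ℕ → ℕ) : Type where
  c : Code
  hS : ∀ {s n y : ℕ}, evaln s c n = some y → y = f n
  hC : ∀ n : ℕ, ∃ s, evaln s c n = some (f n)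
  hinj : Function.Injective f
  mst : ℕ
  hmc : ¬ Cyc f mst
  hmm : minOrb f mst = mst
  bw : Bool
  hbw : bw = true ↔ Zty f mst
  wopt : Option ℕ
  zopt : Option ℕ
  ew : ℕ → ℕ
  ez : ℕ → ℕ
  hw : Indexing (Sw f mst) wopt ew
  hz : Indexing (Sz f mst) zopt ez


section Main

open scoped Classical

variable {f : ℕ → ℕ} (P : Setup f)

/-- start point of the padding ray -/
noncomputable def cst : ℕ := if P.bw then P.mst else baseOf f P.mst

/-- forward elements of the designated orbit -/
noncomputable def ost (t : ℕ) : ℕ := f^[t] (cst P)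

/-- positions of the padding ray on the `g`-side -/
noncomputable def rayElt (t : ℕ) : ℕ :=
  if t % 2 = 0 then 2 * Nat.nth (PadP P.c) (t / 2)
  else 2 * Nat.nth (LeftP P.wopt P.zopt P.bw) (t / 2) + 1

/-- an element of a ℤ-chain by its coded index -/
noncomputable def zel (f : ℕ → ℕ) (m i : ℕ) : ℕ :=
  if i % 2 = 0 then f^[i/2] m else (fpred f)^[i/2+1] m

/-- the isomorphism -/
noncomputable def phi (x : ℕ) : ℕ :=
  if Cyc f x then
    2 * bcode (minOrb f x) (pLen f (minOrb f x)) (sFor P.c (minOrb f x) (pLen f (minOrb f x)))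
      (sInf {i | i < pLen f (minOrb f x) ∧ f^[i] (minOrb f x) = x})
  else if minOrb f x = P.mst then
    (if ∃ t, ost P t = x then rayElt P (sInf {t | ost P t = x})
     else 2 * Nat.pair 2 (sInf {u | (fpred f)^[u+1] P.mst = x}) + 1)
  else if Zty f (minOrb f x) then
    2 * Nat.pair (3 * (sInf {u | optLtP u P.zopt ∧ P.ez u = minOrb f x}) + 1)
      (if ∃ i, f^[i] (minOrb f x) = x then 2 * sInf {i | f^[i] (minOrb f x) = x}
       else 2 * sInf {u | (fpred f)^[u+1] (minOrb f x) = x} + 1) + 1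
  else
    2 * Nat.pair (3 * (sInf {u | optLtP u P.wopt ∧ P.ew u = minOrb f x}))
      (sInf {i | f^[i] (baseOf f (minOrb f x)) = x}) + 1

/-- the inverse isomorphism -/
noncomputable def chi (n : ℕ) : ℕ :=
  if n % 2 = 0 then
    (if ValidP P.c (n/2) then f^[vi (n/2)] (vx (n/2))
     else ost P (2 * Nat.count (PadP P.c) (n/2)))
  else
    (if (n/2).unpair.1 % 3 = 0 ∧ optLtP ((n/2).unpair.1 / 3) P.wopt then
      f^[(n/2).unpair.2] (baseOf f (P.ew ((n/2).unpair.1 / 3)))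
    else if (n/2).unpair.1 % 3 = 1 ∧ optLtP ((n/2).unpair.1 / 3) P.zopt then
      zel f (P.ez ((n/2).unpair.1 / 3)) (n/2).unpair.2
    else if P.bw = true ∧ (n/2).unpair.1 = 2 then (fpred f)^[(n/2).unpair.2 + 1] P.mst
    else ost P (2 * Nat.count (LeftP P.wopt P.zopt P.bw) (n/2) + 1))

/-! ### basic facts about the designated orbit -/

lemma cst_base (hb : P.bw = false) : baseOf f P.mst = cst P := by
  unfold cst; rw [hb]; simp

lemma cst_sameOrb : sameOrb f P.mst (cst P) := by
  unfold cst
  by_cases hb : P.bw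
  · rw [if_pos hb]; exact sameOrb_refl _
  · rw [if_neg hb]
    have hnz : ¬ Zty f P.mst := fun h => hb (P.hbw.2 h)
    exact (baseOf_spec hnz).1

lemma ost_sameOrb (t : ℕ) : sameOrb f P.mst (ost P t) :=
  sameOrb_trans (cst_sameOrb P) (sameOrb_iter t _)

lemma ost_noncyc (t : ℕ) : ¬ Cyc f (ost P t) :=
  fun h => P.hmc ((cyc_sameOrb P.hinj (ost_sameOrb P t)).2 h)

lemma ost_minOrb (t : ℕ) : minOrb f (ost P t) = P.mst := by
  rw [← minOrb_congr (ost_sameOrb P t), P.hmm]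

lemma ost_inj {t t' : ℕ} (h : ost P t = ost P t') : t = t' :=
  noncyc_iter_inj P.hinj (fun hcc => (ost_noncyc P 0) hcc) h

lemma ost_succ (t : ℕ) : f (ost P t) = ost P (t + 1) := by
  unfold ost
  rw [Function.iterate_succ_apply' f]

lemma ost_surj_of_not_bw (hb : P.bw = false) {y : ℕ} (h : sameOrb f P.mst y) :
    ∃ t, ost P t = y := by
  have hnz : ¬ Zty f P.mst := fun hh => by rw [P.hbw.2 hh] at hb; exact absurd hb (by simp)
  have hbase := baseOf_spec hnz
  have hcb : cst P = baseOf f P.mst := by unfold cst; rw [hb]; simp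
  rcases wchain_surj P.hinj (hbase.2) (sameOrb_trans (sameOrb_symm hbase.1) h) with ⟨i, hi⟩
  exact ⟨i, by unfold ost; rw [hcb]; exact hi⟩

lemma zty_mst_of_bw (hb : P.bw = true) : Zty f P.mst := P.hbw.1 hb

lemma ost_eq_iter_of_bw (hb : P.bw = true) (t : ℕ) : ost P t = f^[t] P.mst := by
  unfold ost cst
  rw [hb]
  simp

/-! ### ray lemmas -/

lemma PadP_of_not_valid {m : ℕ} (h : ¬ ValidP P.c m) : PadP P.c m := h

lemma gFun_rayElt (t : ℕ) :
    gFun P.c P.wopt P.zopt P.bw (rayElt P t) = rayElt P (t + 1) := by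
  rcases Nat.even_or_odd t with ⟨u, hu⟩ | ⟨u, hu⟩
  · -- even position : a `PadP` code
    have ht : t % 2 = 0 := by omega
    have ht2 : t / 2 = u := by omega
    unfold rayElt
    rw [if_pos ht, ht2]
    have hmem : PadP P.c (Nat.nth (PadP P.c) u) :=
      Nat.nth_mem_of_infinite (PadP_infinite P.c) u
    unfold gFun
    have h2 : 2 * Nat.nth (PadP P.c) u % 2 = 0 := by omega
    rw [if_pos h2]
    have h3 : 2 * Nat.nth (PadP P.c) u / 2 = Nat.nth (PadP P.c) u := by omega
    simp only [h3]
    rw [if_neg (by exact hmem)]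
    rw [Nat.count_nth_of_infinite (PadP_infinite P.c) u]
    have ht3 : (t + 1) % 2 = 1 := by omega
    have ht4 : (t + 1) / 2 = u := by omega
    rw [if_neg (by omega), ht4]
  · -- odd position : a leftover cell
    have ht : t % 2 = 1 := by omega
    have ht2 : t / 2 = u := by omega
    unfold rayElt
    rw [if_neg (by omega), ht2]
    set cc := Nat.nth (LeftP P.wopt P.zopt P.bw) u with hcc
    have hmem : LeftP P.wopt P.zopt P.bw cc :=
      Nat.nth_mem_of_infinite (LeftP_infinite _ _ _) u
    unfold gFun
    rw [if_neg (by omega)]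
    have h3 : (2 * cc + 1) / 2 = cc := by omega
    simp only [h3]
    unfold LeftP LeftCol at hmem
    set j := cc.unpair.1 with hj
    have hc1 : ¬ (j % 3 = 0 ∧ optLtP (j / 3) P.wopt) := by
      rintro ⟨d1, d2⟩
      rcases hmem with ⟨h1, h2⟩ | ⟨h1, h2⟩ | ⟨h1, h2⟩
      · exact h2 d2
      · omega
      · omega
    have hc2 : ¬ (j % 3 = 1 ∧ optLtP (j / 3) P.zopt) := by
      rintro ⟨d1, d2⟩
      rcases hmem with ⟨h1, h2⟩ | ⟨h1, h2⟩ | ⟨h1, h2⟩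
      · omega
      · exact h2 d2
      · omega
    have hc3 : ¬ (P.bw = true ∧ j = 2) := by
      rintro ⟨d1, d2⟩
      rcases hmem with ⟨h1, h2⟩ | ⟨h1, h2⟩ | ⟨h1, h2⟩
      · omega
      · omega
      · exact h2 ⟨d1, d2⟩
    rw [if_neg hc1, if_neg hc2, if_neg hc3]
    rw [Nat.count_nth_of_infinite (LeftP_infinite _ _ _) u]
    have ht3 : (t + 1) % 2 = 0 := by omega
    have ht4 : (t + 1) / 2 = u + 1 := by omega
    rw [if_pos ht3, ht4]

end Main


section Main2

open scoped Classical

variable {f : ℕ → ℕ} (P : Setup f)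

/-! ### gFun evaluation lemmas -/

lemma gFun_valid {m : ℕ} (h : ValidP P.c m) :
    gFun P.c P.wopt P.zopt P.bw (2 * m) =
      2 * bcode (vx m) (vk m) (vs m) (if vi m + 1 < vk m then vi m + 1 else 0) := by
  unfold gFun
  rw [if_pos (by omega)]
  have h2 : 2 * m / 2 = m := by omega
  simp only [h2]
  rw [if_pos h]

lemma gFun_wcell {j i : ℕ} (h1 : j % 3 = 0) (h2 : optLtP (j / 3) P.wopt) :
    gFun P.c P.wopt P.zopt P.bw (2 * Nat.pair j i + 1) = 2 * Nat.pair j (i + 1) + 1 := by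
  unfold gFun
  rw [if_neg (by omega)]
  have hh : (2 * Nat.pair j i + 1) / 2 = Nat.pair j i := by omega
  simp only [hh, Nat.unpair_pair]
  rw [if_pos ⟨h1, h2⟩]

lemma gFun_zcell {j i : ℕ} (h1 : j % 3 = 1) (h2 : optLtP (j / 3) P.zopt) :
    gFun P.c P.wopt P.zopt P.bw (2 * Nat.pair j i + 1) = 2 * Nat.pair j (zsuccC i) + 1 := by
  unfold gFun
  rw [if_neg (by omega)]
  have hh : (2 * Nat.pair j i + 1) / 2 = Nat.pair j i := by omega
  simp only [hh, Nat.unpair_pair]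
  rw [if_neg (by rintro ⟨d1, _⟩; omega), if_pos ⟨h1, h2⟩]

lemma gFun_bkcell (hb : P.bw = true) (i : ℕ) :
    gFun P.c P.wopt P.zopt P.bw (2 * Nat.pair 2 i + 1) =
      (if i = 0 then 2 * Nat.nth (PadP P.c) 0 else 2 * Nat.pair 2 (i - 1) + 1) := by
  unfold gFun
  rw [if_neg (by omega)]
  have hh : (2 * Nat.pair 2 i + 1) / 2 = Nat.pair 2 i := by omega
  simp only [hh, Nat.unpair_pair]
  rw [if_neg (by rintro ⟨d1, _⟩; omega), if_neg (by rintro ⟨d1, _⟩; omega),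
    if_pos ⟨hb, trivial⟩]

/-! ### chi evaluation lemmas -/

lemma chi_valid {m : ℕ} (h : ValidP P.c m) : chi P (2 * m) = f^[vi m] (vx m) := by
  unfold chi
  rw [if_pos (by omega)]
  have h2 : 2 * m / 2 = m := by omega
  simp only [h2]
  rw [if_pos h]

lemma chi_pad {m : ℕ} (h : ¬ ValidP P.c m) :
    chi P (2 * m) = ost P (2 * Nat.count (PadP P.c) m) := by
  unfold chi
  rw [if_pos (by omega)]
  have h2 : 2 * m / 2 = m := by omega
  simp only [h2]
  rw [if_neg h]

lemma chi_wcell {j i : ℕ} (h1 : j % 3 = 0) (h2 : optLtP (j / 3) P.wopt) :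
    chi P (2 * Nat.pair j i + 1) = f^[i] (baseOf f (P.ew (j / 3))) := by
  unfold chi
  rw [if_neg (by omega)]
  have hh : (2 * Nat.pair j i + 1) / 2 = Nat.pair j i := by omega
  simp only [hh, Nat.unpair_pair]
  rw [if_pos ⟨h1, h2⟩]

lemma chi_zcell {j i : ℕ} (h1 : j % 3 = 1) (h2 : optLtP (j / 3) P.zopt) :
    chi P (2 * Nat.pair j i + 1) = zel f (P.ez (j / 3)) i := by
  unfold chi
  rw [if_neg (by omega)]
  have hh : (2 * Nat.pair j i + 1) / 2 = Nat.pair j i := by omega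
  simp only [hh, Nat.unpair_pair]
  rw [if_neg (by rintro ⟨d1, _⟩; omega), if_pos ⟨h1, h2⟩]

lemma chi_bkcell (hb : P.bw = true) (i : ℕ) :
    chi P (2 * Nat.pair 2 i + 1) = (fpred f)^[i+1] P.mst := by
  unfold chi
  rw [if_neg (by omega)]
  have hh : (2 * Nat.pair 2 i + 1) / 2 = Nat.pair 2 i := by omega
  simp only [hh, Nat.unpair_pair]
  rw [if_neg (by rintro ⟨d1, _⟩; omega), if_neg (by rintro ⟨d1, _⟩; omega),
    if_pos ⟨hb, trivial⟩]

lemma chi_leftcell {cc : ℕ} (hmem : LeftP P.wopt P.zopt P.bw cc) :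
    chi P (2 * cc + 1) = ost P (2 * Nat.count (LeftP P.wopt P.zopt P.bw) cc + 1) := by
  unfold chi
  rw [if_neg (by omega)]
  have hh : (2 * cc + 1) / 2 = cc := by omega
  simp only [hh]
  unfold LeftP LeftCol at hmem
  have hc1 : ¬ (cc.unpair.1 % 3 = 0 ∧ optLtP (cc.unpair.1 / 3) P.wopt) := by
    rintro ⟨d1, d2⟩
    rcases hmem with ⟨h1, h2⟩ | ⟨h1, h2⟩ | ⟨h1, h2⟩
    · exact h2 d2
    · omega
    · omega
  have hc2 : ¬ (cc.unpair.1 % 3 = 1 ∧ optLtP (cc.unpair.1 / 3) P.zopt) := by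
    rintro ⟨d1, d2⟩
    rcases hmem with ⟨h1, h2⟩ | ⟨h1, h2⟩ | ⟨h1, h2⟩
    · omega
    · exact h2 d2
    · omega
  have hc3 : ¬ (P.bw = true ∧ cc.unpair.1 = 2) := by
    rintro ⟨d1, d2⟩
    rcases hmem with ⟨h1, h2⟩ | ⟨h1, h2⟩ | ⟨h1, h2⟩
    · omega
    · omega
    · exact h2 ⟨d1, d2⟩
  rw [if_neg hc1, if_neg hc2, if_neg hc3]

lemma chi_rayElt (t : ℕ) : chi P (rayElt P t) = ost P t := by
  rcases Nat.even_or_odd t with ⟨u, hu⟩ | ⟨u, hu⟩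
  · have ht : t % 2 = 0 := by omega
    have ht2 : t / 2 = u := by omega
    unfold rayElt
    rw [if_pos ht, ht2]
    have hmem : PadP P.c (Nat.nth (PadP P.c) u) :=
      Nat.nth_mem_of_infinite (PadP_infinite P.c) u
    rw [chi_pad P hmem, Nat.count_nth_of_infinite (PadP_infinite P.c) u]
    congr 1
    omega
  · have ht : t % 2 = 1 := by omega
    have ht2 : t / 2 = u := by omega
    unfold rayElt
    rw [if_neg (by omega), ht2]
    have hmem : LeftP P.wopt P.zopt P.bw (Nat.nth (LeftP P.wopt P.zopt P.bw) u) :=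
      Nat.nth_mem_of_infinite (LeftP_infinite _ _ _) u
    rw [chi_leftcell P hmem, Nat.count_nth_of_infinite (LeftP_infinite _ _ _) u]
    congr 1
    omega

lemma phi_ost (t : ℕ) : phi P (ost P t) = rayElt P t := by
  unfold phi
  rw [if_neg (ost_noncyc P t), if_pos (ost_minOrb P t), if_pos ⟨t, rfl⟩]
  congr 1
  exact sInf_eq_of_unique rfl (fun v hv => ost_inj P hv)

end Main2


section Main3

open scoped Classical

variable {f : ℕ → ℕ} (P : Setup f)

/-! ### cycle case -/

lemma pLen_of_rep {x k : ℕ} (h : IsCycleRep f x k) : pLen f x = k := by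
  have hmem : k ∈ {k' | 0 < k' ∧ f^[k'] x = x} := ⟨h.1, h.2.1⟩
  have h1 : pLen f x ≤ k := Nat.sInf_le hmem
  have h2 : 0 < pLen f x ∧ f^[pLen f x] x = x := Nat.sInf_mem ⟨k, hmem⟩
  by_contra hne
  exact h.2.2.1 _ h2.1 (by omega) h2.2

lemma cycle_idx_unique (hinj : Function.Injective f) {x k : ℕ} (h : IsCycleRep f x k)
    {i j : ℕ} (hi : i < k) (hj : j < k) (hij : f^[i] x = f^[j] x) : i = j := by
  rcases Nat.lt_trichotomy i j with hlt | he | hlt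
  · exfalso
    have : f^[i] (f^[j-i] x) = f^[i] x := by
      rw [← Function.iterate_add_apply]
      have e : i + (j - i) = j := by omega
      rw [e]; exact hij.symm
    exact h.2.2.1 (j - i) (by omega) (by omega) (hinj.iterate i this)
  · exact he
  · exfalso
    have : f^[j] (f^[i-j] x) = f^[j] x := by
      rw [← Function.iterate_add_apply]
      have e : j + (i - j) = i := by omega
      rw [e]; exact hij
    exact h.2.2.1 (i - j) (by omega) (by omega) (hinj.iterate j this)

lemma phi_cyc_eq {x : ℕ} (hc : Cyc f x) :
    phi P x = 2 * bcode (minOrb f x) (pLen f (minOrb f x))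
      (sFor P.c (minOrb f x) (pLen f (minOrb f x)))
      (sInf {i | i < pLen f (minOrb f x) ∧ f^[i] (minOrb f x) = x}) := by
  unfold phi
  rw [if_pos hc]

lemma cyc_idx_spec (hinj : Function.Injective f) {x : ℕ} (hc : Cyc f x) :
    sInf {i | i < pLen f (minOrb f x) ∧ f^[i] (minOrb f x) = x} < pLen f (minOrb f x) ∧
      f^[sInf {i | i < pLen f (minOrb f x) ∧ f^[i] (minOrb f x) = x}] (minOrb f x) = x := by
  have := (crep_is_rep hinj hc).2
  rcases this with ⟨i, hi1, hi2⟩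
  exact Nat.sInf_mem (s := {i | i < pLen f (minOrb f x) ∧ f^[i] (minOrb f x) = x}) ⟨i, hi1, hi2⟩

lemma chi_phi_cyc {x : ℕ} (hc : Cyc f x) : chi P (phi P x) = x := by
  rw [phi_cyc_eq P hc]
  have hrep := (crep_is_rep P.hinj hc).1
  have hidx := cyc_idx_spec P.hinj hc
  rw [chi_valid P (valid_bcode P.c P.hS P.hC hrep hidx.1)]
  simp only [vi_bcode, vx_bcode]
  exact hidx.2

lemma phi_chi_valid {m : ℕ} (h : ValidP P.c m) : phi P (chi P (2 * m)) = 2 * m := by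
  rw [chi_valid P h]
  obtain ⟨hrep, hik, hsf⟩ := of_valid P.c P.hS h
  have hcycm : Cyc f (vx m) := ⟨vk m, hrep.1, hrep.2.1⟩
  have hcyc : Cyc f (f^[vi m] (vx m)) := (cyc_iter_iff P.hinj _ _).2 hcycm
  have hmo : minOrb f (f^[vi m] (vx m)) = vx m := by
    rw [← minOrb_congr (sameOrb_iter (vi m) (vx m))]
    exact rep_min P.hinj hrep
  rw [phi_cyc_eq P hcyc, hmo, pLen_of_rep hrep]
  have hidx : sInf {i | i < vk m ∧ f^[i] (vx m) = f^[vi m] (vx m)} = vi m := by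
    apply sInf_eq_of_unique (s := {i | i < vk m ∧ f^[i] (vx m) = f^[vi m] (vx m)}) ⟨hik, rfl⟩
    rintro v ⟨hv1, hv2⟩
    exact cycle_idx_unique P.hinj hrep hv1 hik hv2
  rw [hidx, ← hsf, bcode_ext]

lemma phi_comm_cyc {x : ℕ} (hc : Cyc f x) :
    phi P (f x) = gFun P.c P.wopt P.zopt P.bw (phi P x) := by
  have hrep := (crep_is_rep P.hinj hc).1
  have hidx := cyc_idx_spec P.hinj hc
  set m0 := minOrb f x with hm0
  set k := pLen f m0 with hk
  set i0 := sInf {i | i < k ∧ f^[i] m0 = x} with hi0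
  have hcf : Cyc f (f x) := by
    have := (cyc_iter_iff P.hinj 1 x).2 hc
    simpa using this
  have hmof : minOrb f (f x) = m0 := minOrb_apply x
  rw [phi_cyc_eq P hc, gFun_valid P (valid_bcode P.c P.hS P.hC hrep hidx.1)]
  simp only [vx_bcode, vk_bcode, vs_bcode, vi_bcode]
  rw [phi_cyc_eq P hcf, hmof]
  have hfx : f x = f^[i0 + 1] m0 := by
    rw [Function.iterate_succ_apply']
    rw [hidx.2]
  have hidxf : sInf {i | i < k ∧ f^[i] m0 = f x} = if i0 + 1 < k then i0 + 1 else 0 := by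
    by_cases hlt : i0 + 1 < k
    · rw [if_pos hlt]
      apply sInf_eq_of_unique (s := {i | i < k ∧ f^[i] m0 = f x}) ⟨hlt, hfx.symm⟩
      rintro v ⟨hv1, hv2⟩
      exact cycle_idx_unique P.hinj hrep hv1 hlt (by rw [hv2, hfx])
    · rw [if_neg hlt]
      have hik : i0 + 1 = k := by
        have := hidx.1
        omega
      have hfx0 : f^[0] m0 = f x := by
        rw [hfx, hik]
        exact hrep.2.1.symm
      apply sInf_eq_of_unique (s := {i | i < k ∧ f^[i] m0 = f x}) ⟨hrep.1, hfx0⟩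
      rintro v ⟨hv1, hv2⟩
      exact cycle_idx_unique P.hinj hrep hv1 hrep.1 (by rw [hv2, ← hfx0])
  rw [hidxf]

/-! ### backwards ray -/

lemma bk_sameOrb (hb : P.bw = true) (u : ℕ) :
    sameOrb f P.mst ((fpred f)^[u+1] P.mst) := zchain_sameOrb (zty_mst_of_bw P hb) (u + 1)

lemma bk_noncyc (hb : P.bw = true) (u : ℕ) : ¬ Cyc f ((fpred f)^[u+1] P.mst) :=
  fun h => P.hmc ((cyc_sameOrb P.hinj (bk_sameOrb P hb u)).2 h)

lemma bk_minOrb (hb : P.bw = true) (u : ℕ) : minOrb f ((fpred f)^[u+1] P.mst) = P.mst := by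
  rw [← minOrb_congr (bk_sameOrb P hb u), P.hmm]

lemma bk_not_ost (hb : P.bw = true) (t u : ℕ) :
    ost P t ≠ (fpred f)^[u+1] P.mst := by
  rw [ost_eq_iter_of_bw P hb]
  exact zchain_ne P.hinj (zty_mst_of_bw P hb) P.hmc t u

lemma phi_bk (hb : P.bw = true) (u : ℕ) :
    phi P ((fpred f)^[u+1] P.mst) = 2 * Nat.pair 2 u + 1 := by
  unfold phi
  rw [if_neg (bk_noncyc P hb u), if_pos (bk_minOrb P hb u),
    if_neg (by rintro ⟨t, ht⟩; exact bk_not_ost P hb t u ht)]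
  have : sInf {u' | (fpred f)^[u'+1] P.mst = (fpred f)^[u+1] P.mst} = u := by
    apply sInf_eq_of_unique (s := {u' | (fpred f)^[u'+1] P.mst = (fpred f)^[u+1] P.mst}) rfl
    intro v hv
    have hvv : (fpred f)^[v+1] P.mst = (fpred f)^[u+1] P.mst := hv
    have := zchain_pred_inj P.hinj (zty_mst_of_bw P hb) P.hmc hvv
    omega
  rw [this]

end Main3


section Main4

open scoped Classical

variable {f : ℕ → ℕ} (P : Setup f)

/-! ### reserved ω-chains -/

noncomputable def wu (m : ℕ) : ℕ := sInf {u | optLtP u P.wopt ∧ P.ew u = m}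

lemma wu_spec {m : ℕ} (hm : m ∈ Sw f P.mst) :
    optLtP (wu P m) P.wopt ∧ P.ew (wu P m) = m := by
  rcases P.hw.surj m hm with ⟨u, hu1, hu2⟩
  exact Nat.sInf_mem (s := {u | optLtP u P.wopt ∧ P.ew u = m}) ⟨u, hu1, hu2⟩

lemma wu_of {m u : ℕ} (hu : optLtP u P.wopt) (he : P.ew u = m) : wu P m = u := by
  apply sInf_eq_of_unique (s := {u' | optLtP u' P.wopt ∧ P.ew u' = m}) ⟨hu, he⟩
  rintro v ⟨hv1, hv2⟩
  exact P.hw.inj v u hv1 hu (by rw [hv2, he])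

lemma w_base_spec {m : ℕ} (hm : m ∈ Sw f P.mst) :
    sameOrb f m (baseOf f m) ∧ baseOf f m ∉ Set.range f := baseOf_spec hm.2.1

lemma w_sameOrb {m : ℕ} (hm : m ∈ Sw f P.mst) (i : ℕ) :
    sameOrb f m (f^[i] (baseOf f m)) :=
  sameOrb_trans (w_base_spec P hm).1 (sameOrb_iter i _)

lemma w_noncyc {m : ℕ} (hm : m ∈ Sw f P.mst) (i : ℕ) :
    ¬ Cyc f (f^[i] (baseOf f m)) :=
  fun h => hm.1.1 ((cyc_sameOrb P.hinj (w_sameOrb P hm i)).2 h)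

lemma w_minOrb {m : ℕ} (hm : m ∈ Sw f P.mst) (i : ℕ) :
    minOrb f (f^[i] (baseOf f m)) = m := by
  rw [← minOrb_congr (w_sameOrb P hm i), hm.1.2]

lemma phi_welt {m : ℕ} (hm : m ∈ Sw f P.mst) (i : ℕ) :
    phi P (f^[i] (baseOf f m)) = 2 * Nat.pair (3 * wu P m) i + 1 := by
  unfold phi
  rw [if_neg (w_noncyc P hm i), w_minOrb P hm i, if_neg hm.2.2, if_neg hm.2.1]
  have hidx : sInf {i' | f^[i'] (baseOf f m) = f^[i] (baseOf f m)} = i := by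
    apply sInf_eq_of_unique (s := {i' | f^[i'] (baseOf f m) = f^[i] (baseOf f m)}) rfl
    intro v hv
    exact noncyc_iter_inj P.hinj
      (fun h => hm.1.1 ((cyc_sameOrb P.hinj (w_base_spec P hm).1).2 h)) hv
  rw [hidx]
  rfl

lemma phi_comm_welt {m : ℕ} (hm : m ∈ Sw f P.mst) (i : ℕ) :
    phi P (f (f^[i] (baseOf f m))) =
      gFun P.c P.wopt P.zopt P.bw (phi P (f^[i] (baseOf f m))) := by
  have h1 : f (f^[i] (baseOf f m)) = f^[i+1] (baseOf f m) :=
    (Function.iterate_succ_apply' f i _).symm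
  rw [h1, phi_welt P hm (i+1), phi_welt P hm i,
    gFun_wcell P (by omega) (by
      have : 3 * wu P m / 3 = wu P m := by omega
      rw [this]
      exact (wu_spec P hm).1)]

/-! ### reserved ℤ-chains -/

noncomputable def zu (m : ℕ) : ℕ := sInf {u | optLtP u P.zopt ∧ P.ez u = m}

lemma zu_spec {m : ℕ} (hm : m ∈ Sz f P.mst) :
    optLtP (zu P m) P.zopt ∧ P.ez (zu P m) = m := by
  rcases P.hz.surj m hm with ⟨u, hu1, hu2⟩
  exact Nat.sInf_mem (s := {u | optLtP u P.zopt ∧ P.ez u = m}) ⟨u, hu1, hu2⟩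

lemma zu_of {m u : ℕ} (hu : optLtP u P.zopt) (he : P.ez u = m) : zu P m = u := by
  apply sInf_eq_of_unique (s := {u' | optLtP u' P.zopt ∧ P.ez u' = m}) ⟨hu, he⟩
  rintro v ⟨hv1, hv2⟩
  exact P.hz.inj v u hv1 hu (by rw [hv2, he])

lemma zel_sameOrb {m : ℕ} (hm : m ∈ Sz f P.mst) (i : ℕ) : sameOrb f m (zel f m i) := by
  unfold zel
  by_cases hp : i % 2 = 0
  · rw [if_pos hp]; exact sameOrb_iter _ _
  · rw [if_neg hp]; exact zchain_sameOrb hm.2.1 _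

lemma zel_noncyc {m : ℕ} (hm : m ∈ Sz f P.mst) (i : ℕ) : ¬ Cyc f (zel f m i) :=
  fun h => hm.1.1 ((cyc_sameOrb P.hinj (zel_sameOrb P hm i)).2 h)

lemma zel_minOrb {m : ℕ} (hm : m ∈ Sz f P.mst) (i : ℕ) : minOrb f (zel f m i) = m := by
  rw [← minOrb_congr (zel_sameOrb P hm i), hm.1.2]

lemma zel_ne_mst {m : ℕ} (hm : m ∈ Sz f P.mst) (i : ℕ) : minOrb f (zel f m i) ≠ P.mst := by
  rw [zel_minOrb P hm i]
  exact hm.2.2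

lemma phi_zel {m : ℕ} (hm : m ∈ Sz f P.mst) (i : ℕ) :
    phi P (zel f m i) = 2 * Nat.pair (3 * zu P m + 1) i + 1 := by
  unfold phi
  rw [if_neg (zel_noncyc P hm i), zel_minOrb P hm i, if_neg hm.2.2, if_pos hm.2.1]
  have hzu : sInf {u | optLtP u P.zopt ∧ P.ez u = m} = zu P m := rfl
  rw [hzu]
  have hinner : (if ∃ i', f^[i'] m = zel f m i then 2 * sInf {i' | f^[i'] m = zel f m i}
      else 2 * sInf {u | (fpred f)^[u+1] m = zel f m i} + 1) = i := by
    rcases Nat.even_or_odd i with ⟨v, hv⟩ | ⟨v, hv⟩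
    · have hp : i % 2 = 0 := by omega
      have hv2 : i / 2 = v := by omega
      have hx : zel f m i = f^[v] m := by unfold zel; rw [if_pos hp, hv2]
      rw [if_pos ⟨v, hx.symm⟩]
      have hs : sInf {i' | f^[i'] m = zel f m i} = v := by
        apply sInf_eq_of_unique (s := {i' | f^[i'] m = zel f m i}) (by exact hx.symm)
        intro v' hv'
        have : f^[v'] m = f^[v] m := by rw [hv', hx]
        exact noncyc_iter_inj P.hinj hm.1.1 this
      rw [hs]
      omega
    · have hp : ¬ (i % 2 = 0) := by omega
      have hv2 : i / 2 = v := by omega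
      have hx : zel f m i = (fpred f)^[v+1] m := by unfold zel; rw [if_neg hp, hv2]
      rw [if_neg (by
        rintro ⟨i', hi'⟩
        rw [hx] at hi'
        exact zchain_ne P.hinj hm.2.1 hm.1.1 i' v hi')]
      have hs : sInf {u | (fpred f)^[u+1] m = zel f m i} = v := by
        apply sInf_eq_of_unique (s := {u | (fpred f)^[u+1] m = zel f m i}) (by exact hx.symm)
        intro v' hv'
        have hvv : (fpred f)^[v'+1] m = (fpred f)^[v+1] m := by rw [hv', hx]
        have := zchain_pred_inj P.hinj hm.2.1 hm.1.1 hvv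
        omega
      rw [hs]
      omega
  rw [hinner]

lemma zel_succ {m : ℕ} (hm : m ∈ Sz f P.mst) (i : ℕ) :
    f (zel f m i) = zel f m (zsuccC i) := by
  unfold zel zsuccC
  rcases Nat.even_or_odd i with ⟨v, hv⟩ | ⟨v, hv⟩
  · have hp : i % 2 = 0 := by omega
    have hne1 : ¬ (i = 1) := by omega
    rw [if_pos hp, if_neg hne1, if_pos hp]
    have hp2 : (i + 2) % 2 = 0 := by omega
    rw [if_pos hp2]
    have hd : (i + 2) / 2 = i / 2 + 1 := by omega
    rw [hd, Function.iterate_succ_apply' f]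
  · have hp : ¬ (i % 2 = 0) := by omega
    rw [if_neg hp]
    by_cases h1 : i = 1
    · rw [if_pos h1]
      have : i / 2 = 0 := by omega
      rw [this]
      have hz0 : f ((fpred f)^[1] m) = m := zchain_f hm.2.1 0
      rw [hz0]
      simp
    · rw [if_neg h1, if_neg hp]
      have hp2 : ¬ ((i - 2) % 2 = 0) := by omega
      rw [if_neg hp2]
      have hd : i / 2 = (i - 2) / 2 + 1 := by omega
      rw [hd]
      exact zchain_f hm.2.1 _

lemma phi_comm_zel {m : ℕ} (hm : m ∈ Sz f P.mst) (i : ℕ) :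
    phi P (f (zel f m i)) = gFun P.c P.wopt P.zopt P.bw (phi P (zel f m i)) := by
  rw [zel_succ P hm i, phi_zel P hm (zsuccC i), phi_zel P hm i,
    gFun_zcell P (by omega) (by
      have : (3 * zu P m + 1) / 3 = zu P m := by omega
      rw [this]
      exact (zu_spec P hm).1)]

lemma chainMin_of_noncyc (hinj : Function.Injective f) {x : ℕ} (hx : ¬ Cyc f x) :
    ChainMin f (minOrb f x) := by
  constructor
  · intro h
    exact hx ((cyc_sameOrb hinj (minOrb_sameOrb x)).2 h)
  · exact minOrb_idem x

end Main4


section Main5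

open scoped Classical

variable {f : ℕ → ℕ} (P : Setup f)

lemma mst_sameOrb_of_minOrb {x : ℕ} (hm : minOrb f x = P.mst) : sameOrb f P.mst x :=
  sameOrb_symm (hm ▸ minOrb_sameOrb x)

lemma chi_phi (x : ℕ) : chi P (phi P x) = x := by
  by_cases hc : Cyc f x
  · exact chi_phi_cyc P hc
  by_cases hm : minOrb f x = P.mst
  · have hso : sameOrb f P.mst x := mst_sameOrb_of_minOrb P hm
    by_cases hex : ∃ t, ost P t = x
    · have hphi : phi P x = rayElt P (sInf {t | ost P t = x}) := by
        unfold phi; rw [if_neg hc, if_pos hm, if_pos hex]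
      have hts : ost P (sInf {t | ost P t = x}) = x :=
        Nat.sInf_mem (s := {t | ost P t = x}) hex
      rw [hphi, chi_rayElt P, hts]
    · have hb : P.bw = true := by
        by_contra hbf
        have hbf' : P.bw = false := by revert hbf; cases P.bw <;> simp
        exact hex (ost_surj_of_not_bw P hbf' hso)
      have hzm := zty_mst_of_bw P hb
      have hex2 : ∃ u, (fpred f)^[u+1] P.mst = x := by
        rcases zchain_surj P.hinj hzm hso with ⟨i, hi⟩ | ⟨u, hu⟩
        · exact absurd ⟨i, by rw [ost_eq_iter_of_bw P hb]; exact hi⟩ hex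
        · exact ⟨u, hu⟩
      have hu := Nat.sInf_mem (s := {u | (fpred f)^[u+1] P.mst = x}) hex2
      have hphi : phi P x = 2 * Nat.pair 2 (sInf {u | (fpred f)^[u+1] P.mst = x}) + 1 := by
        unfold phi; rw [if_neg hc, if_pos hm, if_neg hex]
      rw [hphi, chi_bkcell P hb]
      exact hu
  · have hcm : ChainMin f (minOrb f x) := chainMin_of_noncyc P.hinj hc
    have hso : sameOrb f (minOrb f x) x := sameOrb_symm (minOrb_sameOrb x)
    by_cases hz : Zty f (minOrb f x)
    · have hmem : minOrb f x ∈ Sz f P.mst := ⟨hcm, hz, hm⟩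
      have hex : ∃ i, zel f (minOrb f x) i = x := by
        rcases zchain_surj P.hinj hz hso with ⟨i, hi⟩ | ⟨u, hu⟩
        · refine ⟨2*i, ?_⟩
          unfold zel
          rw [if_pos (by omega), show 2*i/2 = i by omega]
          exact hi
        · refine ⟨2*u+1, ?_⟩
          unfold zel
          rw [if_neg (by omega), show (2*u+1)/2 = u by omega]
          exact hu
      rcases hex with ⟨i, hi⟩
      rw [← hi, phi_zel P hmem i,
        chi_zcell P (by omega) (by
          rw [show (3 * zu P (minOrb f x) + 1) / 3 = zu P (minOrb f x) by omega]
          exact (zu_spec P hmem).1),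
        show (3 * zu P (minOrb f x) + 1) / 3 = zu P (minOrb f x) by omega,
        (zu_spec P hmem).2]
    · have hmem : minOrb f x ∈ Sw f P.mst := ⟨hcm, hz, hm⟩
      have hex : ∃ i, f^[i] (baseOf f (minOrb f x)) = x :=
        wchain_surj P.hinj (w_base_spec P hmem).2
          (sameOrb_trans (sameOrb_symm (w_base_spec P hmem).1) hso)
      rcases hex with ⟨i, hi⟩
      rw [← hi, phi_welt P hmem i,
        chi_wcell P (by omega) (by
          rw [show (3 * wu P (minOrb f x)) / 3 = wu P (minOrb f x) by omega]
          exact (wu_spec P hmem).1),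
        show (3 * wu P (minOrb f x)) / 3 = wu P (minOrb f x) by omega,
        (wu_spec P hmem).2]

lemma phi_chi (n : ℕ) : phi P (chi P n) = n := by
  by_cases hpar : n % 2 = 0
  · have hn : 2 * (n / 2) = n := by omega
    by_cases hv : ValidP P.c (n/2)
    · rw [← hn]
      exact phi_chi_valid P hv
    · rw [← hn, chi_pad P hv, phi_ost P]
      unfold rayElt
      rw [if_pos (by omega),
        show 2 * Nat.count (PadP P.c) (n/2) / 2 = Nat.count (PadP P.c) (n/2) by omega,
        Nat.nth_count (p := PadP P.c) hv]
  · set j := (n/2).unpair.1 with hj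
    set i := (n/2).unpair.2 with hi
    have hn : 2 * Nat.pair j i + 1 = n := by
      rw [hj, hi, Nat.pair_unpair]
      omega
    rw [← hn]
    by_cases h1 : j % 3 = 0 ∧ optLtP (j / 3) P.wopt
    · have hmem : P.ew (j/3) ∈ Sw f P.mst := P.hw.mem _ h1.2
      rw [chi_wcell P h1.1 h1.2, phi_welt P hmem, wu_of P h1.2 rfl,
        show 3 * (j/3) = j by omega]
    · by_cases h2 : j % 3 = 1 ∧ optLtP (j / 3) P.zopt
      · have hmem : P.ez (j/3) ∈ Sz f P.mst := P.hz.mem _ h2.2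
        rw [chi_zcell P h2.1 h2.2, phi_zel P hmem, zu_of P h2.2 rfl,
          show 3 * (j/3) + 1 = j by omega]
      · by_cases h3 : P.bw = true ∧ j = 2
        · rw [h3.2, chi_bkcell P h3.1, phi_bk P h3.1]
        · have hleft : LeftP P.wopt P.zopt P.bw (Nat.pair j i) := by
            unfold LeftP LeftCol
            rw [Nat.unpair_pair]
            rcases (by omega : j % 3 = 0 ∨ j % 3 = 1 ∨ j % 3 = 2) with h | h | h
            · exact Or.inl ⟨h, fun ho => h1 ⟨h, ho⟩⟩
            · exact Or.inr (Or.inl ⟨h, fun ho => h2 ⟨h, ho⟩⟩)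
            · exact Or.inr (Or.inr ⟨h, fun ho => h3 ho⟩)
          rw [chi_leftcell P hleft, phi_ost P]
          unfold rayElt
          rw [if_neg (by omega),
            show (2 * Nat.count (LeftP P.wopt P.zopt P.bw) (Nat.pair j i) + 1) / 2
              = Nat.count (LeftP P.wopt P.zopt P.bw) (Nat.pair j i) by omega,
            Nat.nth_count hleft]

lemma phi_comm (x : ℕ) : phi P (f x) = gFun P.c P.wopt P.zopt P.bw (phi P x) := by
  by_cases hc : Cyc f x
  · exact phi_comm_cyc P hc
  by_cases hm : minOrb f x = P.mst
  · have hso : sameOrb f P.mst x := mst_sameOrb_of_minOrb P hm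
    by_cases hex : ∃ t, ost P t = x
    · rcases hex with ⟨t, ht⟩
      rw [← ht, ost_succ P t, phi_ost P (t+1), phi_ost P t, gFun_rayElt P t]
    · have hb : P.bw = true := by
        by_contra hbf
        have hbf' : P.bw = false := by revert hbf; cases P.bw <;> simp
        exact hex (ost_surj_of_not_bw P hbf' hso)
      have hzm := zty_mst_of_bw P hb
      have hex2 : ∃ u, (fpred f)^[u+1] P.mst = x := by
        rcases zchain_surj P.hinj hzm hso with ⟨i, hi⟩ | ⟨u, hu⟩
        · exact absurd ⟨i, by rw [ost_eq_iter_of_bw P hb]; exact hi⟩ hex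
        · exact ⟨u, hu⟩
      rcases hex2 with ⟨u, hu⟩
      rw [← hu, phi_bk P hb u, gFun_bkcell P hb u]
      have hfx : f ((fpred f)^[u+1] P.mst) = (fpred f)^[u] P.mst := zchain_f hzm u
      rw [hfx]
      rcases Nat.eq_zero_or_pos u with hu0 | hu0
      · rw [hu0, if_pos rfl]
        have : (fpred f)^[0] P.mst = ost P 0 := by
          rw [ost_eq_iter_of_bw P hb]
          rfl
        rw [this, phi_ost P 0]
        unfold rayElt
        rw [if_pos (by omega)]
      · rw [if_neg (by omega)]
        have hpb := phi_bk P hb (u-1)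
        rw [show u - 1 + 1 = u by omega] at hpb
        exact hpb
  · have hcm : ChainMin f (minOrb f x) := chainMin_of_noncyc P.hinj hc
    have hso : sameOrb f (minOrb f x) x := sameOrb_symm (minOrb_sameOrb x)
    by_cases hz : Zty f (minOrb f x)
    · have hmem : minOrb f x ∈ Sz f P.mst := ⟨hcm, hz, hm⟩
      have hex : ∃ i, zel f (minOrb f x) i = x := by
        rcases zchain_surj P.hinj hz hso with ⟨i, hi⟩ | ⟨u, hu⟩
        · refine ⟨2*i, ?_⟩
          unfold zel
          rw [if_pos (by omega), show 2*i/2 = i by omega]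
          exact hi
        · refine ⟨2*u+1, ?_⟩
          unfold zel
          rw [if_neg (by omega), show (2*u+1)/2 = u by omega]
          exact hu
      rcases hex with ⟨i, hi⟩
      rw [← hi]
      exact phi_comm_zel P hmem i
    · have hmem : minOrb f x ∈ Sw f P.mst := ⟨hcm, hz, hm⟩
      have hex : ∃ i, f^[i] (baseOf f (minOrb f x)) = x :=
        wchain_surj P.hinj (w_base_spec P hmem).2
          (sameOrb_trans (sameOrb_symm (w_base_spec P hmem).1) hso)
      rcases hex with ⟨i, hi⟩
      rw [← hi]
      exact phi_comm_welt P hmem i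

end Main5

end PunctualPf

/-- Every computable injection structure with at least one infinite orbit has a
punctual presentation. -/
theorem punctual_presentation_of_infinite_orbit (f : ℕ → ℕ)
    (hinj : Function.Injective f) (hcomp : Computable f)
    (hinf : ∃ a : ℕ, (Orbit f a).Infinite) :
    ∃ g φ : ℕ → ℕ, Primrec g ∧ Function.Injective g ∧ Function.Bijective φ ∧
      ∀ n : ℕ, φ (f n) = g (φ n) := by
  classical
  open PunctualPf Nat.Partrec.Code in
  -- obtain a code for `f`
  have hpart : Nat.Partrec (fun n => Part.some (f n) : ℕ →. ℕ) :=
    Partrec.nat_iff.1 hcomp.partrec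
  obtain ⟨c, hc⟩ := Nat.Partrec.Code.exists_code.1 hpart
  have hS : ∀ {s n y : ℕ}, evaln s c n = some y → y = f n := by
    intro s n y h
    have h1 : y ∈ eval c n := evaln_sound h
    rw [hc] at h1
    exact Part.mem_some_iff.1 h1
  have hC : ∀ n : ℕ, ∃ s, evaln s c n = some (f n) := by
    intro n
    have h1 : f n ∈ eval c n := by
      rw [hc]
      exact Part.mem_some _
    exact evaln_complete.1 h1
  -- the designated infinite orbit
  obtain ⟨a, ha⟩ := hinf
  have hanc : ¬ Cyc f a := noncyc_of_orbit_infinite hinj ha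
  have hmc : ¬ Cyc f (minOrb f a) :=
    fun h => hanc ((cyc_sameOrb hinj (minOrb_sameOrb a)).2 h)
  have hmm : minOrb f (minOrb f a) = minOrb f a := minOrb_idem a
  -- classical parameters
  set bw : Bool := if Zty f (minOrb f a) then true else false with hbwdef
  have hbw : bw = true ↔ Zty f (minOrb f a) := by
    rw [hbwdef]
    by_cases h : Zty f (minOrb f a) <;> simp [h]
  obtain ⟨wopt, ew, hw⟩ := exists_indexing (Sw f (minOrb f a))
  obtain ⟨zopt, ez, hz⟩ := exists_indexing (Sz f (minOrb f a))
  set P : Setup f := ⟨c, @hS, hC, hinj, minOrb f a, hmc, hmm, bw, hbw,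
    wopt, zopt, ew, ez, hw, hz⟩ with hP
  have hgprim : Primrec (gFun c wopt zopt bw) := primrec_gFun c wopt zopt bw
  have hcomm : ∀ n, phi P (f n) = gFun c wopt zopt bw (phi P n) := fun n => phi_comm P n
  have hli : Function.LeftInverse (chi P) (phi P) := fun x => chi_phi P x
  have hri : Function.RightInverse (chi P) (phi P) := fun n => phi_chi P n
  have hbij : Function.Bijective (phi P) := ⟨hli.injective, hri.surjective⟩
  refine ⟨gFun c wopt zopt bw, phi P, hgprim, ?_, hbij, hcomm⟩
  -- injectivity of g
  intro n1 n2 h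
  have e1 : n1 = phi P (chi P n1) := (hri n1).symm
  have e2 : n2 = phi P (chi P n2) := (hri n2).symm
  rw [e1, e2, ← hcomm, ← hcomm] at h
  have h2 := hinj (hli.injective h)
  rw [e1, e2, h2]
end

section
/- Let c : Nat.Partrec.Code and g : ℕ → ℕ satisfy: for every x : ℕ there is s : ℕ with Nat.Partrec.Code.evaln s c x = some (g x) (so g is total computable via the code c). Then there exist injective primitive recursive functions f_A, f_B : ℕ → ℕ such that: (ℕ, f_A) and (ℕ, f_B) are isomorphic; f_A has at least one infinite orbit; f_A has infinitely many finite orbits, and any two distinct finite orbits of f_A have different cardinalities; and for every isomorphism h from (ℕ, f_A) to (ℕ, f_B), every x : ℕ, and every a : ℕ whose orbit O_{f_A}(a) is finite and such that exactly x finite orbits of f_A have cardinality strictly smaller than that of O_{f_A}(a), one has Nat.Partrec.Code.evaln (h a + 1) c x = some (g x). (Every isomorphism between the two copies bounds the convergence stages of g, which is the hard direction of PRCat(A) = Cone(Δ⁰₁) for Δ⁰₁-categorical injection structures with an infinite orbit and infinitely many finite orbits.) -/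
/-- `h` is an isomorphism from the injection structure `(ℕ, f)` to `(ℕ, g)`. -/
def IsInjIso (f g h : ℕ → ℕ) : Prop :=
  Function.Bijective h ∧ ∀ n : ℕ, h (f n) = g (h n)

namespace PRCat

variable (P : ℕ → ℕ → Bool)

/-- one step of the construction state machine; state = (current target, position in block). -/
def stp (k : ℕ) (s : ℕ × ℕ) : ℕ × ℕ :=
  if s.2 = 0 then (if P k s.1 then (if s.1 = 0 then (s.1 + 1, 0) else (s.1, 1)) else s)
  else (if s.2 = s.1 then (s.1 + 1, 0) else (s.1, s.2 + 1))

/-- state before step `k`. -/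
def st : ℕ → ℕ × ℕ := fun k => Nat.rec (0, 0) (fun k ih => stp P k ih) k

@[simp] theorem st_zero : st P 0 = (0, 0) := rfl
theorem st_succ (k : ℕ) : st P (k + 1) = stp P k (st P k) := rfl

/-- the injection. -/
def F (n : ℕ) : ℕ :=
  if n % 2 = 0 then
    (if (st P (n / 2)).2 = 0 ∧ P (n / 2) (st P (n / 2)).1 = false then n + 1 else n + 2)
  else
    (if (st P (n / 2)).2 = 0 then
      (if P (n / 2) (st P (n / 2)).1 then (if (st P (n / 2)).1 = 0 then n else n + 2) else n + 1)
    else (if (st P (n / 2)).2 = (st P (n / 2)).1 then n - 2 * (st P (n / 2)).1 else n + 2))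

theorem primrec_st (hP : Primrec₂ P) : Primrec (st P) := by
  have h1 : Primrec (fun p : ℕ × (ℕ × ℕ) => stp P p.1 p.2) := by
    unfold stp
    refine Primrec.ite (Primrec.eq.comp (Primrec.snd.comp .snd) (.const 0)) ?_ ?_
    · refine Primrec.ite (Primrec.eq.comp (hP.comp .fst (Primrec.fst.comp .snd)) (.const true)) ?_ ?_
      · refine Primrec.ite (Primrec.eq.comp (Primrec.fst.comp .snd) (.const 0)) ?_ ?_
        · exact Primrec.pair (Primrec.succ.comp (Primrec.fst.comp .snd)) (.const 0)
        · exact Primrec.pair (Primrec.fst.comp .snd) (.const 1)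
      · exact Primrec.snd
    · refine Primrec.ite (Primrec.eq.comp (Primrec.snd.comp .snd) (Primrec.fst.comp .snd)) ?_ ?_
      · exact Primrec.pair (Primrec.succ.comp (Primrec.fst.comp .snd)) (.const 0)
      · exact Primrec.pair (Primrec.fst.comp .snd) (Primrec.succ.comp (Primrec.snd.comp .snd))
  have h2 : Primrec₂ (fun (_ : ℕ) (n : ℕ) =>
      Nat.rec (motive := fun _ => ℕ × ℕ) (0, 0) (fun k ih => stp P k ih) n) :=
    Primrec.nat_rec (Primrec.const (0, 0)) (h1.comp Primrec.snd).to₂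
  exact (h2.comp Primrec.id Primrec.id).of_eq fun n => rfl

theorem primrec_F (hP : Primrec₂ P) : Primrec (F P) := by
  have hst := primrec_st P hP
  have hdiv : Primrec (fun n : ℕ => n / 2) := Primrec.nat_div.comp .id (.const 2)
  have hstd : Primrec (fun n : ℕ => st P (n / 2)) := hst.comp hdiv
  have hx : Primrec (fun n : ℕ => (st P (n / 2)).1) := Primrec.fst.comp hstd
  have hi : Primrec (fun n : ℕ => (st P (n / 2)).2) := Primrec.snd.comp hstd
  have hp : Primrec (fun n : ℕ => P (n / 2) (st P (n / 2)).1) := hP.comp hdiv hx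
  unfold F
  refine Primrec.ite (Primrec.eq.comp (Primrec.nat_mod.comp .id (.const 2)) (.const 0)) ?_ ?_
  · refine Primrec.ite ?_ (Primrec.succ.comp .id) (Primrec.nat_add.comp .id (.const 2))
    have : PrimrecPred fun n : ℕ => (st P (n / 2)).2 = 0 := Primrec.eq.comp hi (.const 0)
    have h2 : PrimrecPred fun n : ℕ => P (n / 2) (st P (n / 2)).1 = false :=
      Primrec.eq.comp hp (.const false)
    exact this.and h2
  · refine Primrec.ite (Primrec.eq.comp hi (.const 0)) ?_ ?_
    · refine Primrec.ite (Primrec.eq.comp hp (.const true)) ?_ (Primrec.succ.comp .id)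
      exact Primrec.ite (Primrec.eq.comp hx (.const 0)) .id (Primrec.nat_add.comp .id (.const 2))
    · refine Primrec.ite (Primrec.eq.comp hi hx) ?_ (Primrec.nat_add.comp .id (.const 2))
      exact Primrec.nat_sub.comp .id (Primrec.nat_mul.comp (.const 2) hx)


theorem stp_idle_no {k x : ℕ} (h : P k x = false) : stp P k (x, 0) = (x, 0) := by
  simp [stp, h]
theorem stp_idle_yes0 {k : ℕ} (h : P k 0 = true) : stp P k (0, 0) = (1, 0) := by
  simp [stp, h]
theorem stp_idle_yes {k x : ℕ} (h : P k x = true) (hx : x ≠ 0) : stp P k (x, 0) = (x, 1) := by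
  simp [stp, h, hx]
theorem stp_last {k x i : ℕ} (hi : i = x) (h1 : 1 ≤ i) : stp P k (x, i) = (x + 1, 0) := by
  subst hi
  simp [stp, show i ≠ 0 by omega]
theorem stp_mid {k x i : ℕ} (h1 : 1 ≤ i) (hix : i ≠ x) : stp P k (x, i) = (x, i + 1) := by
  simp [stp, show i ≠ 0 by omega, hix]

theorem pos_le_target : ∀ k, (st P k).2 ≤ (st P k).1 := by
  intro k
  induction k with
  | zero => simp
  | succ k ih =>
    rw [st_succ]
    rcases hs : st P k with ⟨x, i⟩
    rw [hs] at ih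
    simp only at ih
    unfold stp
    split_ifs <;> simp_all <;> omega

theorem target_mono : Monotone fun k => (st P k).1 := by
  apply monotone_nat_of_le_succ
  intro k
  rw [st_succ]
  rcases st P k with ⟨x, i⟩
  unfold stp
  split_ifs <;> simp

def blockAt (k x : ℕ) : Prop := st P k = (x, 0) ∧ P k x = true

theorem blockSteps {k x : ℕ} (hb : blockAt P k x) :
    ∀ j, 1 ≤ j → j ≤ x → st P (k + j) = (x, j) := by
  intro j
  induction j with
  | zero => omega
  | succ j ih =>
    intro _ hjx
    rcases Nat.eq_zero_or_pos j with hj | hj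
    · subst hj
      rw [st_succ, hb.1, stp_idle_yes P hb.2 (by omega)]
    · have := ih (by omega) (by omega)
      rw [show k + (j+1) = (k + j) + 1 by ring, st_succ, this, stp_mid P hj (by omega)]

theorem blockEnd {k x : ℕ} (hb : blockAt P k x) : st P (k + x + 1) = (x + 1, 0) := by
  rcases Nat.eq_zero_or_pos x with hx | hx
  · subst hx
    rw [st_succ, hb.1, stp_idle_yes0 P hb.2]
  · rw [st_succ, blockSteps P hb x hx le_rfl, stp_last P rfl hx]

theorem origin : ∀ k x i, st P k = (x, i) → 1 ≤ i → i ≤ k ∧ blockAt P (k - i) x := by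
  intro k
  induction k with
  | zero => intro x i h h1; rw [st_zero] at h; cases h; omega
  | succ k ih =>
    intro x i h h1
    rw [st_succ] at h
    rcases hs : st P k with ⟨x', i'⟩
    rw [hs] at h
    rcases Nat.eq_zero_or_pos i' with hi' | hi'
    · subst hi'
      by_cases hp : P k x' = true
      · rcases Nat.eq_zero_or_pos x' with hx' | hx'
        · subst hx'
          rw [stp_idle_yes0 P hp] at h
          simp only [Prod.mk.injEq] at h
          omega
        · rw [stp_idle_yes P hp (by omega)] at h
          simp only [Prod.mk.injEq] at h
          obtain ⟨rfl, rfl⟩ := h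
          exact ⟨by omega, by simpa using ⟨hs, hp⟩⟩
      · rw [stp_idle_no P (by simpa using hp)] at h
        simp only [Prod.mk.injEq] at h
        omega
    · by_cases hix : i' = x'
      · rw [stp_last P hix hi'] at h
        simp only [Prod.mk.injEq] at h
        omega
      · rw [stp_mid P hi' hix] at h
        simp only [Prod.mk.injEq] at h
        obtain ⟨rfl, rfl⟩ := h
        obtain ⟨hle, hb⟩ := ih x' i' hs hi'
        exact ⟨by omega, by simpa [show k + 1 - (i' + 1) = k - i' by omega] using hb⟩

theorem blockAt_unique {k k' x : ℕ} (h : blockAt P k x) (h' : blockAt P k' x) : k = k' := by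
  by_contra hne
  wlog hlt : k < k' generalizing k k'
  · exact this h' h (Ne.symm hne) (by omega)
  by_cases hle : k' ≤ k + x
  · have := blockSteps P h (k' - k) (by omega) (by omega)
    rw [show k + (k' - k) = k' by omega, h'.1] at this
    have : (0 : ℕ) = k' - k := congrArg Prod.snd this
    omega
  · have h1 : x + 1 ≤ (st P k').1 := by
      have := target_mono P (show k + x + 1 ≤ k' by omega)
      simpa [blockEnd P h] using this
    rw [h'.1] at h1
    simp at h1

theorem exists_blockAt (hP : ∀ x n, ∃ k, n ≤ k ∧ P k x = true) :
    ∀ x, ∃ k, blockAt P k x := by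
  have key : ∀ x k, st P k = (x, 0) → ∃ m, blockAt P m x := by
    intro x k hk
    obtain ⟨k', hk', hPk'⟩ := hP x k
    have main : ∀ d k, st P k = (x, 0) → P (k + d) x = true → ∃ m, blockAt P m x := by
      intro d
      induction d with
      | zero => intro k hk h; exact ⟨k, hk, by simpa using h⟩
      | succ d ih =>
        intro k hk h
        by_cases hp : P k x = true
        · exact ⟨k, hk, hp⟩
        · have h2 : st P (k + 1) = (x, 0) := by
            rw [st_succ, hk, stp_idle_no P (by simpa using hp)]
          exact ih (k + 1) h2 (by rw [show k + 1 + d = k + (d + 1) by ring]; exact h)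
    exact main (k' - k) k hk (by rwa [show k + (k' - k) = k' by omega])
  intro x
  induction x with
  | zero => exact key 0 0 rfl
  | succ x ih =>
    obtain ⟨m, hm⟩ := ih
    exact key (x + 1) (m + x + 1) (blockEnd P hm)

variable (hP : ∀ x n, ∃ k, n ≤ k ∧ P k x = true)

noncomputable def cst (x : ℕ) : ℕ := (exists_blockAt P hP x).choose

theorem blockAt_cst (x : ℕ) : blockAt P (cst P hP x) x :=
  (exists_blockAt P hP x).choose_spec

theorem st_cst_add {x i : ℕ} (hi : i ≤ x) : st P (cst P hP x + i) = (x, i) := by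
  rcases Nat.eq_zero_or_pos i with h | h
  · subst h; simpa using (blockAt_cst P hP x).1
  · exact blockSteps P (blockAt_cst P hP x) i h hi


noncomputable def cyc (x i : ℕ) : ℕ := 2 * (cst P hP x + i) + 1

def chn (n : ℕ) : ℕ := (F P)^[n] 0

theorem chn_zero : chn P 0 = 0 := rfl
theorem chn_succ (n : ℕ) : chn P (n + 1) = F P (chn P n) := Function.iterate_succ_apply' _ _ _

theorem F_even (k : ℕ) : F P (2 * k) =
    if (st P k).2 = 0 ∧ P k (st P k).1 = false then 2 * k + 1 else 2 * k + 2 := by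
  have h1 : 2 * k % 2 = 0 := by omega
  have h2 : 2 * k / 2 = k := by omega
  simp only [F, h1, h2, if_true, if_pos rfl, decide_true]

theorem F_odd (k : ℕ) : F P (2 * k + 1) =
    (if (st P k).2 = 0 then
      (if P k (st P k).1 then (if (st P k).1 = 0 then 2 * k + 1 else 2 * k + 1 + 2)
        else 2 * k + 1 + 1)
    else (if (st P k).2 = (st P k).1 then 2 * k + 1 - 2 * (st P k).1 else 2 * k + 1 + 2)) := by
  have h1 : (2 * k + 1) % 2 = 1 := by omega
  have h2 : (2 * k + 1) / 2 = k := by omega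
  simp only [F, h1, h2]
  norm_num

def ChainElt (n : ℕ) : Prop :=
  n % 2 = 0 ∨ (n % 2 = 1 ∧ (st P (n / 2)).2 = 0 ∧ P (n / 2) (st P (n / 2)).1 = false)

theorem chainElt_step {n : ℕ} (h : ChainElt P n) : ChainElt P (F P n) ∧ n < F P n := by
  rcases h with h | ⟨h1, h2, h3⟩
  · obtain ⟨k, rfl⟩ : ∃ k, n = 2 * k := ⟨n / 2, by omega⟩
    rw [F_even]
    split_ifs with hc
    · exact ⟨Or.inr ⟨by omega, by simpa [show (2 * k + 1) / 2 = k by omega] using hc⟩, by omega⟩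
    · exact ⟨Or.inl (by omega), by omega⟩
  · obtain ⟨k, rfl⟩ : ∃ k, n = 2 * k + 1 := ⟨n / 2, by omega⟩
    rw [show (2 * k + 1) / 2 = k by omega] at h2 h3
    rw [F_odd, if_pos h2, if_neg (by simp [h3])]
    exact ⟨Or.inl (by omega), by omega⟩

theorem chainElt_chn (n : ℕ) : ChainElt P (chn P n) := by
  induction n with
  | zero => exact Or.inl (by simp [chn_zero])
  | succ n ih => rw [chn_succ]; exact (chainElt_step P ih).1

theorem chn_strictMono : StrictMono (chn P) := by
  apply strictMono_nat_of_lt_succ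
  intro n
  rw [chn_succ]
  exact (chainElt_step P (chainElt_chn P n)).2

theorem chainElt_surj {n : ℕ} (h : ChainElt P n) : ∃ m, chn P m = n := by
  induction n using Nat.strong_induction_on with
  | _ n ih =>
    rcases Nat.eq_zero_or_pos n with rfl | hn
    · exact ⟨0, rfl⟩
    have hpred : ∃ p, p < n ∧ ChainElt P p ∧ F P p = n := by
      rcases h with h | ⟨h1, h2, h3⟩
      · -- n even positive, n = 2k+2
        obtain ⟨k, rfl⟩ : ∃ k, n = 2 * k + 2 := ⟨n / 2 - 1, by omega⟩
        by_cases hc : (st P k).2 = 0 ∧ P k (st P k).1 = false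
        · refine ⟨2 * k + 1, by omega, Or.inr ⟨by omega, ?_⟩, ?_⟩
          · simpa [show (2 * k + 1) / 2 = k by omega] using hc
          · rw [F_odd, if_pos hc.1, if_neg (by simp [hc.2])]
        · refine ⟨2 * k, by omega, Or.inl (by omega), ?_⟩
          rw [F_even, if_neg hc]
      · -- n odd chain
        obtain ⟨k, rfl⟩ : ∃ k, n = 2 * k + 1 := ⟨n / 2, by omega⟩
        rw [show (2 * k + 1) / 2 = k by omega] at h2 h3
        refine ⟨2 * k, by omega, Or.inl (by omega), ?_⟩
        rw [F_even, if_pos ⟨h2, h3⟩]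
    obtain ⟨p, hlt, hp, hfp⟩ := hpred
    obtain ⟨m, hm⟩ := ih p hlt hp
    exact ⟨m + 1, by rw [chn_succ, hm, hfp]⟩

theorem st_cyc {x i : ℕ} (hi : i ≤ x) :
    st P (cyc P hP x i / 2) = (x, i) := by
  rw [show cyc P hP x i / 2 = cst P hP x + i by simp [cyc]; omega]
  exact st_cst_add P hP hi

theorem F_cyc {x i : ℕ} (hi : i ≤ x) :
    F P (cyc P hP x i) = cyc P hP x (if i = x then 0 else i + 1) := by
  have hk : cyc P hP x i = 2 * (cst P hP x + i) + 1 := rfl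
  have hst : st P (cst P hP x + i) = (x, i) := st_cst_add P hP hi
  rcases Nat.eq_zero_or_pos i with rfl | hipos
  · have hp : P (cst P hP x) x = true := (blockAt_cst P hP x).2
    rcases Nat.eq_zero_or_pos x with rfl | hxpos
    · rw [hk, F_odd]
      simp only [Nat.add_zero] at hst ⊢
      rw [hst]
      simp [hp, cyc]
    · rw [hk, F_odd]
      simp only [Nat.add_zero] at hst ⊢
      rw [hst]
      simp only [hp, if_true, if_pos rfl]
      rw [if_neg (by omega), if_neg (by omega)]
      simp [cyc]; ring
  · rw [hk, F_odd, hst]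
    simp only
    rw [if_neg (by omega)]
    by_cases hix : i = x
    · subst hix
      rw [if_pos rfl, if_pos rfl]
      simp [cyc]; omega
    · rw [if_neg hix, if_neg hix]
      simp [cyc]; ring

theorem cyc_inj {x i y j : ℕ} (hi : i ≤ x) (hj : j ≤ y)
    (h : cyc P hP x i = cyc P hP y j) : x = y ∧ i = j := by
  have h2 : cyc P hP x i / 2 = cyc P hP y j / 2 := by rw [h]
  have := (st_cyc P hP hi).symm.trans (h2 ▸ st_cyc P hP hj)
  simp only [Prod.mk.injEq] at this
  exact this

theorem cyc_not_chainElt {x i : ℕ} (hi : i ≤ x) : ¬ ChainElt P (cyc P hP x i) := by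
  intro h
  have hodd : cyc P hP x i % 2 = 1 := by simp [cyc]
  have hdiv : cyc P hP x i / 2 = cst P hP x + i := by simp [cyc]; omega
  rcases h with h | ⟨_, h2, h3⟩
  · omega
  · rw [hdiv, st_cst_add P hP hi] at h2 h3
    simp only at h2 h3
    subst h2
    rw [Nat.add_zero] at h3
    exact absurd ((blockAt_cst P hP x).2) (by simp [h3])

theorem classify (n : ℕ) :
    (∃ m, chn P m = n) ∨ (∃ x i, i ≤ x ∧ cyc P hP x i = n) := by
  rcases Nat.even_or_odd n with he | ho
  · exact Or.inl (chainElt_surj P (Or.inl (Nat.even_iff.mp he)))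
  · obtain ⟨k, rfl⟩ : ∃ k, n = 2 * k + 1 :=
      ⟨n / 2, by have := Nat.odd_iff.mp ho; omega⟩
    rcases hs : st P k with ⟨x, i⟩
    rcases Nat.eq_zero_or_pos i with rfl | hipos
    · by_cases hp : P k x = true
      · refine Or.inr ⟨x, 0, Nat.zero_le x, ?_⟩
        have : cst P hP x = k := blockAt_unique P (blockAt_cst P hP x) ⟨hs, hp⟩
        simp [cyc, this]
      · refine Or.inl (chainElt_surj P (Or.inr ⟨by omega, ?_, ?_⟩)) <;>
          rw [show (2 * k + 1) / 2 = k by omega, hs]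
        simpa using hp
    · obtain ⟨hik, hb⟩ := origin P k x i hs hipos
      have hix : i ≤ x := by have := pos_le_target P k; rw [hs] at this; exact this
      have : cst P hP x = k - i := blockAt_unique P (blockAt_cst P hP x) hb
      exact Or.inr ⟨x, i, hix, by simp [cyc, this]; omega⟩

theorem F_chn (m : ℕ) : F P (chn P m) = chn P (m + 1) := (chn_succ P m).symm

include hP in
theorem F_injective : Function.Injective (F P) := by
  intro a b hab
  rcases classify P hP a with ⟨m, rfl⟩ | ⟨x, i, hi, rfl⟩ <;>
    rcases classify P hP b with ⟨m', rfl⟩ | ⟨y, j, hj, rfl⟩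
  · rw [F_chn, F_chn] at hab
    exact congrArg (chn P) (Nat.succ_injective ((chn_strictMono P).injective hab))
  · rw [F_chn, F_cyc P hP hj] at hab
    exact absurd (hab ▸ chainElt_chn P (m + 1))
      (cyc_not_chainElt P hP (by split_ifs <;> omega))
  · rw [F_chn, F_cyc P hP hi] at hab
    exact absurd (hab.symm ▸ chainElt_chn P (m' + 1))
      (cyc_not_chainElt P hP (by split_ifs <;> omega))
  · rw [F_cyc P hP hi, F_cyc P hP hj] at hab
    obtain ⟨rfl, h2⟩ := cyc_inj P hP (by split_ifs <;> omega) (by split_ifs <;> omega) hab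
    have : i = j := by
      split_ifs at h2 <;> omega
    rw [this]


theorem iterate_chn (n m : ℕ) : (F P)^[m] (chn P n) = chn P (n + m) := by
  simp [chn, ← Function.iterate_add_apply, Nat.add_comm]

theorem iterate_cyc {x i : ℕ} (hi : i ≤ x) (m : ℕ) :
    (F P)^[m] (cyc P hP x i) = cyc P hP x ((i + m) % (x + 1)) := by
  induction m with
  | zero => simp [Nat.mod_eq_of_lt (by omega : i < x + 1)]
  | succ m ih =>
    rw [Function.iterate_succ_apply', ih]
    set r := (i + m) % (x + 1) with hr
    have hrx : r ≤ x := by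
      have := Nat.mod_lt (i + m) (show 0 < x + 1 by omega)
      omega
    rw [F_cyc P hP hrx]
    congr 1
    have key : (i + (m + 1)) % (x + 1) = (r + 1) % (x + 1) := by
      rw [hr]
      exact ((Nat.mod_modEq (i + m) (x + 1)).add_right 1).symm
    rw [key]
    split_ifs with h
    · rw [h, Nat.mod_self]
    · exact (Nat.mod_eq_of_lt (by omega)).symm

noncomputable def cycSet (x : ℕ) : Set ℕ := (fun i => cyc P hP x i) '' Set.Iic x

theorem cyc_injective (x : ℕ) : Function.Injective (fun i => cyc P hP x i) := by
  intro a b h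
  simp only [cyc] at h
  omega

theorem cycSet_finite (x : ℕ) : (cycSet P hP x).Finite :=
  (Set.finite_Iic x).image _

theorem cycSet_ncard (x : ℕ) : (cycSet P hP x).ncard = x + 1 := by
  rw [cycSet, Set.ncard_image_of_injective _ (cyc_injective P hP x)]
  rw [show (Set.Iic x) = ↑(Finset.Iic x) by simp, Set.ncard_coe_finset]
  exact Nat.card_Iic x

theorem orbit_cyc {x i : ℕ} (hi : i ≤ x) :
    Orbit (F P) (cyc P hP x i) = cycSet P hP x := by
  ext b
  constructor
  · rintro ⟨m, n, hmn⟩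
    rw [iterate_cyc P hP hi] at hmn
    rcases classify P hP b with ⟨m', rfl⟩ | ⟨y, j, hj, rfl⟩
    · rw [iterate_chn] at hmn
      exact absurd (hmn ▸ chainElt_chn P (m' + n))
        (cyc_not_chainElt P hP (by
          have := Nat.mod_lt (i + m) (show 0 < x + 1 by omega); omega))
    · rw [iterate_cyc P hP hj] at hmn
      have hx := Nat.mod_lt (i + m) (show 0 < x + 1 by omega)
      have hy := Nat.mod_lt (j + n) (show 0 < y + 1 by omega)
      obtain ⟨rfl, -⟩ := cyc_inj P hP (by omega) (by omega) hmn
      exact ⟨j, hj, rfl⟩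
  · rintro ⟨j, hj, rfl⟩
    have hj' : j ≤ x := hj
    refine ⟨(x + 1) - i + j, 0, ?_⟩
    rw [iterate_cyc P hP hi, Function.iterate_zero_apply]
    congr 1
    rw [show i + ((x + 1) - i + j) = (x + 1) + j by omega, Nat.add_mod_left]
    exact Nat.mod_eq_of_lt (by omega)

theorem orbit_chn_infinite (n : ℕ) : (Orbit (F P) (chn P n)).Infinite := by
  have hsub : Set.range (fun m => chn P (n + m)) ⊆ Orbit (F P) (chn P n) := by
    rintro b ⟨m, rfl⟩
    exact ⟨m, 0, by rw [iterate_chn, Function.iterate_zero_apply]⟩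
  refine Set.Infinite.mono hsub (Set.infinite_range_of_injective ?_)
  intro a b h
  have := (chn_strictMono P).injective h
  omega

theorem orbit_self (f : ℕ → ℕ) (a : ℕ) : a ∈ Orbit f a := ⟨0, 0, rfl⟩

include hP in
theorem finite_orbit_classify {a : ℕ} (h : (Orbit (F P) a).Finite) :
    ∃ x i, i ≤ x ∧ a = cyc P hP x i := by
  rcases classify P hP a with ⟨m, rfl⟩ | ⟨x, i, hi, rfl⟩
  · exact absurd h (orbit_chn_infinite P m)
  · exact ⟨x, i, hi, rfl⟩

include hP in
theorem finite_orbits_eq :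
    {O : Set ℕ | (∃ a, O = Orbit (F P) a) ∧ O.Finite} = Set.range (cycSet P hP) := by
  ext O
  constructor
  · rintro ⟨⟨a, rfl⟩, hfin⟩
    obtain ⟨x, i, hi, rfl⟩ := finite_orbit_classify P hP hfin
    exact ⟨x, (orbit_cyc P hP hi).symm⟩
  · rintro ⟨x, rfl⟩
    exact ⟨⟨cyc P hP x 0, (orbit_cyc P hP (Nat.zero_le x)).symm⟩, cycSet_finite P hP x⟩

theorem cycSet_injective : Function.Injective (cycSet P hP) := by
  intro x y h
  have : cyc P hP x 0 ∈ cycSet P hP y := h ▸ ⟨0, Nat.zero_le x, rfl⟩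
  obtain ⟨j, hj, hcyc⟩ := this
  exact (cyc_inj P hP hj (Nat.zero_le x) hcyc).1.symm

/-- abstract model of the structure: a chain plus one cycle of each size. -/
def Model : Type := ℕ ⊕ {p : ℕ × ℕ // p.2 ≤ p.1}

noncomputable def dec : Model → ℕ
  | .inl m => chn P m
  | .inr p => cyc P hP p.1.1 p.1.2

def mshift : Model → Model
  | .inl m => .inl (m + 1)
  | .inr p => .inr ⟨(p.1.1, if p.1.2 = p.1.1 then 0 else p.1.2 + 1), by
      rcases p with ⟨⟨x, i⟩, h⟩; dsimp only; split_ifs <;> omega⟩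

theorem F_dec (d : Model) : F P (dec P hP d) = dec P hP (mshift d) := by
  rcases d with m | ⟨⟨x, i⟩, h⟩
  · exact F_chn P m
  · exact F_cyc P hP h

theorem dec_bijective : Function.Bijective (dec P hP) := by
  constructor
  · rintro (m | ⟨⟨x, i⟩, hxi⟩) (m' | ⟨⟨y, j⟩, hyj⟩) h
    · simp only [dec] at h
      rw [(chn_strictMono P).injective h]
    · simp only [dec] at h
      exact absurd (h ▸ chainElt_chn P m) (cyc_not_chainElt P hP hyj)
    · simp only [dec] at h
      exact absurd (h.symm ▸ chainElt_chn P m') (cyc_not_chainElt P hP hxi)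
    · simp only [dec] at h
      obtain ⟨rfl, rfl⟩ := cyc_inj P hP hxi hyj h
      rfl
  · intro n
    rcases classify P hP n with ⟨m, hm⟩ | ⟨x, i, hi, hc⟩
    · exact ⟨.inl m, hm⟩
    · exact ⟨.inr ⟨(x, i), hi⟩, hc⟩

theorem orbit_image {f g h : ℕ → ℕ} (hiso : IsInjIso f g h) (a : ℕ) :
    h '' Orbit f a = Orbit g (h a) := by
  have hsc : Function.Semiconj h f g := hiso.2
  have hit : ∀ (m : ℕ) (b : ℕ), h (f^[m] b) = g^[m] (h b) := fun m b =>
    (hsc.iterate_right m) b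
  ext y
  constructor
  · rintro ⟨b, ⟨m, n, hmn⟩, rfl⟩
    exact ⟨m, n, by rw [← hit, ← hit, hmn]⟩
  · rintro ⟨m, n, hmn⟩
    obtain ⟨b, rfl⟩ := hiso.1.2 y
    refine ⟨b, ⟨m, n, ?_⟩, rfl⟩
    apply hiso.1.1
    rw [hit, hit, hmn]

end PRCat

open PRCat in
theorem prcat_delta1_injection (c : Nat.Partrec.Code) (g : ℕ → ℕ)
    (hg : ∀ x : ℕ, ∃ s : ℕ, Nat.Partrec.Code.evaln s c x = some (g x)) :
    ∃ fA fB : ℕ → ℕ,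
      Primrec fA ∧ Primrec fB ∧ Function.Injective fA ∧ Function.Injective fB ∧
      (∃ h : ℕ → ℕ, IsInjIso fA fB h) ∧
      (∃ a : ℕ, (Orbit fA a).Infinite) ∧
      {O : Set ℕ | (∃ a : ℕ, O = Orbit fA a) ∧ O.Finite}.Infinite ∧
      (∀ a b : ℕ, (Orbit fA a).Finite → (Orbit fA b).Finite →
        Orbit fA a ≠ Orbit fA b → (Orbit fA a).ncard ≠ (Orbit fA b).ncard) ∧
      (∀ h : ℕ → ℕ, IsInjIso fA fB h → ∀ x a : ℕ, (Orbit fA a).Finite →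
        {O : Set ℕ | (∃ b : ℕ, O = Orbit fA b) ∧ O.Finite ∧
          O.ncard < (Orbit fA a).ncard}.Finite →
        {O : Set ℕ | (∃ b : ℕ, O = Orbit fA b) ∧ O.Finite ∧
          O.ncard < (Orbit fA a).ncard}.ncard = x →
        Nat.Partrec.Code.evaln (h a + 1) c x = some (g x)) := by
  classical
  set PA : ℕ → ℕ → Bool := fun _ _ => true with hPAdef
  have hPA : ∀ x n, ∃ k, n ≤ k ∧ PA k x = true := fun x n => ⟨n, le_rfl, rfl⟩
  set PB : ℕ → ℕ → Bool := fun k x => (Nat.Partrec.Code.evaln (2 * k + 1) c x).isSome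
    with hPBdef
  have hPB : ∀ x n, ∃ k, n ≤ k ∧ PB k x = true := by
    intro x n
    obtain ⟨s, hs⟩ := hg x
    refine ⟨n + s, by omega, ?_⟩
    have hmem : g x ∈ Nat.Partrec.Code.evaln (2 * (n + s) + 1) c x :=
      Nat.Partrec.Code.evaln_mono (by omega) (Option.mem_def.mpr hs)
    show (Nat.Partrec.Code.evaln (2 * (n + s) + 1) c x).isSome = true
    rw [Option.isSome_iff_exists]
    exact ⟨g x, Option.mem_def.mp hmem⟩
  have hprimA : Primrec (F PA) := primrec_F PA (Primrec₂.const true)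
  have hprimB : Primrec (F PB) := by
    apply primrec_F
    have hmul : Primrec fun p : ℕ × ℕ => 2 * p.1 + 1 :=
      Primrec.nat_add.comp (Primrec.nat_mul.comp (Primrec.const 2) Primrec.fst)
        (Primrec.const 1)
    have h1 : Primrec fun p : ℕ × ℕ => ((2 * p.1 + 1, c), p.2) :=
      (hmul.pair (Primrec.const c)).pair Primrec.snd
    have h2 : Primrec fun p : ℕ × ℕ => Nat.Partrec.Code.evaln (2 * p.1 + 1) c p.2 :=
      Nat.Partrec.Code.primrec_evaln.comp h1
    exact (Primrec.option_isSome.comp h2).to₂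
  refine ⟨F PA, F PB, hprimA, hprimB, F_injective PA hPA, F_injective PB hPB,
    ?_, ?_, ?_, ?_, ?_⟩
  · -- isomorphism
    let eA : Model ≃ ℕ := Equiv.ofBijective _ (dec_bijective PA hPA)
    let eB : Model ≃ ℕ := Equiv.ofBijective _ (dec_bijective PB hPB)
    refine ⟨fun n => eB (eA.symm n), (eA.symm.trans eB).bijective, ?_⟩
    intro n
    obtain ⟨d, rfl⟩ := eA.surjective n
    have hBd : ∀ d, eB d = dec PB hPB d := fun _ => rfl
    have key : F PA (eA d) = eA (mshift d) := F_dec PA hPA d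
    show eB (eA.symm (F PA (eA d))) = F PB (eB (eA.symm (eA d)))
    rw [key, eA.symm_apply_apply, eA.symm_apply_apply, hBd, hBd]
    exact (F_dec PB hPB d).symm
  · -- infinite orbit
    exact ⟨chn PA 0, orbit_chn_infinite PA 0⟩
  · -- infinitely many finite orbits
    rw [finite_orbits_eq PA hPA]
    exact Set.infinite_range_of_injective (cycSet_injective PA hPA)
  · -- distinct cardinalities
    intro a b hfa hfb hne hcard
    obtain ⟨x, i, hi, rfl⟩ := finite_orbit_classify PA hPA hfa
    obtain ⟨y, j, hj, rfl⟩ := finite_orbit_classify PA hPA hfb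
    rw [orbit_cyc PA hPA hi, orbit_cyc PA hPA hj] at hne hcard
    rw [cycSet_ncard, cycSet_ncard] at hcard
    exact hne (by rw [show x = y by omega])
  · -- the convergence bound
    intro h hiso x a hfin hsetfin hsetcard
    obtain ⟨x₀, i, hi, rfl⟩ := finite_orbit_classify PA hPA hfin
    set a := cyc PA hPA x₀ i with ha
    have horb : Orbit (F PA) a = cycSet PA hPA x₀ := orbit_cyc PA hPA hi
    have hncard : (Orbit (F PA) a).ncard = x₀ + 1 := by
      rw [horb, cycSet_ncard]
    have hseteq : {O : Set ℕ | (∃ b : ℕ, O = Orbit (F PA) b) ∧ O.Finite ∧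
        O.ncard < (Orbit (F PA) a).ncard} = cycSet PA hPA '' Set.Iio x₀ := by
      ext O
      constructor
      · rintro ⟨⟨b, rfl⟩, hOfin, hlt⟩
        obtain ⟨y, j, hj, rfl⟩ := finite_orbit_classify PA hPA hOfin
        rw [orbit_cyc PA hPA hj, cycSet_ncard, hncard] at hlt
        exact ⟨y, Set.mem_Iio.mpr (by omega), (orbit_cyc PA hPA hj).symm⟩
      · rintro ⟨y, hy, rfl⟩
        have hy' : y < x₀ := hy
        refine ⟨⟨cyc PA hPA y 0, (orbit_cyc PA hPA (Nat.zero_le y)).symm⟩,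
          cycSet_finite PA hPA y, ?_⟩
        rw [cycSet_ncard, hncard]
        omega
    have hx : x = x₀ := by
      rw [hseteq, Set.ncard_image_of_injective _ (cycSet_injective PA hPA),
        show (Set.Iio x₀) = ↑(Finset.Iio x₀) by simp, Set.ncard_coe_finset,
        Nat.card_Iio] at hsetcard
      omega
    subst hx
    -- locate h a in the B-structure
    have himg : h '' Orbit (F PA) a = Orbit (F PB) (h a) := orbit_image hiso a
    have hBfin : (Orbit (F PB) (h a)).Finite := himg ▸ hfin.image h
    obtain ⟨y, j, hj, hha⟩ := finite_orbit_classify PB hPB hBfin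
    have hBncard : (Orbit (F PB) (h a)).ncard = x + 1 := by
      rw [← himg, Set.ncard_image_of_injective _ hiso.1.1, hncard]
    have hyx : y = x := by
      rw [hha, orbit_cyc PB hPB hj, cycSet_ncard] at hBncard
      omega
    subst hyx
    -- evaln convergence
    have hp : (Nat.Partrec.Code.evaln (2 * cst PB hPB y + 1) c y).isSome = true :=
      (blockAt_cst PB hPB y).2
    obtain ⟨v, hv⟩ := Option.isSome_iff_exists.mp hp
    have hha' : h a = 2 * (cst PB hPB y + j) + 1 := hha
    have h1 : v ∈ Nat.Partrec.Code.evaln (h a + 1) c y :=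
      Nat.Partrec.Code.evaln_mono (by omega) (Option.mem_def.mpr hv)
    obtain ⟨s, hs⟩ := hg y
    have h2 : g y ∈ Nat.Partrec.Code.evaln (max s (h a + 1)) c y :=
      Nat.Partrec.Code.evaln_mono (le_max_left _ _) (Option.mem_def.mpr hs)
    have h3 : v ∈ Nat.Partrec.Code.evaln (max s (h a + 1)) c y :=
      Nat.Partrec.Code.evaln_mono (le_max_right _ _) h1
    have hvg : v = g y := Option.mem_unique h3 h2
    rw [← hvg]
    exact Option.mem_def.mp h1
end

section
/- Let c : Nat.Partrec.Code and g : ℕ → ℕ satisfy: for every x : ℕ there is s : ℕ with Nat.Partrec.Code.evaln s c x = some (g x). Then there exists an injective primitive recursive function f_B : ℕ → ℕ with at least one infinite orbit and infinitely many finite orbits, any two distinct finite orbits having different cardinalities, such that for every x : ℕ and every b : ℕ whose orbit O_{f_B}(b) is finite and such that exactly x finite orbits of f_B have cardinality strictly smaller than that of O_{f_B}(b), one has Nat.Partrec.Code.evaln (b + 1) c x = some (g x). (The x-th finite orbit of the punctual structure appears only after g(x) has converged.) -/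
namespace PunctualCopyAux

open Nat.Partrec.Code

/-- `Q c x p` : the computation of `c` on `x` has converged within `p+1` steps. -/
def Q (c : Nat.Partrec.Code) (x p : ℕ) : Bool := (evaln (p + 1) c x).isSome

/-- Least `p` such that `Q c x p` (junk if none). -/
noncomputable def u (c : Nat.Partrec.Code) (x : ℕ) : ℕ := sInf {p | Q c x p = true}

/-- Start position of round `x`. -/
noncomputable def start (c : Nat.Partrec.Code) : ℕ → ℕ
  | 0 => 0
  | x + 1 => max (start c x + 1) (u c x) + x + 1

/-- Start position of the `x`-th cycle. -/
noncomputable def w (c : Nat.Partrec.Code) (x : ℕ) : ℕ := max (start c x + 1) (u c x)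

/-- Transition of the state machine; state `(x, d)` at position `n` means: we are in
round `x`; `d = 0` means waiting (before the cycle of round `x`), `d = i+1` means
`n` is the `i`-th element of the cycle of round `x`. -/
def step (c : Nat.Partrec.Code) (n : ℕ) (p : ℕ × ℕ) : ℕ × ℕ :=
  cond (decide (p.2 = 0)) (cond (Q c p.1 (n + 1)) (p.1, 1) (p.1, 0))
    (cond (decide (p.2 ≤ p.1)) (p.1, p.2 + 1) (p.1 + 1, 0))

def state (c : Nat.Partrec.Code) : ℕ → ℕ × ℕ :=
  fun n => Nat.rec (0, 0) (fun n ih => step c n ih) n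

/-- The punctual injection. -/
def fB (c : Nat.Partrec.Code) (n : ℕ) : ℕ :=
  cond (decide ((state c n).2 = 0))
    (cond (Q c (state c n).1 (n + 1)) (n + (state c n).1 + 2) (n + 1))
    (cond (decide ((state c n).2 ≤ (state c n).1)) (n + 1) (n - (state c n).1))

section

variable {c : Nat.Partrec.Code}

/-! ### Primitive recursiveness -/

theorem primrec_Q : Primrec₂ (Q c) := by
  have h : Primrec fun p : ℕ × ℕ => ((p.2 + 1, c), p.1) :=
    ((Primrec.succ.comp Primrec.snd).pair (Primrec.const c)).pair Primrec.fst
  exact (Primrec.option_isSome.comp (primrec_evaln.comp h)).to₂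

theorem primrec_step : Primrec₂ (step c) := by
  have h1 : Primrec fun a : ℕ × ℕ × ℕ => decide (a.2.2 = 0) :=
    (Primrec.eq.comp (Primrec.snd.comp Primrec.snd) (Primrec.const 0)).decide
  have h2 : Primrec fun a : ℕ × ℕ × ℕ =>
      cond (Q c a.2.1 (a.1 + 1)) ((a.2.1, 1) : ℕ × ℕ) (a.2.1, 0) :=
    Primrec.cond (primrec_Q.comp (Primrec.fst.comp Primrec.snd) (Primrec.succ.comp Primrec.fst))
      ((Primrec.fst.comp Primrec.snd).pair (Primrec.const 1))
      ((Primrec.fst.comp Primrec.snd).pair (Primrec.const 0))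
  have h3 : Primrec fun a : ℕ × ℕ × ℕ =>
      cond (decide (a.2.2 ≤ a.2.1)) ((a.2.1, a.2.2 + 1) : ℕ × ℕ) (a.2.1 + 1, 0) :=
    Primrec.cond (Primrec.nat_le.comp (Primrec.snd.comp Primrec.snd)
        (Primrec.fst.comp Primrec.snd)).decide
      ((Primrec.fst.comp Primrec.snd).pair (Primrec.succ.comp (Primrec.snd.comp Primrec.snd)))
      ((Primrec.succ.comp (Primrec.fst.comp Primrec.snd)).pair (Primrec.const 0))
  exact (Primrec.cond h1 h2 h3).to₂

theorem primrec_state : Primrec (state c) :=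
  Primrec.nat_rec₁ (0, 0) primrec_step

theorem primrec_fB : Primrec (fB c) := by
  have hs := primrec_state (c := c)
  have h1 : Primrec fun n : ℕ => decide ((state c n).2 = 0) :=
    (Primrec.eq.comp (Primrec.snd.comp hs) (Primrec.const 0)).decide
  have h2 : Primrec fun n : ℕ =>
      cond (Q c (state c n).1 (n + 1)) (n + (state c n).1 + 2) (n + 1) :=
    Primrec.cond (primrec_Q.comp (Primrec.fst.comp hs) Primrec.succ)
      (Primrec.succ.comp (Primrec.succ.comp
        (Primrec.nat_add.comp Primrec.id (Primrec.fst.comp hs))))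
      Primrec.succ
  have h3 : Primrec fun n : ℕ =>
      cond (decide ((state c n).2 ≤ (state c n).1)) (n + 1) (n - (state c n).1) :=
    Primrec.cond (Primrec.nat_le.comp (Primrec.snd.comp hs) (Primrec.fst.comp hs)).decide
      Primrec.succ (Primrec.nat_sub.comp Primrec.id (Primrec.fst.comp hs))
  exact Primrec.cond h1 h2 h3

/-! ### Basic facts about `Q`, `u`, `w`, `start` -/

theorem Q_mono {x p q : ℕ} (hpq : p ≤ q) (h : Q c x p = true) : Q c x q = true := by
  unfold Q at h ⊢
  rw [Option.isSome_iff_exists] at h ⊢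
  obtain ⟨v, hv⟩ := h
  exact ⟨v, evaln_mono (Nat.succ_le_succ hpq) hv⟩

variable (hQ : ∀ x, ∃ p, Q c x p = true)
include hQ

theorem Q_u (x : ℕ) : Q c x (u c x) = true :=
  Nat.sInf_mem (s := {p | Q c x p = true}) (hQ x)

omit hQ in
theorem u_le {x p : ℕ} (h : Q c x p = true) : u c x ≤ p := Nat.sInf_le h

theorem Q_w (x : ℕ) : Q c x (w c x) = true :=
  Q_mono (le_max_right _ _) (Q_u hQ x)

omit hQ in
theorem start_lt_w (x : ℕ) : start c x < w c x :=
  lt_of_lt_of_le (Nat.lt_succ_self _) (le_max_left _ _)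

omit hQ in
theorem start_succ (x : ℕ) : start c (x + 1) = w c x + x + 1 := rfl

omit hQ in
theorem w_add_lt (x : ℕ) : w c x + x < start c (x + 1) := by
  rw [start_succ]; omega

omit hQ in
theorem start_strictMono : StrictMono (start c) := by
  apply strictMono_nat_of_lt_succ
  intro x
  have h1 := start_lt_w (c := c) x
  have h2 := w_add_lt (c := c) x
  omega

omit hQ in
theorem round_eq {x y n : ℕ} (hx1 : start c x ≤ n) (hx2 : n < start c (x + 1))
    (hy1 : start c y ≤ n) (hy2 : n < start c (y + 1)) : x = y := by
  rcases lt_trichotomy x y with h | h | h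
  · exfalso
    have := (start_strictMono (c := c)).monotone (show x + 1 ≤ y from h)
    omega
  · exact h
  · exfalso
    have := (start_strictMono (c := c)).monotone (show y + 1 ≤ x from h)
    omega

/-! ### State invariant -/

omit hQ in
/-- Meaning of state `(x, d)` at position `n`. -/
def Spec (c : Nat.Partrec.Code) (n x d : ℕ) : Prop :=
  (start c x ≤ n ∧ n < w c x ∧ d = 0) ∨
    (w c x ≤ n ∧ n ≤ w c x + x ∧ d = n - w c x + 1)

omit hQ in
theorem Spec.round {n x d : ℕ} (h : Spec c n x d) :
    start c x ≤ n ∧ n < start c (x + 1) := by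
  have h1 := start_lt_w (c := c) x
  have h2 := w_add_lt (c := c) x
  rcases h with ⟨ha, hb, _⟩ | ⟨ha, hb, _⟩ <;> omega

omit hQ in
theorem Spec.unique {n x d x' d' : ℕ} (h : Spec c n x d) (h' : Spec c n x' d') :
    x = x' ∧ d = d' := by
  obtain ⟨ha, hb⟩ := h.round
  obtain ⟨ha', hb'⟩ := h'.round
  have hxx : x = x' := round_eq ha hb ha' hb'
  subst hxx
  refine ⟨rfl, ?_⟩
  rcases h with ⟨_, hb, rfl⟩ | ⟨_, _, rfl⟩ <;>
    rcases h' with ⟨_, hb', rfl⟩ | ⟨_, _, rfl⟩ <;> omega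

theorem state_spec : ∀ n, Spec c n (state c n).1 (state c n).2 := by
  intro n
  induction n with
  | zero =>
    left
    refine ⟨le_refl _, ?_, rfl⟩
    have := start_lt_w (c := c) 0
    simpa [start, state] using this
  | succ n ih =>
    have hstep : state c (n + 1) = step c n (state c n) := rfl
    set x := (state c n).1 with hx
    set d := (state c n).2 with hd
    rcases ih with ⟨h1, h2, h3⟩ | ⟨h1, h2, h3⟩
    · -- waiting at n
      rw [hstep]
      unfold step
      rw [← hx, ← hd, h3]
      simp only [decide_true, cond_true]
      cases hq : Q c x (n + 1) with
      | true =>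
        -- n+1 = w c x
        have hw1 : w c x ≤ n + 1 := by
          have hu := u_le (c := c) hq
          have : start c x + 1 ≤ n + 1 := by omega
          exact max_le this hu
        have hw2 : n + 1 = w c x := le_antisymm h2 hw1
        simp only [cond_true]
        right
        refine ⟨le_of_eq hw2.symm, by omega, by omega⟩
      | false =>
        have hne : n + 1 ≠ w c x := by
          intro he
          rw [he] at hq
          rw [Q_w hQ x] at hq
          exact Bool.noConfusion hq
        simp only [cond_false]
        left
        exact ⟨le_trans h1 (Nat.le_succ n), by omega, rfl⟩
    · -- in cycle at n
      rw [hstep]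
      unfold step
      rw [← hx, ← hd, h3]
      have h30 : n - w c x + 1 ≠ 0 := by omega
      simp only [h30, decide_false, cond_false]
      by_cases hle : n - w c x + 1 ≤ x
      · simp only [hle, decide_true, cond_true]
        right
        refine ⟨by omega, by omega, by omega⟩
      · simp only [hle, decide_false, cond_false]
        -- n = w c x + x, next round starts
        have hn : n = w c x + x := by omega
        left
        have hs := start_succ (c := c) x
        have hlt := start_lt_w (c := c) (x + 1)
        exact ⟨by omega, by omega, rfl⟩

theorem state_eq {n x d : ℕ} (h : Spec c n x d) : state c n = (x, d) := by
  have hs := state_spec hQ n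
  obtain ⟨h1, h2⟩ := Spec.unique hs h
  rw [Prod.ext_iff]
  exact ⟨h1, h2⟩

/-! ### Values of `fB` -/

theorem fB_waiting_step {x n : ℕ} (h1 : start c x ≤ n) (h2 : n + 1 < w c x) :
    fB c n = n + 1 := by
  have hst : state c n = (x, 0) := state_eq hQ (Or.inl ⟨h1, by omega, rfl⟩)
  have hq : Q c x (n + 1) = false := by
    cases hqv : Q c x (n + 1) with
    | true =>
      exfalso
      have hu := u_le (c := c) hqv
      have : w c x ≤ n + 1 := max_le (by omega) hu
      omega
    | false => rfl
  unfold fB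
  rw [hst]
  simp [hq]

theorem fB_waiting_last {x n : ℕ} (h1 : start c x ≤ n) (h2 : n + 1 = w c x) :
    fB c n = w c x + x + 1 := by
  have hst : state c n = (x, 0) := state_eq hQ (Or.inl ⟨h1, by omega, rfl⟩)
  have hq : Q c x (n + 1) = true := by rw [h2]; exact Q_w hQ x
  unfold fB
  rw [hst]
  simp [hq]
  omega

theorem fB_cycle_step {x n : ℕ} (h1 : w c x ≤ n) (h2 : n < w c x + x) :
    fB c n = n + 1 := by
  have hst : state c n = (x, n - w c x + 1) := state_eq hQ (Or.inr ⟨h1, by omega, rfl⟩)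
  have hne : n - w c x + 1 ≠ 0 := by omega
  have hle : n - w c x + 1 ≤ x := by omega
  unfold fB
  rw [hst]
  simp [hne, hle]

theorem fB_cycle_last (x : ℕ) : fB c (w c x + x) = w c x := by
  have hst : state c (w c x + x) = (x, x + 1) :=
    state_eq hQ (Or.inr ⟨by omega, le_refl _, by omega⟩)
  have hne : x + 1 ≠ 0 := by omega
  have hle : ¬ (x + 1 ≤ x) := by omega
  unfold fB
  rw [hst]
  simp [hne, hle]

/-! ### Waiting and cycle positions -/

omit hQ in
def Waiting (c : Nat.Partrec.Code) (n : ℕ) : Prop := ∃ x, start c x ≤ n ∧ n < w c x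

omit hQ in
def InCycle (c : Nat.Partrec.Code) (x n : ℕ) : Prop := w c x ≤ n ∧ n ≤ w c x + x

theorem cover (n : ℕ) : Waiting c n ∨ ∃ x, InCycle c x n := by
  rcases state_spec hQ n with ⟨h1, h2, _⟩ | ⟨h1, h2, _⟩
  · exact Or.inl ⟨(state c n).1, h1, h2⟩
  · exact Or.inr ⟨(state c n).1, h1, h2⟩

omit hQ in
theorem waiting_spec {x n : ℕ} (h1 : start c x ≤ n) (h2 : n < w c x) : Spec c n x 0 :=
  Or.inl ⟨h1, h2, rfl⟩

omit hQ in
theorem cycle_spec {x n : ℕ} (h : InCycle c x n) : Spec c n x (n - w c x + 1) :=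
  Or.inr ⟨h.1, h.2, rfl⟩

omit hQ in
theorem not_waiting_inCycle {x n : ℕ} (hw : Waiting c n) (hc : InCycle c x n) : False := by
  obtain ⟨y, h1, h2⟩ := hw
  obtain ⟨-, h⟩ := Spec.unique (waiting_spec h1 h2) (cycle_spec hc)
  omega

omit hQ in
theorem inCycle_unique {x y n : ℕ} (hx : InCycle c x n) (hy : InCycle c y n) : x = y :=
  (Spec.unique (cycle_spec hx) (cycle_spec hy)).1

theorem fB_waiting {n : ℕ} (h : Waiting c n) : n < fB c n ∧ Waiting c (fB c n) := by
  obtain ⟨x, h1, h2⟩ := h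
  rcases Nat.lt_or_ge (n + 1) (w c x) with hlt | hge
  · rw [fB_waiting_step hQ h1 hlt]
    exact ⟨Nat.lt_succ_self n, x, by omega, hlt⟩
  · have heq : n + 1 = w c x := by omega
    rw [fB_waiting_last hQ h1 heq]
    have hs := start_succ (c := c) x
    have hl := start_lt_w (c := c) (x + 1)
    exact ⟨by omega, x + 1, by omega, by omega⟩

theorem fB_inCycle {x n : ℕ} (h : InCycle c x n) : InCycle c x (fB c n) := by
  obtain ⟨ha, hb⟩ := h
  rcases Nat.lt_or_ge n (w c x + x) with hlt | hge
  · rw [fB_cycle_step hQ ha hlt]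
    exact ⟨by omega, by omega⟩
  · have heq : n = w c x + x := by omega
    rw [heq, fB_cycle_last hQ x]
    exact ⟨le_refl _, by omega⟩

/-! ### Injectivity -/

theorem fB_injective : Function.Injective (fB c) := by
  intro m n h
  rcases cover hQ m with ⟨x, hm1, hm2⟩ | ⟨x, hmx⟩ <;>
    rcases cover hQ n with ⟨y, hn1, hn2⟩ | ⟨y, hny⟩
  · -- both waiting
    rcases Nat.lt_or_ge (m + 1) (w c x) with hm3 | hm3 <;>
      rcases Nat.lt_or_ge (n + 1) (w c y) with hn3 | hn3
    · rw [fB_waiting_step hQ hm1 hm3, fB_waiting_step hQ hn1 hn3] at h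
      omega
    · have hne : n + 1 = w c y := by omega
      rw [fB_waiting_step hQ hm1 hm3, fB_waiting_last hQ hn1 hne] at h
      -- m + 1 = start c (y+1), but m + 1 is strictly inside round x
      exfalso
      have hsy : start c (y + 1) = w c y + y + 1 := start_succ y
      have ha1 := w_add_lt (c := c) x
      have ha2 := start_lt_w (c := c) (y + 1)
      have ha3 := w_add_lt (c := c) (y + 1)
      have hrx : start c x ≤ m + 1 ∧ m + 1 < start c (x + 1) := by omega
      have hry : start c (y + 1) ≤ m + 1 ∧ m + 1 < start c (y + 1 + 1) := by omega
      have hxy : x = y + 1 := round_eq hrx.1 hrx.2 hry.1 hry.2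
      rw [hxy] at hm1
      omega
    · have hme : m + 1 = w c x := by omega
      rw [fB_waiting_last hQ hm1 hme, fB_waiting_step hQ hn1 hn3] at h
      exfalso
      have hsx : start c (x + 1) = w c x + x + 1 := start_succ x
      have ha1 := w_add_lt (c := c) y
      have ha2 := start_lt_w (c := c) (x + 1)
      have ha3 := w_add_lt (c := c) (x + 1)
      have hry : start c y ≤ n + 1 ∧ n + 1 < start c (y + 1) := by omega
      have hrx : start c (x + 1) ≤ n + 1 ∧ n + 1 < start c (x + 1 + 1) := by omega
      have hxy : y = x + 1 := round_eq hry.1 hry.2 hrx.1 hrx.2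
      rw [hxy] at hn1
      omega
    · have hme : m + 1 = w c x := by omega
      have hne : n + 1 = w c y := by omega
      rw [fB_waiting_last hQ hm1 hme, fB_waiting_last hQ hn1 hne] at h
      have hxy : x = y := by
        have : start c (x + 1) = start c (y + 1) := by
          rw [start_succ, start_succ]; omega
        have := start_strictMono (c := c).injective this
        omega
      omega
  · -- m waiting, n cycle
    exfalso
    have h1 := (fB_waiting hQ ⟨x, hm1, hm2⟩).2
    have h2 := fB_inCycle hQ hny
    rw [h] at h1
    exact not_waiting_inCycle h1 h2
  · exfalso
    have h1 := (fB_waiting hQ ⟨y, hn1, hn2⟩).2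
    have h2 := fB_inCycle hQ hmx
    rw [← h] at h1
    exact not_waiting_inCycle h1 h2
  · -- both cycles
    have hxy : x = y := by
      have h1 := fB_inCycle hQ hmx
      have h2 := fB_inCycle hQ hny
      rw [h] at h1
      exact inCycle_unique h1 h2
    subst hxy
    obtain ⟨hm1, hm2⟩ := hmx
    obtain ⟨hn1, hn2⟩ := hny
    rcases Nat.lt_or_ge m (w c x + x) with hm3 | hm3 <;>
      rcases Nat.lt_or_ge n (w c x + x) with hn3 | hn3
    · rw [fB_cycle_step hQ hm1 hm3, fB_cycle_step hQ hn1 hn3] at h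
      omega
    · have hne : n = w c x + x := by omega
      rw [fB_cycle_step hQ hm1 hm3, hne, fB_cycle_last hQ x] at h
      omega
    · have hme : m = w c x + x := by omega
      rw [hme, fB_cycle_last hQ x, fB_cycle_step hQ hn1 hn3] at h
      omega
    · omega

/-! ### Orbits -/

theorem iterate_waiting {a : ℕ} (h : Waiting c a) : ∀ k, Waiting c ((fB c)^[k] a) := by
  intro k
  induction k with
  | zero => exact h
  | succ k ih =>
    rw [Function.iterate_succ_apply']
    exact (fB_waiting hQ ih).2

theorem iterate_strictMono {a : ℕ} (h : Waiting c a) :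
    StrictMono fun k => (fB c)^[k] a := by
  apply strictMono_nat_of_lt_succ
  intro k
  simp only [Function.iterate_succ_apply']
  exact (fB_waiting hQ (iterate_waiting hQ h k)).1

theorem orbit_infinite {a : ℕ} (h : Waiting c a) : (Orbit (fB c) a).Infinite :=
  Set.infinite_of_injective_forall_mem (f := fun k => (fB c)^[k] a)
    (iterate_strictMono hQ h).injective (fun k => ⟨k, 0, rfl⟩)

theorem iterate_inCycle {x v : ℕ} (h : InCycle c x v) :
    ∀ k, InCycle c x ((fB c)^[k] v) := by
  intro k
  induction k with
  | zero => exact h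
  | succ k ih =>
    rw [Function.iterate_succ_apply']
    exact fB_inCycle hQ ih

theorem pre_inCycle {x v : ℕ} (h : InCycle c x (fB c v)) : InCycle c x v := by
  rcases cover hQ v with hw | ⟨y, hy⟩
  · exact absurd h (not_waiting_inCycle (fB_waiting hQ hw).2)
  · have h2 := fB_inCycle hQ hy
    have hxy := inCycle_unique h h2
    rwa [hxy]

theorem pre_iterate_inCycle {x : ℕ} :
    ∀ k v, InCycle c x ((fB c)^[k] v) → InCycle c x v := by
  intro k
  induction k with
  | zero => exact fun v h => h
  | succ k ih =>
    intro v h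
    rw [Function.iterate_succ_apply] at h
    exact pre_inCycle hQ (ih _ h)

theorem iterate_w {x : ℕ} : ∀ i, i ≤ x → (fB c)^[i] (w c x) = w c x + i := by
  intro i
  induction i with
  | zero => simp
  | succ i ih =>
    intro h
    rw [Function.iterate_succ_apply', ih (by omega),
      fB_cycle_step hQ (x := x) (by omega) (by omega)]
    omega

theorem iterate_cycle_ret (x : ℕ) : (fB c)^[x + 1] (w c x) = w c x := by
  rw [Function.iterate_succ_apply', iterate_w hQ x (le_refl x), fB_cycle_last hQ x]

theorem cycle_reach {x b t : ℕ} (hb : InCycle c x b) (ht : InCycle c x t) :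
    ∃ k, (fB c)^[k] b = t := by
  obtain ⟨hb1, hb2⟩ := hb
  obtain ⟨ht1, ht2⟩ := ht
  have hib : b = w c x + (b - w c x) := by omega
  have hi : b - w c x ≤ x := by omega
  have hjt : t = w c x + (t - w c x) := by omega
  have hjx : t - w c x ≤ x := by omega
  refine ⟨(t - w c x) + (x + 1 - (b - w c x)), ?_⟩
  rw [Function.iterate_add_apply]
  have h1 : (fB c)^[x + 1 - (b - w c x)] b = w c x := by
    have e1 : (fB c)^[x + 1 - (b - w c x)] ((fB c)^[b - w c x] (w c x)) =
        (fB c)^[x + 1] (w c x) := by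
      rw [← Function.iterate_add_apply]
      congr 1
      omega
    rw [iterate_w hQ _ hi, ← hib] at e1
    rw [e1, iterate_cycle_ret hQ x]
  rw [h1, iterate_w hQ _ hjx, ← hjt]

theorem orbit_cycle {x b : ℕ} (hb : InCycle c x b) :
    Orbit (fB c) b = Set.Icc (w c x) (w c x + x) := by
  ext t
  simp only [Orbit, Set.mem_setOf_eq, Set.mem_Icc]
  constructor
  · rintro ⟨m, n, hmn⟩
    have h1 : InCycle c x ((fB c)^[m] b) := iterate_inCycle hQ hb m
    rw [hmn] at h1
    exact pre_iterate_inCycle hQ n t h1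
  · intro ht
    obtain ⟨k, hk⟩ := cycle_reach hQ hb ⟨ht.1, ht.2⟩
    exact ⟨k, 0, hk⟩

omit hQ in
theorem ncard_cycle (x : ℕ) : (Set.Icc (w c x) (w c x + x)).ncard = x + 1 := by
  rw [← Finset.coe_Icc, Set.ncard_coe_finset, Nat.card_Icc]
  omega

omit hQ in
theorem Icc_injective :
    Function.Injective fun x => (Set.Icc (w c x) (w c x + x) : Set ℕ) := by
  intro a b h
  have h2 := congrArg Set.ncard h
  simp only [ncard_cycle] at h2
  omega

theorem finite_orbit_cycle {b : ℕ} (h : (Orbit (fB c) b).Finite) :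
    ∃ x, InCycle c x b := by
  rcases cover hQ b with hw | hc
  · exact absurd h (orbit_infinite hQ hw)
  · exact hc

omit hQ in
theorem inCycle_w (x : ℕ) : InCycle c x (w c x) := ⟨le_refl _, by omega⟩

end

end PunctualCopyAux

theorem punctual_copy_delays_finite_orbits (c : Nat.Partrec.Code) (g : ℕ → ℕ)
    (hg : ∀ x : ℕ, ∃ s : ℕ, Nat.Partrec.Code.evaln s c x = some (g x)) :
    ∃ fB : ℕ → ℕ,
      Primrec fB ∧ Function.Injective fB ∧
      (∃ a : ℕ, (Orbit fB a).Infinite) ∧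
      {O : Set ℕ | (∃ a : ℕ, O = Orbit fB a) ∧ O.Finite}.Infinite ∧
      (∀ a b : ℕ, (Orbit fB a).Finite → (Orbit fB b).Finite →
        Orbit fB a ≠ Orbit fB b → (Orbit fB a).ncard ≠ (Orbit fB b).ncard) ∧
      (∀ x b : ℕ, (Orbit fB b).Finite →
        {O : Set ℕ | (∃ a : ℕ, O = Orbit fB a) ∧ O.Finite ∧
          O.ncard < (Orbit fB b).ncard}.Finite →
        {O : Set ℕ | (∃ a : ℕ, O = Orbit fB a) ∧ O.Finite ∧
          O.ncard < (Orbit fB b).ncard}.ncard = x →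
        Nat.Partrec.Code.evaln (b + 1) c x = some (g x)) := by
  open PunctualCopyAux in
  have hQ : ∀ x, ∃ p, PunctualCopyAux.Q c x p = true := by
    intro x
    obtain ⟨s, hs⟩ := hg x
    refine ⟨s, ?_⟩
    unfold PunctualCopyAux.Q
    rw [Option.isSome_iff_exists]
    exact ⟨g x, Nat.Partrec.Code.evaln_mono (Nat.le_succ s) hs⟩
  refine ⟨PunctualCopyAux.fB c, PunctualCopyAux.primrec_fB,
    PunctualCopyAux.fB_injective hQ, ?_, ?_, ?_, ?_⟩
  · -- infinite orbit of 0
    refine ⟨0, PunctualCopyAux.orbit_infinite hQ ⟨0, ?_, ?_⟩⟩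
    · simp [PunctualCopyAux.start]
    · simpa [PunctualCopyAux.start] using PunctualCopyAux.start_lt_w (c := c) 0
  · -- infinitely many finite orbits
    apply Set.infinite_of_injective_forall_mem
      (f := fun x : ℕ => (Set.Icc (PunctualCopyAux.w c x) (PunctualCopyAux.w c x + x) : Set ℕ))
    · exact PunctualCopyAux.Icc_injective
    · intro x
      exact ⟨⟨PunctualCopyAux.w c x,
        (PunctualCopyAux.orbit_cycle hQ (PunctualCopyAux.inCycle_w x)).symm⟩,
        Set.finite_Icc _ _⟩
  · -- distinct finite orbits have distinct cardinalities
    intro a b ha hb hne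
    obtain ⟨x, hx⟩ := PunctualCopyAux.finite_orbit_cycle hQ ha
    obtain ⟨y, hy⟩ := PunctualCopyAux.finite_orbit_cycle hQ hb
    rw [PunctualCopyAux.orbit_cycle hQ hx, PunctualCopyAux.orbit_cycle hQ hy] at hne ⊢
    rw [PunctualCopyAux.ncard_cycle, PunctualCopyAux.ncard_cycle]
    intro hc
    exact hne (by rw [show x = y by omega])
  · -- the delayed-convergence property
    intro x b hfin _ hcount
    obtain ⟨x0, hb⟩ := PunctualCopyAux.finite_orbit_cycle hQ hfin
    have hOb : Orbit (PunctualCopyAux.fB c) b =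
        Set.Icc (PunctualCopyAux.w c x0) (PunctualCopyAux.w c x0 + x0) :=
      PunctualCopyAux.orbit_cycle hQ hb
    have hnb : (Orbit (PunctualCopyAux.fB c) b).ncard = x0 + 1 := by
      rw [hOb, PunctualCopyAux.ncard_cycle]
    have hSet : {O : Set ℕ | (∃ a : ℕ, O = Orbit (PunctualCopyAux.fB c) a) ∧ O.Finite ∧
          O.ncard < (Orbit (PunctualCopyAux.fB c) b).ncard} =
        (fun y => (Set.Icc (PunctualCopyAux.w c y) (PunctualCopyAux.w c y + y) : Set ℕ)) ''
          Set.Iio x0 := by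
      ext O
      simp only [Set.mem_setOf_eq, Set.mem_image, Set.mem_Iio]
      constructor
      · rintro ⟨⟨a, rfl⟩, hfinO, hlt⟩
        obtain ⟨y, hy⟩ := PunctualCopyAux.finite_orbit_cycle hQ hfinO
        refine ⟨y, ?_, (PunctualCopyAux.orbit_cycle hQ hy).symm⟩
        rw [PunctualCopyAux.orbit_cycle hQ hy, PunctualCopyAux.ncard_cycle, hnb] at hlt
        omega
      · rintro ⟨y, hy, rfl⟩
        refine ⟨⟨PunctualCopyAux.w c y,
          (PunctualCopyAux.orbit_cycle hQ (PunctualCopyAux.inCycle_w y)).symm⟩,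
          Set.finite_Icc _ _, ?_⟩
        rw [PunctualCopyAux.ncard_cycle, hnb]
        omega
    rw [hSet, Set.ncard_image_of_injective _ PunctualCopyAux.Icc_injective] at hcount
    have hIio : (Set.Iio x0).ncard = x0 := by
      rw [← Finset.coe_Iio, Set.ncard_coe_finset, Nat.card_Iio]
    have hx : x = x0 := by rw [hIio] at hcount; omega
    subst hx
    have hqb : PunctualCopyAux.Q c x b = true :=
      PunctualCopyAux.Q_mono hb.1 (PunctualCopyAux.Q_w hQ x)
    unfold PunctualCopyAux.Q at hqb
    obtain ⟨v, hv⟩ := Option.isSome_iff_exists.1 hqb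
    have h1 : v ∈ Nat.Partrec.Code.eval c x :=
      Nat.Partrec.Code.evaln_sound (Option.mem_def.2 hv)
    obtain ⟨s, hs⟩ := hg x
    have h2 : g x ∈ Nat.Partrec.Code.eval c x :=
      Nat.Partrec.Code.evaln_sound (Option.mem_def.2 hs)
    rw [hv, Part.mem_unique h1 h2]
end

section
/- Let g : ℕ → ℕ and let g* : ℕ → ℕ → ℕ be primitive recursive (Primrec₂ g*) such that for every x there is s₀ with g* x s = g x for all s ≥ s₀ (g is the limit of the primitive recursive approximation g*). Then there exist injective primitive recursive functions f_A, f_B : ℕ → ℕ and an injective primitive recursive function a : ℕ → ℕ such that: every orbit of f_A and every orbit of f_B is an ω-chain and f_A has infinitely many orbits; (ℕ, f_A) and (ℕ, f_B) are isomorphic; the range of a is exactly the complement of the range of f_A; and for every isomorphism h from (ℕ, f_A) to (ℕ, f_B) and every x : ℕ, g* x (max { h (a i) | i ≤ x + 1 }) = g x. (Hard direction of PRCat(A) = Cone(Δ⁰₂) for injection structures consisting of infinitely many ω-chains: any isomorphism between the constructed copies explicitly recovers the Δ⁰₂ function g.) -/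
set_option maxHeartbeats 1000000

namespace PRC

/-- entry of a list with default 0 -/
def getE (l : List ℕ) (j : ℕ) : ℕ := l.getD j 0

variable (gs : ℕ → ℕ → ℕ)

/-- chain `j` needs service at stage `t` given state `l` -/
def needb (l : List ℕ) (t j : ℕ) : Bool :=
  (((List.range j).findIdx fun x =>
      !(gs x (Nat.pair 0 (getE l j)) == gs x (Nat.pair 0 t))) < j) ||
  (((List.range j).findIdx fun i => getE l j ≤ getE l i) < j)

/-- the chain acted on at stage `t`: least chain needing service, or `l.length` -/
def selN (l : List ℕ) (t : ℕ) : ℕ := (List.range l.length).findIdx (fun j => needb gs l t j)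

def step (l : List ℕ) (t : ℕ) : List ℕ :=
  if selN gs l t < l.length then
    (List.range l.length).map (fun i => if i = selN gs l t then t else getE l i)
  else l ++ [t]

/-- the state at the beginning of stage `t` -/
def bases : ℕ → List ℕ := Nat.rec [] (fun t ih => step gs ih t)

def target (t : ℕ) : ℕ :=
  if selN gs (bases gs t) t < (bases gs t).length then
    Nat.pair 0 (getE (bases gs t) (selN gs (bases gs t) t))
  else Nat.pair ((bases gs t).length + 1) 0

def fB (n : ℕ) : ℕ :=
  if n.unpair.1 = 0 then target gs n.unpair.2 else Nat.pair n.unpair.1 (n.unpair.2 + 1)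

variable {gs}

theorem getE_primrec : Primrec₂ getE := (Primrec.list_getD 0)

theorem needb_primrec (hgs : Primrec₂ gs) :
    Primrec₂ (fun (p : List ℕ × ℕ) (j : ℕ) => needb gs p.1 p.2 j) := by
  have hgE : Primrec fun (q : (List ℕ × ℕ) × ℕ) => getE q.1.1 q.2 :=
    getE_primrec.comp (Primrec.fst.comp Primrec.fst) Primrec.snd
  have h1 : Primrec fun (q : (List ℕ × ℕ) × ℕ) =>
      (List.range q.2).findIdx
        (fun x => !(gs x (Nat.pair 0 (getE q.1.1 q.2)) == gs x (Nat.pair 0 q.1.2))) := by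
    apply Primrec.list_findIdx (Primrec.list_range.comp Primrec.snd)
    have ha : Primrec fun (r : ((List ℕ × ℕ) × ℕ) × ℕ) =>
        gs r.2 (Nat.pair 0 (getE r.1.1.1 r.1.2)) :=
      hgs.comp Primrec.snd
        ((Primrec₂.natPair.comp (Primrec.const 0)
          (hgE.comp Primrec.fst)))
    have hb : Primrec fun (r : ((List ℕ × ℕ) × ℕ) × ℕ) =>
        gs r.2 (Nat.pair 0 r.1.1.2) :=
      hgs.comp Primrec.snd
        (Primrec₂.natPair.comp (Primrec.const 0)
          (Primrec.snd.comp (Primrec.fst.comp Primrec.fst)))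
    exact Primrec.to₂ (Primrec.not.comp (Primrec.beq.comp ha hb))
  have h2 : Primrec fun (q : (List ℕ × ℕ) × ℕ) =>
      (List.range q.2).findIdx (fun i => getE q.1.1 q.2 ≤ getE q.1.1 i) := by
    apply Primrec.list_findIdx (Primrec.list_range.comp Primrec.snd)
    have ha : Primrec fun (r : ((List ℕ × ℕ) × ℕ) × ℕ) => getE r.1.1.1 r.1.2 :=
      hgE.comp Primrec.fst
    have hb : Primrec fun (r : ((List ℕ × ℕ) × ℕ) × ℕ) => getE r.1.1.1 r.2 :=
      getE_primrec.comp (Primrec.fst.comp (Primrec.fst.comp Primrec.fst)) Primrec.snd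
    exact Primrec.to₂ (Primrec.nat_le.comp ha hb).decide
  exact Primrec.to₂
    (Primrec.or.comp (Primrec.nat_lt.comp h1 Primrec.snd).decide (Primrec.nat_lt.comp h2 Primrec.snd).decide)

theorem selN_primrec (hgs : Primrec₂ gs) :
    Primrec fun (p : List ℕ × ℕ) => selN gs p.1 p.2 :=
  Primrec.list_findIdx
    (Primrec.list_range.comp (Primrec.list_length.comp Primrec.fst))
    (needb_primrec hgs)

theorem step_primrec (hgs : Primrec₂ gs) :
    Primrec fun (p : List ℕ × ℕ) => step gs p.1 p.2 := by
  have hsel : Primrec fun (p : List ℕ × ℕ) => selN gs p.1 p.2 := selN_primrec hgs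
  have hlen : Primrec fun (p : List ℕ × ℕ) => p.1.length :=
    Primrec.list_length.comp Primrec.fst
  refine Primrec.ite (Primrec.nat_lt.comp hsel hlen) ?_ ?_
  · apply Primrec.list_map (Primrec.list_range.comp hlen)
    have he : Primrec fun (q : (List ℕ × ℕ) × ℕ) => q.2 := Primrec.snd
    have hs2 : Primrec fun (q : (List ℕ × ℕ) × ℕ) => selN gs q.1.1 q.1.2 :=
      hsel.comp Primrec.fst
    have ht : Primrec fun (q : (List ℕ × ℕ) × ℕ) => q.1.2 :=
      Primrec.snd.comp Primrec.fst
    have hg : Primrec fun (q : (List ℕ × ℕ) × ℕ) => getE q.1.1 q.2 :=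
      getE_primrec.comp (Primrec.fst.comp Primrec.fst) Primrec.snd
    exact Primrec.to₂ (Primrec.ite (Primrec.eq.comp he hs2) ht hg)
  · exact Primrec.list_append.comp Primrec.fst
      ((Primrec.list_cons.comp Primrec.snd (Primrec.const [])))

theorem bases_primrec (hgs : Primrec₂ gs) : Primrec (bases gs) := by
  unfold bases
  exact Primrec.nat_rec₁ []
    (Primrec.to₂ ((step_primrec hgs).comp (Primrec.pair Primrec.snd Primrec.fst)))

theorem target_primrec (hgs : Primrec₂ gs) : Primrec (target gs) := by
  have hb := bases_primrec hgs
  have hsel : Primrec fun t => selN gs (bases gs t) t :=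
    (selN_primrec hgs).comp (Primrec.pair hb Primrec.id)
  have hlen : Primrec fun t => (bases gs t).length := Primrec.list_length.comp hb
  refine Primrec.ite (Primrec.nat_lt.comp hsel hlen) ?_ ?_
  · exact Primrec₂.natPair.comp (Primrec.const 0) (getE_primrec.comp hb hsel)
  · exact Primrec₂.natPair.comp (Primrec.succ.comp hlen) (Primrec.const 0)

theorem fB_primrec (hgs : Primrec₂ gs) : Primrec (fB gs) := by
  have hu1 : Primrec fun n : ℕ => n.unpair.1 := Primrec.fst.comp Primrec.unpair
  have hu2 : Primrec fun n : ℕ => n.unpair.2 := Primrec.snd.comp Primrec.unpair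
  exact Primrec.ite (Primrec.eq.comp hu1 (Primrec.const 0))
    ((target_primrec hgs).comp hu2)
    (Primrec₂.natPair.comp hu1 (Primrec.succ.comp hu2))

/-! ### basic findIdx helpers -/

theorem findIdx_range_lt {p : ℕ → Bool} {j : ℕ} :
    (List.range j).findIdx p < j ↔ ∃ x < j, p x = true := by
  constructor
  · intro h
    have h' : (List.range j).findIdx p < (List.range j).length := by simpa using h
    refine ⟨(List.range j).findIdx p, h, ?_⟩
    have := List.findIdx_getElem (w := h')
    simpa using this
  · rintro ⟨x, hx, hp⟩
    have : (List.range j).findIdx p < (List.range j).length :=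
      List.findIdx_lt_length_of_exists ⟨x, by simpa using hx, hp⟩
    simpa using this

theorem findIdx_range_min {p : ℕ → Bool} {j i : ℕ} (h : i < (List.range j).findIdx p)
    (hij : i < j) : p i = false := by
  have := List.not_of_lt_findIdx (xs := List.range j) (i := i) (by simpa using h)
  simpa [hij] using this

/-! ### basic structural lemmas -/

theorem needb_iff {l : List ℕ} {t j : ℕ} :
    needb gs l t j = true ↔
      (∃ x < j, gs x (Nat.pair 0 (getE l j)) ≠ gs x (Nat.pair 0 t)) ∨
      (∃ i < j, getE l j ≤ getE l i) := by
  simp only [needb, Bool.or_eq_true, findIdx_range_lt, bne_iff_ne, ne_eq,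
    decide_eq_true_eq, Bool.not_eq_true', beq_eq_false_iff_ne]

theorem selN_le {l : List ℕ} {t : ℕ} : selN gs l t ≤ l.length := by
  simpa [selN] using List.findIdx_le_length (p := fun j => needb gs l t j) (xs := List.range l.length)

theorem needb_selN {l : List ℕ} {t : ℕ} (h : selN gs l t < l.length) :
    needb gs l t (selN gs l t) = true := by
  have := (findIdx_range_lt (p := fun j => needb gs l t j) (j := l.length)).1 h
  obtain ⟨x, hx, hp⟩ := this
  -- x is the findIdx itself
  have h' : (List.range l.length).findIdx (fun j => needb gs l t j) <
      (List.range l.length).length := by simpa [selN] using h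
  have := List.findIdx_getElem (w := h')
  simpa [selN] using this

theorem not_needb_of_lt_selN {l : List ℕ} {t j : ℕ} (h : j < selN gs l t) (hj : j < l.length) :
    needb gs l t j = false :=
  findIdx_range_min h hj

theorem bases_succ (t : ℕ) : bases gs (t + 1) = step gs (bases gs t) t := rfl

/-- the index acted on at stage `t` -/
def actC (gs : ℕ → ℕ → ℕ) (t : ℕ) : ℕ := selN gs (bases gs t) t

theorem getE_bases_succ (t j : ℕ) :
    getE (bases gs (t + 1)) j = if j = actC gs t then t else getE (bases gs t) j := by
  rw [bases_succ]
  unfold step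
  by_cases h : selN gs (bases gs t) t < (bases gs t).length
  · simp only [h, if_true]
    by_cases hj : j < (bases gs t).length
    · have : getE ((List.range (bases gs t).length).map
          (fun i => if i = selN gs (bases gs t) t then t else getE (bases gs t) i)) j
          = if j = selN gs (bases gs t) t then t else getE (bases gs t) j := by
        unfold getE
        rw [List.getD_eq_getElem?_getD]
        rw [List.getElem?_map]
        simp [List.getElem?_range hj]
      exact this
    · have hj' : (bases gs t).length ≤ j := Nat.le_of_not_lt hj
      have h1 : getE ((List.range (bases gs t).length).map
          (fun i => if i = selN gs (bases gs t) t then t else getE (bases gs t) i)) j = 0 := by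
        unfold getE
        rw [List.getD_eq_getElem?_getD]
        rw [List.getElem?_eq_none (by simpa using hj')]
        rfl
      have h2 : getE (bases gs t) j = 0 := by
        unfold getE
        rw [List.getD_eq_getElem?_getD]
        rw [List.getElem?_eq_none (by simpa using hj')]
        rfl
      have hne : j ≠ selN gs (bases gs t) t := by
        intro hEq; rw [hEq] at hj; exact hj h
      simp [h1, h2, hne, actC]
  · -- creation case : selN = length
    have hsel : selN gs (bases gs t) t = (bases gs t).length :=
      Nat.le_antisymm selN_le (Nat.le_of_not_lt h)
    simp only [h, if_false]
    unfold getE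
    by_cases hj : j < (bases gs t).length
    · have hne : j ≠ actC gs t := by simp [actC, hsel]; omega
      rw [List.getD_eq_getElem?_getD, List.getElem?_append_left hj]
      simp [hne, getE, List.getD_eq_getElem?_getD]
    · by_cases hj2 : j = (bases gs t).length
      · subst hj2
        simp [actC, hsel, List.getD_eq_getElem?_getD]
      · have hgt : (bases gs t).length < j := by omega
        have hne : j ≠ actC gs t := by simp [actC, hsel]; omega
        rw [List.getD_eq_getElem?_getD, List.getElem?_eq_none (by simp; omega)]
        rw [List.getD_eq_getElem?_getD, List.getElem?_eq_none (by omega)]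
        simp [hne]

theorem length_bases_succ (t : ℕ) :
    (bases gs (t + 1)).length =
      if selN gs (bases gs t) t < (bases gs t).length then (bases gs t).length
      else (bases gs t).length + 1 := by
  rw [bases_succ]; unfold step
  by_cases h : selN gs (bases gs t) t < (bases gs t).length <;> simp [h]

theorem length_bases_mono : Monotone fun t => (bases gs t).length := by
  apply monotone_nat_of_le_succ
  intro t
  rw [length_bases_succ]
  split <;> omega

theorem actC_lt_length_succ (t : ℕ) : actC gs t < (bases gs (t + 1)).length := by
  rw [length_bases_succ]
  have := selN_le (gs := gs) (l := bases gs t) (t := t)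
  unfold actC
  split <;> omega

theorem le_pair0 (t : ℕ) : t ≤ Nat.pair 0 t := by
  unfold Nat.pair
  split
  · nlinarith
  · omega

theorem getE_oob {l : List ℕ} {j : ℕ} (h : l.length ≤ j) : getE l j = 0 := by
  unfold getE
  rw [List.getD_eq_getElem?_getD, List.getElem?_eq_none h]
  rfl

/-- selN picks the least needing index -/
theorem selN_eq_of {l : List ℕ} {t j : ℕ} (hj : j < l.length)
    (hneed : needb gs l t j = true) (hmin : ∀ i < j, needb gs l t i = false) :
    selN gs l t = j := by
  have hlt : selN gs l t < l.length := by
    unfold selN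
    have : (List.range l.length).findIdx (fun j => needb gs l t j) <
        (List.range l.length).length :=
      List.findIdx_lt_length_of_exists ⟨j, by simpa using hj, hneed⟩
    simpa using this
  rcases Nat.lt_trichotomy (selN gs l t) j with h | h | h
  · have := hmin _ h
    rw [needb_selN hlt] at this
    exact absurd this (by simp)
  · exact h
  · have := not_needb_of_lt_selN h hj
    rw [hneed] at this
    exact absurd this (by simp)

/-- each entry records the stage at which it was set, and stays until changed -/
theorem live :
    ∀ t {j s : ℕ}, j < (bases gs t).length → getE (bases gs t) j = s →
      s < t ∧ actC gs s = j ∧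
        ∀ u, s < u → u ≤ t → j < (bases gs u).length ∧ getE (bases gs u) j = s := by
  intro t
  induction t with
  | zero => intro j s hj _; simp [bases] at hj
  | succ t ih =>
    intro j s hj hE
    rw [getE_bases_succ] at hE
    by_cases hact : j = actC gs t
    · rw [if_pos hact] at hE
      subst hE
      refine ⟨Nat.lt_succ_self t, hact.symm, ?_⟩
      intro u hu hu'
      have : u = t + 1 := by omega
      subst this
      refine ⟨hj, ?_⟩
      rw [getE_bases_succ, if_pos hact]
    · rw [if_neg hact] at hE
      have hjt : j < (bases gs t).length := by
        by_contra hcon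
        push_neg at hcon
        have h1 := length_bases_succ (gs := gs) t
        by_cases hc : selN gs (bases gs t) t < (bases gs t).length
        · rw [if_pos hc] at h1; omega
        · rw [if_neg hc] at h1
          have : j = (bases gs t).length := by omega
          have hsel : selN gs (bases gs t) t = (bases gs t).length :=
            Nat.le_antisymm selN_le (Nat.le_of_not_lt hc)
          exact hact (by rw [this, actC, hsel])
      obtain ⟨h1, h2, h3⟩ := ih hjt hE
      refine ⟨Nat.lt_succ_of_lt h1, h2, ?_⟩
      intro u hu hu'
      by_cases huc : u ≤ t
      · exact h3 u hu huc
      · have : u = t + 1 := by omega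
        subst this
        refine ⟨hj, ?_⟩
        rw [getE_bases_succ, if_neg hact]
        exact hE

theorem getE_lt_self {t j : ℕ} (hj : j < (bases gs t).length) : getE (bases gs t) j < t :=
  (live t hj rfl).1

section Limit

theorem settle {g : ℕ → ℕ} (hlim : ∀ x : ℕ, ∃ s₀ : ℕ, ∀ s ≥ s₀, gs x s = g x) (K : ℕ) :
    ∃ T, ∀ t, T ≤ t →
      K ≤ (bases gs t).length ∧
      (∀ j < K, getE (bases gs t) j = getE (bases gs T) j) ∧
      (∀ j < K, needb gs (bases gs t) t j = false) := by
  induction K with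
  | zero => exact ⟨0, fun t _ => ⟨Nat.zero_le _, by omega, by omega⟩⟩
  | succ K ih =>
    obtain ⟨T₀, hT₀⟩ := ih
    obtain ⟨s₀f, hs₀f⟩ : ∃ f : ℕ → ℕ, ∀ x, ∀ s ≥ f x, gs x s = g x :=
      ⟨fun x => (hlim x).choose, fun x => (hlim x).choose_spec⟩
    set S := (Finset.range (K + 1)).sup s₀f with hS
    have hSx : ∀ x < K + 1, ∀ s ≥ S, gs x s = g x := by
      intro x hx s hs
      exact hs₀f x s (le_trans (Finset.le_sup (by simp [hx])) hs)
    set T₁ := max T₀ S with hT₁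
    have hT₁T₀ : T₀ ≤ T₁ := le_max_left _ _
    have hlen : ∀ t, T₁ + 1 ≤ t → K + 1 ≤ (bases gs t).length := by
      have h1 : K + 1 ≤ (bases gs (T₁ + 1)).length := by
        rcases Nat.lt_or_ge K (bases gs T₁).length with h | h
        · have hmono := length_bases_mono (gs := gs) (show T₁ ≤ T₁ + 1 by omega)
          dsimp only at hmono
          omega
        · have hKlen : (bases gs T₁).length = K := by
            have := (hT₀ T₁ (by omega)).1
            omega
          have hnone : ¬ selN gs (bases gs T₁) T₁ < (bases gs T₁).length := by
            intro hcon
            have hner := needb_selN hcon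
            have := (hT₀ T₁ (by omega)).2.2 (selN gs (bases gs T₁) T₁) (by omega)
            rw [hner] at this
            exact absurd this (by simp)
          rw [length_bases_succ, if_neg hnone]
          omega
      intro t ht
      have hmono := length_bases_mono (gs := gs) ht
      dsimp only at hmono
      omega
    have hgsp : ∀ x < K + 1, ∀ t, T₁ ≤ t → gs x (Nat.pair 0 t) = g x := by
      intro x hx t ht
      exact hSx x hx _ (le_trans (le_trans (le_max_right _ _) ht) (le_pair0 t))
    have hsmall : ∀ i, i < K → ∀ t, T₁ + 1 ≤ t → getE (bases gs t) i < T₁ := by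
      intro i hi t ht
      have h1 : getE (bases gs t) i = getE (bases gs T₀) i :=
        (hT₀ t (by omega)).2.1 i hi
      have h2 : getE (bases gs T₁) i = getE (bases gs T₀) i :=
        (hT₀ T₁ (by omega)).2.1 i hi
      have h3 : getE (bases gs T₁) i < T₁ := by
        apply getE_lt_self
        have := (hT₀ T₁ (by omega)).1
        omega
      omega
    have noneed : ∀ t, T₁ + 1 ≤ t → getE (bases gs t) K ≥ T₁ + 1 →
        (∀ x < K, gs x (Nat.pair 0 (getE (bases gs t) K)) = g x) →
        needb gs (bases gs t) t K = false := by
      intro t ht hEK hgx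
      rw [← Bool.not_eq_true, needb_iff]
      push_neg
      constructor
      · intro x hx
        rw [hgx x hx, hgsp x (by omega) t (by omega)]
      · intro i hi
        have := hsmall i hi t ht
        omega
    by_cases hset : ∃ u, T₁ + 1 ≤ u ∧ actC gs u = K
    · obtain ⟨u, hu, hau⟩ := hset
      have hEu : getE (bases gs (u + 1)) K = u := by
        rw [getE_bases_succ, if_pos hau.symm]
      have key : ∀ t, u + 1 ≤ t →
          getE (bases gs t) K = u ∧ needb gs (bases gs t) t K = false := by
        intro t ht
        induction t, ht using Nat.le_induction with
        | base =>
          refine ⟨hEu, noneed (u+1) (by omega) (by omega) ?_⟩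
          intro x hx
          rw [hEu, hgsp x (by omega) u (by omega)]
        | succ t ht iht =>
          obtain ⟨ihE, ihN⟩ := iht
          have hnact : K ≠ actC gs t := by
            intro hcon
            have hlt : selN gs (bases gs t) t < (bases gs t).length := by
              have := hlen t (by omega)
              unfold actC at hcon
              omega
            have := needb_selN hlt
            rw [← actC, ← hcon, ihN] at this
            exact absurd this (by simp)
          have hEt : getE (bases gs (t+1)) K = u := by
            rw [getE_bases_succ, if_neg hnact, ihE]
          refine ⟨hEt, noneed (t+1) (by omega) (by omega) ?_⟩
          intro x hx
          rw [hEt, hgsp x (by omega) u (by omega)]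
      refine ⟨u + 1, fun t ht => ⟨hlen t (by omega), ?_, ?_⟩⟩
      · intro j hj
        rcases Nat.lt_or_ge j K with h | h
        · rw [(hT₀ t (by omega)).2.1 j h, (hT₀ (u+1) (by omega)).2.1 j h]
        · have : j = K := by omega
          subst this
          rw [(key t ht).1, hEu]
      · intro j hj
        rcases Nat.lt_or_ge j K with h | h
        · exact (hT₀ t (by omega)).2.2 j h
        · have : j = K := by omega
          subst this
          exact (key t ht).2
    · push_neg at hset
      have hno : ∀ t', T₁ + 1 ≤ t' → needb gs (bases gs t') t' K = false := by
        intro t' ht'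
        by_contra hcon
        have hne : needb gs (bases gs t') t' K = true := by
          revert hcon; cases (needb gs (bases gs t') t' K) <;> simp
        have hKlt : K < (bases gs t').length := hlen t' ht'
        have : selN gs (bases gs t') t' = K := by
          apply selN_eq_of hKlt hne
          intro i hi
          exact (hT₀ t' (by omega)).2.2 i hi
        exact hset t' ht' this
      have key : ∀ t, T₁ + 1 ≤ t →
          getE (bases gs t) K = getE (bases gs (T₁+1)) K := by
        intro t ht
        induction t, ht using Nat.le_induction with
        | base => rfl
        | succ t ht iht =>
          have hnact : K ≠ actC gs t := by
            intro hcon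
            have hlt : selN gs (bases gs t) t < (bases gs t).length := by
              have := hlen t (by omega)
              unfold actC at hcon
              omega
            have := needb_selN hlt
            rw [← actC, ← hcon, hno t (by omega)] at this
            exact absurd this (by simp)
          rw [getE_bases_succ, if_neg hnact, iht]
      refine ⟨T₁ + 1, fun t ht => ⟨hlen t ht, ?_, ?_⟩⟩
      · intro j hj
        rcases Nat.lt_or_ge j K with h | h
        · rw [(hT₀ t (by omega)).2.1 j h, (hT₀ (T₁+1) (by omega)).2.1 j h]
        · have : j = K := by omega
          subst this
          exact key t ht
      · intro j hj
        rcases Nat.lt_or_ge j K with h | h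
        · exact (hT₀ t (by omega)).2.2 j h
        · have : j = K := by omega
          subst this
          exact hno t ht

variable {g : ℕ → ℕ}

/-- the settling stage for the first `K` chains -/
noncomputable def TK (hlim : ∀ x : ℕ, ∃ s₀ : ℕ, ∀ s ≥ s₀, gs x s = g x) (K : ℕ) : ℕ :=
  (settle hlim K).choose

theorem TK_spec (hlim : ∀ x : ℕ, ∃ s₀ : ℕ, ∀ s ≥ s₀, gs x s = g x) (K : ℕ) :
    ∀ t, TK hlim K ≤ t →
      K ≤ (bases gs t).length ∧
      (∀ j < K, getE (bases gs t) j = getE (bases gs (TK hlim K)) j) ∧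
      (∀ j < K, needb gs (bases gs t) t j = false) :=
  (settle hlim K).choose_spec

/-- the limit position of the base marker of chain `j` -/
noncomputable def binf (hlim : ∀ x : ℕ, ∃ s₀ : ℕ, ∀ s ≥ s₀, gs x s = g x) (j : ℕ) : ℕ :=
  getE (bases gs (TK hlim (j + 1))) j

variable (hlim : ∀ x : ℕ, ∃ s₀ : ℕ, ∀ s ≥ s₀, gs x s = g x)

theorem binf_eventual {j t : ℕ} (ht : TK hlim (j + 1) ≤ t) :
    getE (bases gs t) j = binf hlim j ∧ j < (bases gs t).length ∧
      needb gs (bases gs t) t j = false := by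
  obtain ⟨h1, h2, h3⟩ := TK_spec hlim (j+1) t ht
  exact ⟨h2 j (by omega), by omega, h3 j (by omega)⟩

theorem binf_live {j u : ℕ} (hu : binf hlim j < u) :
    getE (bases gs u) j = binf hlim j ∧ j < (bases gs u).length := by
  set t := max (TK hlim (j + 1)) u with ht
  obtain ⟨h1, h2, _⟩ := binf_eventual hlim (j := j) (t := t) (le_max_left _ _)
  have := (live t h2 h1).2.2 u hu (le_max_right _ _)
  exact ⟨this.2, this.1⟩

theorem binf_actC (j : ℕ) : actC gs (binf hlim j) = j := by
  obtain ⟨h1, h2, _⟩ := binf_eventual hlim (j := j) (t := TK hlim (j+1)) (le_refl _)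
  exact (live _ h2 h1).2.1

theorem binf_inj : Function.Injective (binf hlim) := by
  intro j j' h
  rw [← binf_actC hlim j, ← binf_actC hlim j', h]

theorem binf_mono {i j : ℕ} (hij : i < j) : binf hlim i < binf hlim j := by
  set t := max (TK hlim (i + 1)) (TK hlim (j + 1)) with ht
  obtain ⟨h1, h2, h3⟩ := binf_eventual hlim (j := j) (t := t) (le_max_right _ _)
  obtain ⟨h1', _, _⟩ := binf_eventual hlim (j := i) (t := t) (le_max_left _ _)
  rw [← Bool.not_eq_true, needb_iff] at h3
  push_neg at h3
  have := h3.2 i hij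
  omega

theorem binf_gs {x j : ℕ} (hx : x < j) : gs x (Nat.pair 0 (binf hlim j)) = g x := by
  obtain ⟨s₀, hs₀⟩ := hlim x
  set t := max (TK hlim (j + 1)) s₀ with ht
  obtain ⟨h1, h2, h3⟩ := binf_eventual hlim (j := j) (t := t) (le_max_left _ _)
  rw [← Bool.not_eq_true, needb_iff] at h3
  push_neg at h3
  have h4 := h3.1 x hx
  rw [h1] at h4
  rw [h4]
  exact hs₀ _ (le_trans (le_trans (le_max_right _ _) (le_pair0 t)) (le_refl _))

/-! ### structure of fB -/

theorem fB_pair0 (t : ℕ) : fB gs (Nat.pair 0 t) = target gs t := by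
  simp [fB, Nat.unpair_pair]

theorem fB_spine {c : ℕ} (hc : c ≠ 0) (r : ℕ) :
    fB gs (Nat.pair c r) = Nat.pair c (r + 1) := by
  simp [fB, Nat.unpair_pair, hc]

theorem fB_spine_iter {c : ℕ} (hc : c ≠ 0) (r : ℕ) :
    (fB gs)^[r] (Nat.pair c 0) = Nat.pair c r := by
  induction r with
  | zero => rfl
  | succ r ihr => rw [Function.iterate_succ_apply', ihr, fB_spine hc]

theorem target_rebase {t : ℕ} (h : selN gs (bases gs t) t < (bases gs t).length) :
    target gs t = Nat.pair 0 (getE (bases gs t) (actC gs t)) := by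
  rw [target, if_pos h]; rfl

theorem target_create {t : ℕ} (h : ¬ selN gs (bases gs t) t < (bases gs t).length) :
    target gs t = Nat.pair ((bases gs t).length + 1) 0 := by
  rw [target, if_neg h]

theorem getE_succ_act (t : ℕ) : getE (bases gs (t+1)) (actC gs t) = t := by
  rw [getE_bases_succ, if_pos rfl]

/-- distinct stages have distinct targets -/
theorem target_inj {t t' : ℕ} (htt : t < t') : target gs t ≠ target gs t' := by
  intro hcon
  by_cases h : selN gs (bases gs t) t < (bases gs t).length <;>
    by_cases h' : selN gs (bases gs t') t' < (bases gs t').length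
  · rw [target_rebase h, target_rebase h'] at hcon
    obtain ⟨_, hs⟩ := Nat.pair_eq_pair.1 hcon
    -- killed values coincide
    have hjt : actC gs t < (bases gs t).length := h
    have hjt' : actC gs t' < (bases gs t').length := h'
    obtain ⟨hlt1, hact1, hfor1⟩ := live t hjt rfl
    obtain ⟨hlt2, hact2, hfor2⟩ := live t' hjt' (hs.symm)
    have hjj : actC gs t = actC gs t' := hact1.symm.trans hact2
    have h5 := hfor2 (t+1) (by omega) (by omega)
    rw [← hjj] at h5
    have h6 := getE_succ_act (gs := gs) t
    omega
  · rw [target_rebase h, target_create h'] at hcon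
    obtain ⟨hfst, _⟩ := Nat.pair_eq_pair.1 hcon
    omega
  · rw [target_create h, target_rebase h'] at hcon
    obtain ⟨hfst, _⟩ := Nat.pair_eq_pair.1 hcon
    omega
  · rw [target_create h, target_create h'] at hcon
    obtain ⟨hfst, _⟩ := Nat.pair_eq_pair.1 hcon
    have hsel : selN gs (bases gs t) t = (bases gs t).length :=
      Nat.le_antisymm selN_le (Nat.le_of_not_lt h)
    have hlt : (bases gs (t+1)).length = (bases gs t).length + 1 := by
      rw [length_bases_succ, if_neg h]
    have hmono := length_bases_mono (gs := gs) (show t + 1 ≤ t' by omega)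
    dsimp only at hmono
    omega

theorem fB_inj : Function.Injective (fB gs) := by
  intro m n hmn
  have hm := Nat.pair_unpair m
  have hn := Nat.pair_unpair n
  by_cases h1 : m.unpair.1 = 0 <;> by_cases h2 : n.unpair.1 = 0
  · rw [← hm, ← hn, h1, h2] at hmn ⊢
    rw [fB_pair0, fB_pair0] at hmn
    rcases Nat.lt_trichotomy m.unpair.2 n.unpair.2 with h | h | h
    · exact absurd hmn (target_inj h)
    · rw [h]
    · exact absurd hmn.symm (target_inj h)
  · exfalso
    rw [← hm, ← hn, h1] at hmn
    rw [fB_pair0, fB_spine h2] at hmn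
    by_cases h : selN gs (bases gs m.unpair.2) m.unpair.2 < (bases gs m.unpair.2).length
    · rw [target_rebase h] at hmn
      exact h2 (Nat.pair_eq_pair.1 hmn).1.symm
    · rw [target_create h] at hmn
      exact Nat.succ_ne_zero _ ((Nat.pair_eq_pair.1 hmn).2).symm
  · exfalso
    rw [← hm, ← hn, h2] at hmn
    rw [fB_pair0, fB_spine h1] at hmn
    by_cases h : selN gs (bases gs n.unpair.2) n.unpair.2 < (bases gs n.unpair.2).length
    · rw [target_rebase h] at hmn
      exact h1 (Nat.pair_eq_pair.1 hmn).1
    · rw [target_create h] at hmn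
      exact Nat.succ_ne_zero _ ((Nat.pair_eq_pair.1 hmn).2)
  · rw [← hm, ← hn] at hmn ⊢
    rw [fB_spine h1, fB_spine h2] at hmn
    obtain ⟨hf, hs⟩ := Nat.pair_eq_pair.1 hmn
    rw [hf, (by omega : m.unpair.2 = n.unpair.2)]

theorem base_not_range (j : ℕ) : Nat.pair 0 (binf hlim j) ∉ Set.range (fB gs) := by
  rintro ⟨n, hn⟩
  have hnn := Nat.pair_unpair n
  by_cases h1 : n.unpair.1 = 0
  · rw [← hnn, h1, fB_pair0] at hn
    set t := n.unpair.2 with htdef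
    by_cases h : selN gs (bases gs t) t < (bases gs t).length
    · rw [target_rebase h] at hn
      obtain ⟨_, hs⟩ := Nat.pair_eq_pair.1 hn
      obtain ⟨hlt, hact, _⟩ := live t h hs
      have hact2 := binf_actC hlim j
      have hjj : actC gs t = j := by unfold actC; rw [← hact, hact2]
      have h5 := getE_succ_act (gs := gs) t
      rw [hjj] at h5
      have h6 := (binf_live hlim (j := j) (u := t + 1) (by omega)).1
      omega
  -- impossible: binf is never killed
    · rw [target_create h] at hn
      exact Nat.succ_ne_zero _ (Nat.pair_eq_pair.1 hn).1
  · rw [← hnn, fB_spine h1] at hn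
    exact h1 (Nat.pair_eq_pair.1 hn).1


theorem reach_aux (j : ℕ) :
    ∀ n, ∀ s, actC gs s = j → TK hlim (j + 1) - s ≤ n →
      ∃ r, (fB gs)^[r] (Nat.pair 0 (binf hlim j)) = Nat.pair 0 s := by
  intro n
  induction n with
  | zero =>
    intro s hact hle
    have h1 : getE (bases gs (s+1)) j = s := by rw [← hact, getE_succ_act]
    have h2 : getE (bases gs (s+1)) j = binf hlim j :=
      (binf_eventual hlim (t := s+1) (by omega)).1
    exact ⟨0, by rw [Function.iterate_zero_apply, ← h2, h1]⟩
  | succ n ihn =>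
    intro s hact hle
    by_cases hb : binf hlim j = s
    · exact ⟨0, by rw [Function.iterate_zero_apply, hb]⟩
    have h1 : getE (bases gs (s+1)) j = s := by rw [← hact, getE_succ_act]
    have hjlen : j < (bases gs (s+1)).length := by
      rw [← hact]; exact actC_lt_length_succ (gs := gs) s
    have hsTK : s + 2 ≤ TK hlim (j+1) := by
      by_contra hcon
      have h2 : getE (bases gs (s+1)) j = binf hlim j :=
        (binf_eventual hlim (t := s+1) (by omega)).1
      exact hb (by omega)
    -- find the next stage where the entry of chain j changes
    have hex : ∃ u, s < u ∧ getE (bases gs (u+1)) j ≠ s := by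
      refine ⟨TK hlim (j+1) - 1, by omega, ?_⟩
      have h2 : getE (bases gs (TK hlim (j+1) - 1 + 1)) j = binf hlim j :=
        (binf_eventual hlim (t := TK hlim (j+1) - 1 + 1) (by omega)).1
      omega
    set u := Nat.find hex with hudef
    obtain ⟨hu1, hu2⟩ := Nat.find_spec hex
    have hmin : ∀ v, s < v → v < u → getE (bases gs (v+1)) j = s := by
      intro v hv1 hv2
      have := Nat.find_min hex hv2
      push_neg at this
      exact this hv1
    have hEu : getE (bases gs u) j = s := by
      rcases Nat.lt_or_ge (s+1) u with h | h
      · have := hmin (u-1) (by omega) (by omega)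
        rwa [(by omega : u - 1 + 1 = u)] at this
      · have : u = s + 1 := by omega
        rw [this]; exact h1
    have hjlenu : j < (bases gs u).length := by
      have hmono := length_bases_mono (gs := gs) (show s + 1 ≤ u by omega)
      dsimp only at hmono
      omega
    have hactu : actC gs u = j := by
      by_contra hcon
      have := getE_bases_succ (gs := gs) u j
      rw [if_neg (fun hh : j = actC gs u => hcon hh.symm)] at this
      exact hu2 (this.trans hEu)
    have hselu : selN gs (bases gs u) u < (bases gs u).length := by
      unfold actC at hactu; omega
    have hfBu : fB gs (Nat.pair 0 u) = Nat.pair 0 s := by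
      rw [fB_pair0, target_rebase hselu, hactu, hEu]
    have hule : u ≤ TK hlim (j+1) - 1 := Nat.find_le ⟨by omega, by
      have h2 : getE (bases gs (TK hlim (j+1) - 1 + 1)) j = binf hlim j :=
        (binf_eventual hlim (t := TK hlim (j+1) - 1 + 1) (by omega)).1
      omega⟩
    obtain ⟨r, hr⟩ := ihn u hactu (by omega)
    exact ⟨r + 1, by rw [Function.iterate_succ_apply', hr, hfBu]⟩

theorem reach (s : ℕ) :
    ∃ r, (fB gs)^[r] (Nat.pair 0 (binf hlim (actC gs s))) = Nat.pair 0 s :=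
  reach_aux hlim (actC gs s) (TK hlim (actC gs s + 1) - s) s rfl (le_refl _)

/-- every chain is created at some stage -/
theorem chain_created (hlim : ∀ x : ℕ, ∃ s₀ : ℕ, ∀ s ≥ s₀, gs x s = g x) (j : ℕ) :
    ∃ u, actC gs u = j ∧ fB gs (Nat.pair 0 u) = Nat.pair (j + 1) 0 := by
  have hex : ∃ t, j < (bases gs t).length := by
    refine ⟨TK hlim (j+1), ?_⟩
    have := (TK_spec hlim (j+1) (TK hlim (j+1)) (le_refl _)).1
    omega
  have hspec : j < (bases gs (Nat.find hex)).length := Nat.find_spec hex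
  have ht₀pos : Nat.find hex ≠ 0 := by
    intro hcon
    rw [hcon] at hspec
    simp [bases] at hspec
  have hmin : ¬ j < (bases gs (Nat.find hex - 1)).length :=
    Nat.find_min hex (by omega)
  have hsucc : Nat.find hex - 1 + 1 = Nat.find hex := by omega
  have hlen := length_bases_succ (gs := gs) (Nat.find hex - 1)
  rw [hsucc] at hlen
  by_cases hsel : selN gs (bases gs (Nat.find hex - 1)) (Nat.find hex - 1) <
      (bases gs (Nat.find hex - 1)).length
  · rw [if_pos hsel] at hlen
    omega
  · rw [if_neg hsel] at hlen
    have hjlen : (bases gs (Nat.find hex - 1)).length = j := by omega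
    have hact : actC gs (Nat.find hex - 1) = j := by
      unfold actC
      have := selN_le (gs := gs) (l := bases gs (Nat.find hex - 1)) (t := Nat.find hex - 1)
      omega
    refine ⟨Nat.find hex - 1, hact, ?_⟩
    rw [fB_pair0, target_create hsel, hjlen]

theorem cover (n : ℕ) :
    ∃ j r, (fB gs)^[r] (Nat.pair 0 (binf hlim j)) = n := by
  have hn := Nat.pair_unpair n
  by_cases h1 : n.unpair.1 = 0
  · obtain ⟨r, hr⟩ := reach hlim n.unpair.2
    exact ⟨actC gs n.unpair.2, r, by rw [hr, ← h1, hn]⟩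
  · obtain ⟨u, hact, hfBu⟩ := chain_created hlim (n.unpair.1 - 1)
    obtain ⟨r, hr⟩ := reach hlim u
    rw [hact] at hr
    refine ⟨n.unpair.1 - 1, n.unpair.2 + 1 + r, ?_⟩
    rw [Function.iterate_add_apply, Function.iterate_succ_apply, hr, hfBu]
    rw [(by omega : n.unpair.1 - 1 + 1 = n.unpair.1)]
    rw [fB_spine_iter h1, hn]

theorem iterate_inj :
    ∀ r r' j j', (fB gs)^[r] (Nat.pair 0 (binf hlim j)) =
      (fB gs)^[r'] (Nat.pair 0 (binf hlim j')) → r = r' ∧ j = j' := by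
  intro r
  induction r with
  | zero =>
    intro r' j j' hEq
    cases r' with
    | zero =>
      refine ⟨rfl, binf_inj hlim ?_⟩
      rw [Function.iterate_zero_apply, Function.iterate_zero_apply] at hEq
      exact (Nat.pair_eq_pair.1 hEq).2
    | succ r' =>
      exfalso
      rw [Function.iterate_zero_apply, Function.iterate_succ_apply'] at hEq
      exact base_not_range hlim j ⟨_, hEq.symm⟩
  | succ r ihr =>
    intro r' j j' hEq
    cases r' with
    | zero =>
      exfalso
      rw [Function.iterate_zero_apply, Function.iterate_succ_apply'] at hEq
      exact base_not_range hlim j' ⟨_, hEq⟩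
    | succ r' =>
      rw [Function.iterate_succ_apply', Function.iterate_succ_apply'] at hEq
      obtain ⟨h1, h2⟩ := ihr r' j j' (fB_inj hEq)
      exact ⟨by omega, h2⟩

/-- the canonical isomorphism -/
noncomputable def isoH (n : ℕ) : ℕ :=
  (fB gs)^[n.unpair.2] (Nat.pair 0 (binf hlim n.unpair.1))

theorem isoH_bij : Function.Bijective (isoH hlim) := by
  constructor
  · intro m n hmn
    unfold isoH at hmn
    obtain ⟨h1, h2⟩ := iterate_inj hlim _ _ _ _ hmn
    rw [← Nat.pair_unpair m, ← Nat.pair_unpair n, h1, h2]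
  · intro n
    obtain ⟨j, r, hjr⟩ := cover hlim n
    exact ⟨Nat.pair j r, by unfold isoH; rw [Nat.unpair_pair]; exact hjr⟩

end Limit

end PRC

/-- The orbit of `a` under `f` is an ω-chain: an infinite orbit containing an
element outside the range of `f`. -/
def IsOmegaChain (f : ℕ → ℕ) (a : ℕ) : Prop :=
  (Orbit f a).Infinite ∧ ∃ b ∈ Orbit f a, b ∉ Set.range f

namespace PRC

def fA (n : ℕ) : ℕ := Nat.pair n.unpair.1 (n.unpair.2 + 1)

def aF (i : ℕ) : ℕ := Nat.pair i 0

theorem fA_primrec : Primrec fA :=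
  Primrec₂.natPair.comp (Primrec.fst.comp Primrec.unpair)
    (Primrec.succ.comp (Primrec.snd.comp Primrec.unpair))

theorem aF_primrec : Primrec aF :=
  Primrec₂.natPair.comp Primrec.id (Primrec.const 0)

theorem fA_pair (c r : ℕ) : fA (Nat.pair c r) = Nat.pair c (r + 1) := by
  unfold fA; rw [Nat.unpair_pair]

theorem fA_iter (m c r : ℕ) : fA^[m] (Nat.pair c r) = Nat.pair c (r + m) := by
  induction m with
  | zero => rfl
  | succ m ihm =>
    rw [Function.iterate_succ_apply', ihm, fA_pair, Nat.add_assoc]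

theorem fA_inj : Function.Injective fA := by
  intro m n h
  unfold fA at h
  obtain ⟨h1, h2⟩ := Nat.pair_eq_pair.1 h
  rw [← Nat.pair_unpair m, ← Nat.pair_unpair n, h1, (by omega : m.unpair.2 = n.unpair.2)]

theorem aF_inj : Function.Injective aF := by
  intro m n h
  exact (Nat.pair_eq_pair.1 h).1

theorem mem_range_fA {n : ℕ} : n ∈ Set.range fA ↔ n.unpair.2 ≠ 0 := by
  constructor
  · rintro ⟨m, rfl⟩
    unfold fA
    rw [Nat.unpair_pair]
    exact Nat.succ_ne_zero _
  · intro h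
    refine ⟨Nat.pair n.unpair.1 (n.unpair.2 - 1), ?_⟩
    rw [fA_pair, (by omega : n.unpair.2 - 1 + 1 = n.unpair.2), Nat.pair_unpair]

theorem range_aF : Set.range aF = (Set.range fA)ᶜ := by
  ext n
  simp only [Set.mem_compl_iff, mem_range_fA, not_not]
  constructor
  · rintro ⟨i, rfl⟩
    unfold aF
    rw [Nat.unpair_pair]
  · intro h
    exact ⟨n.unpair.1, by rw [aF, ← h, Nat.pair_unpair]⟩

theorem iterate_mem_orbit (f : ℕ → ℕ) (n m : ℕ) : f^[m] n ∈ Orbit f n :=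
  ⟨m, 0, by simp⟩

theorem mem_orbit_of_iterate {f : ℕ → ℕ} {b n : ℕ} {r : ℕ} (h : f^[r] b = n) :
    b ∈ Orbit f n := ⟨0, r, by simp [h]⟩

theorem iter_base_inj {f : ℕ → ℕ} (hinj : Function.Injective f) {b : ℕ}
    (hb : b ∉ Set.range f) : Function.Injective fun m => f^[m] b := by
  have key : ∀ m m', m < m' → f^[m] b ≠ f^[m'] b := by
    intro m m' hmm hEq
    rw [(by omega : m' = m + (m' - m)), Function.iterate_add_apply] at hEq
    have h2 := (hinj.iterate m) hEq
    have h3 : m' - m - 1 + 1 = m' - m := by omega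
    rw [← h3, Function.iterate_succ_apply'] at h2
    exact hb ⟨_, h2.symm⟩
  intro m m' hEq
  rcases Nat.lt_trichotomy m m' with h | h | h
  · exact absurd hEq (key m m' h)
  · exact h
  · exact absurd hEq.symm (key m' m h)

theorem isOmegaChain_of {f : ℕ → ℕ} (hinj : Function.Injective f) {n b r : ℕ}
    (hb : f^[r] b = n) (hbr : b ∉ Set.range f) : IsOmegaChain f n := by
  constructor
  · apply Set.infinite_of_injective_forall_mem (f := fun m => f^[m] n)
    · intro m m' hEq
      dsimp only at hEq
      have h1 : f^[m + r] b = f^[m' + r] b := by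
        rw [Function.iterate_add_apply, Function.iterate_add_apply, hb, hEq]
      have := iter_base_inj hinj hbr h1
      omega
    · intro m
      exact iterate_mem_orbit f n m
  · exact ⟨b, mem_orbit_of_iterate hb, hbr⟩

theorem orbits_fA_infinite : {O : Set ℕ | ∃ n : ℕ, O = Orbit fA n}.Infinite := by
  apply Set.infinite_of_injective_forall_mem (f := fun i : ℕ => Orbit fA (Nat.pair i 0))
  · intro i i' hEq
    dsimp only at hEq
    have hmem : Nat.pair i' 0 ∈ Orbit fA (Nat.pair i' 0) := ⟨0, 0, rfl⟩
    rw [← hEq] at hmem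
    obtain ⟨m, k, hmk⟩ := hmem
    rw [fA_iter, fA_iter] at hmk
    exact (Nat.pair_eq_pair.1 hmk).1
  · intro i
    exact ⟨Nat.pair i 0, rfl⟩

section Main

variable {gs : ℕ → ℕ → ℕ} {g : ℕ → ℕ}
variable (hlim : ∀ x : ℕ, ∃ s₀ : ℕ, ∀ s ≥ s₀, gs x s = g x)

theorem isoH_comm (n : ℕ) : isoH hlim (fA n) = fB gs (isoH hlim n) := by
  unfold fA isoH
  rw [Nat.unpair_pair]
  rw [Function.iterate_succ_apply']

theorem isoH_iso : IsInjIso fA (fB gs) (isoH hlim) :=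
  ⟨isoH_bij hlim, isoH_comm hlim⟩

theorem iso_nonrange {h : ℕ → ℕ} (hiso : IsInjIso fA (fB gs) h) {m : ℕ}
    (hm : m ∉ Set.range fA) : h m ∉ Set.range (fB gs) := by
  rintro ⟨y, hy⟩
  obtain ⟨y', rfl⟩ := hiso.1.2 y
  rw [← hiso.2 y'] at hy
  exact hm ⟨y', hiso.1.1 hy⟩

theorem main_property (hlim : ∀ x : ℕ, ∃ s₀ : ℕ, ∀ s ≥ s₀, gs x s = g x)
    {h : ℕ → ℕ} (hiso : IsInjIso fA (fB gs) h) (x : ℕ) :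
    gs x ((Finset.range (x + 2)).sup fun i => h (aF i)) = g x := by
  -- every h (aF i) is a base point of fB
  have hbase : ∀ i : ℕ, ∃ j, h (aF i) = Nat.pair 0 (binf hlim j) := by
    intro i
    have h1 : aF i ∉ Set.range fA := by
      have : aF i ∈ (Set.range fA)ᶜ := range_aF ▸ ⟨i, rfl⟩
      exact this
    have h2 := iso_nonrange hiso h1
    obtain ⟨j, r, hjr⟩ := cover hlim (h (aF i))
    cases r with
    | zero => exact ⟨j, hjr.symm⟩
    | succ r =>
      exfalso
      rw [Function.iterate_succ_apply'] at hjr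
      exact h2 ⟨_, hjr⟩
  choose c hc using hbase
  have hcinj : Function.Injective c := by
    intro i i' hEq
    apply aF_inj
    apply hiso.1.1
    rw [hc, hc, hEq]
  set φ : ℕ → ℕ := fun j => Nat.pair 0 (binf hlim j) with hφ
  have hφmono : Monotone φ := by
    intro j j' hjj
    rcases Nat.lt_or_ge j j' with hlt | hge
    · exact le_of_lt (Nat.pair_lt_pair_right 0 (binf_mono hlim hlt))
    · have : j = j' := by omega
      rw [this]
  have hne : (Finset.range (x + 2)).Nonempty := ⟨0, by simp⟩
  have hsup : ((Finset.range (x + 2)).sup fun i => h (aF i)) =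
      φ ((Finset.range (x + 2)).sup' hne c) := by
    rw [← Finset.sup'_eq_sup hne]
    rw [Finset.comp_sup'_eq_sup'_comp hne φ (fun a b => hφmono.map_max)]
    apply Finset.sup'_congr hne rfl
    intro i _
    rw [Function.comp_apply, hc]
  set J := (Finset.range (x + 2)).sup' hne c with hJ
  have hJge : x + 1 ≤ J := by
    have hsubset : (Finset.range (x + 2)).image c ⊆ Finset.range (J + 1) := by
      intro y hy
      obtain ⟨i, hi, rfl⟩ := Finset.mem_image.1 hy
      rw [Finset.mem_range]
      have := Finset.le_sup' c hi
      omega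
    have hcard : ((Finset.range (x + 2)).image c).card = x + 2 := by
      rw [Finset.card_image_of_injective _ hcinj, Finset.card_range]
    have := Finset.card_le_card hsubset
    rw [hcard, Finset.card_range] at this
    omega
  rw [hsup]
  exact binf_gs hlim (by omega)

end Main

end PRC

theorem prcat_delta2_omega_chains (g : ℕ → ℕ) (gs : ℕ → ℕ → ℕ)
    (hgs : Primrec₂ gs) (hlim : ∀ x : ℕ, ∃ s₀ : ℕ, ∀ s ≥ s₀, gs x s = g x) :
    ∃ fA fB a : ℕ → ℕ,
      Primrec fA ∧ Primrec fB ∧ Primrec a ∧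
      Function.Injective fA ∧ Function.Injective fB ∧ Function.Injective a ∧
      (∀ n : ℕ, IsOmegaChain fA n) ∧ (∀ n : ℕ, IsOmegaChain fB n) ∧
      {O : Set ℕ | ∃ n : ℕ, O = Orbit fA n}.Infinite ∧
      (∃ h : ℕ → ℕ, IsInjIso fA fB h) ∧
      Set.range a = (Set.range fA)ᶜ ∧
      (∀ h : ℕ → ℕ, IsInjIso fA fB h → ∀ x : ℕ,
        gs x ((Finset.range (x + 2)).sup fun i => h (a i)) = g x) := by
  refine ⟨PRC.fA, PRC.fB gs, PRC.aF, PRC.fA_primrec, PRC.fB_primrec hgs, PRC.aF_primrec,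
    PRC.fA_inj, PRC.fB_inj, PRC.aF_inj, ?_, ?_, PRC.orbits_fA_infinite,
    ⟨PRC.isoH hlim, PRC.isoH_iso hlim⟩, PRC.range_aF, fun h hiso x => PRC.main_property hlim hiso x⟩
  · intro n
    apply PRC.isOmegaChain_of PRC.fA_inj (b := Nat.pair n.unpair.1 0) (r := n.unpair.2)
    · rw [PRC.fA_iter, Nat.zero_add, Nat.pair_unpair]
    · rw [PRC.mem_range_fA]
      simp [Nat.unpair_pair]
  · intro n
    obtain ⟨j, r, hjr⟩ := PRC.cover hlim n
    exact PRC.isOmegaChain_of PRC.fB_inj hjr (PRC.base_not_range hlim j)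
end
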